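/- arXiv:2506.21941 — 5 statements merged into one kernel-verified Lean document; each statement's English description precedes it below -/
import Mathlib

section
/- Let n ≥ 2, let i ≠ j and k ≠ l be indices in {1, …, n}, let ε_1, ε_2, ε_3, ε_4 ∈ {+1, −1}, and suppose α = ε_1 e_i + ε_2 e_j and β = ε_3 e_k + ε_4 e_l are linearly independent long roots in Φ_{B_n}. Let P be the plane spanned by {α, β} and let d be the dimension of the span of {e_i, e_j, e_k, e_l}. If d = 4, then P contains exactly 4 roots of Φ_{B_n} and all of them are long; if d = 3, then P contains exactly 6 roots of Φ_{B_n} and all of them are long. -/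
set_option maxHeartbeats 1000000

/-- The `i`-th standard basis vector of `ℝ^n` (Euclidean space). -/
noncomputable def stdBasis (n : ℕ) (i : Fin n) : EuclideanSpace ℝ (Fin n) :=
  EuclideanSpace.single i 1

/-- Short roots of `B_n` : `± e_i`. -/
def IsShortRoot (n : ℕ) (x : EuclideanSpace ℝ (Fin n)) : Prop :=
  ∃ i : Fin n, x = stdBasis n i ∨ x = -stdBasis n i

/-- Long roots of `B_n` : `± e_i ± e_j` for `i ≠ j`. -/
def IsLongRoot (n : ℕ) (x : EuclideanSpace ℝ (Fin n)) : Prop :=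
  ∃ i j : Fin n, i ≠ j ∧ ∃ ε₁ ε₂ : ℝ, (ε₁ = 1 ∨ ε₁ = -1) ∧ (ε₂ = 1 ∨ ε₂ = -1) ∧
    x = ε₁ • stdBasis n i + ε₂ • stdBasis n j

/-- The root system `Φ_{B_n}`. -/
def PhiB (n : ℕ) : Set (EuclideanSpace ℝ (Fin n)) :=
  {x | IsShortRoot n x ∨ IsLongRoot n x}

/- ### Auxiliary lemmas -/

lemma stdBasis_apply (n : ℕ) (i m : Fin n) : stdBasis n i m = if m = i then 1 else 0 := by
  simp [stdBasis, EuclideanSpace.single_apply]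

lemma long_coord {n : ℕ} {x : EuclideanSpace ℝ (Fin n)} (hx : IsLongRoot n x) (m : Fin n) :
    x m = 0 ∨ x m = 1 ∨ x m = -1 := by
  obtain ⟨u, v, huv, e₁, e₂, he₁, he₂, hx⟩ := hx
  subst hx
  simp only [PiLp.add_apply, PiLp.smul_apply, stdBasis_apply, smul_eq_mul]
  rcases he₁ with h | h <;> rcases he₂ with h' | h' <;> subst h h' <;>
    by_cases h1 : m = u <;> by_cases h2 : m = v <;> simp_all

lemma long_ne_zero {n : ℕ} {x : EuclideanSpace ℝ (Fin n)} (hx : IsLongRoot n x) : x ≠ 0 := by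
  obtain ⟨u, v, huv, e₁, e₂, he₁, he₂, hx⟩ := hx
  subst hx
  intro h
  have := congrArg (fun f => f u) h
  simp only [PiLp.add_apply, PiLp.smul_apply, stdBasis_apply, smul_eq_mul] at this
  rcases he₁ with h1 | h1 <;> simp_all [huv]

lemma long_three {n : ℕ} {x : EuclideanSpace ℝ (Fin n)} (hx : IsLongRoot n x)
    {m₁ m₂ m₃ : Fin n} (h12 : m₁ ≠ m₂) (h13 : m₁ ≠ m₃) (h23 : m₂ ≠ m₃) :
    x m₁ = 0 ∨ x m₂ = 0 ∨ x m₃ = 0 := by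
  obtain ⟨u, v, huv, e₁, e₂, he₁, he₂, hx⟩ := hx
  subst hx
  by_contra hc
  push_neg at hc
  obtain ⟨h1, h2, h3⟩ := hc
  have key : ∀ m : Fin n, (e₁ • stdBasis n u + e₂ • stdBasis n v) m ≠ 0 → m = u ∨ m = v := by
    intro m hm
    simp only [PiLp.add_apply, PiLp.smul_apply, stdBasis_apply, smul_eq_mul] at hm
    by_cases h1 : m = u <;> by_cases h2 : m = v <;> simp_all
  rcases key _ h1 with h | h <;> rcases key _ h2 with h' | h' <;> rcases key _ h3 with h'' | h'' <;>
    subst h <;> simp_all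

lemma short_ne_zero {n : ℕ} {x : EuclideanSpace ℝ (Fin n)} (hx : IsShortRoot n x) : x ≠ 0 := by
  obtain ⟨u, hx⟩ := hx
  rcases hx with h | h <;> subst h <;> intro h <;> have h2 := congrArg (fun f => f u) h <;>
    simp only [stdBasis_apply, PiLp.neg_apply, PiLp.zero_apply, if_pos rfl] at h2 <;> norm_num at h2

lemma short_two {n : ℕ} {x : EuclideanSpace ℝ (Fin n)} (hx : IsShortRoot n x)
    {m₁ m₂ : Fin n} (h12 : m₁ ≠ m₂) : x m₁ = 0 ∨ x m₂ = 0 := by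
  obtain ⟨u, hx⟩ := hx
  rcases hx with h | h <;> subst h <;>
  · by_cases h1 : m₁ = u <;> by_cases h2 : m₂ = u <;> simp_all [stdBasis_apply]

lemma ne_of_coord {n : ℕ} {y z : EuclideanSpace ℝ (Fin n)} (m : Fin n)
    (h : y m ≠ z m) : y ≠ z := fun hyz => h (by rw [hyz])

/- ### The case of four distinct indices -/

lemma key4 (n : ℕ) (p q r s : Fin n) (hpq : p ≠ q) (hpr : p ≠ r) (hps : p ≠ s)
    (hqr : q ≠ r) (hqs : q ≠ s) (hrs : r ≠ s)
    (a b c d : ℝ) (ha : a = 1 ∨ a = -1) (hb : b = 1 ∨ b = -1)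
    (hc : c = 1 ∨ c = -1) (hd : d = 1 ∨ d = -1)
    (α β : EuclideanSpace ℝ (Fin n))
    (hα : α = a • stdBasis n p + b • stdBasis n q)
    (hβ : β = c • stdBasis n r + d • stdBasis n s) :
    (((Submodule.span ℝ {α, β} : Submodule ℝ (EuclideanSpace ℝ (Fin n))) : Set _)
        ∩ PhiB n).ncard = 4 ∧
      ∀ x ∈ ((Submodule.span ℝ {α, β} : Submodule ℝ (EuclideanSpace ℝ (Fin n))) : Set _)
        ∩ PhiB n, IsLongRoot n x := by
  have ha0 : a ≠ 0 := by rcases ha with h|h <;> rw [h] <;> norm_num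
  have hb0 : b ≠ 0 := by rcases hb with h|h <;> rw [h] <;> norm_num
  have hc0 : c ≠ 0 := by rcases hc with h|h <;> rw [h] <;> norm_num
  have hd0 : d ≠ 0 := by rcases hd with h|h <;> rw [h] <;> norm_num
  have hαl : IsLongRoot n α := ⟨p, q, hpq, a, b, ha, hb, hα⟩
  have hβl : IsLongRoot n β := ⟨r, s, hrs, c, d, hc, hd, hβ⟩
  have hnαl : IsLongRoot n (-α) := ⟨p, q, hpq, -a, -b,
    by rcases ha with h|h <;> rw [h] <;> norm_num,
    by rcases hb with h|h <;> rw [h] <;> norm_num, by rw [hα]; module⟩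
  have hnβl : IsLongRoot n (-β) := ⟨r, s, hrs, -c, -d,
    by rcases hc with h|h <;> rw [h] <;> norm_num,
    by rcases hd with h|h <;> rw [h] <;> norm_num, by rw [hβ]; module⟩
  have hαm : α ∈ Submodule.span ℝ {α, β} :=
    Submodule.subset_span (Set.mem_insert _ _)
  have hβm : β ∈ Submodule.span ℝ {α, β} :=
    Submodule.subset_span (Set.mem_insert_of_mem _ rfl)
  have hEq : ((Submodule.span ℝ {α, β} : Submodule ℝ (EuclideanSpace ℝ (Fin n))) : Set _)
      ∩ PhiB n = {α, -α, β, -β} := by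
    ext x
    constructor
    · rintro ⟨hx1, hx2⟩
      rw [SetLike.mem_coe, Submodule.mem_span_pair] at hx1
      obtain ⟨u, v, huv⟩ := hx1
      have hxp : x p = u * a := by
        rw [← huv]; simp [hα, hβ, stdBasis_apply, hpq, hpr, hps]
      have hxq : x q = u * b := by
        rw [← huv]; simp [hα, hβ, stdBasis_apply, hpq.symm, hqr, hqs]
      have hxr : x r = v * c := by
        rw [← huv]; simp [hα, hβ, stdBasis_apply, hpr.symm, hqr.symm, hrs]
      have hxs : x s = v * d := by
        rw [← huv]; simp [hα, hβ, stdBasis_apply, hps.symm, hqs.symm, hrs.symm]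
      by_cases hu : u = 0 <;> by_cases hv : v = 0
      · exfalso
        subst hu hv
        simp only [zero_smul, add_zero, zero_add] at huv
        rcases hx2 with h | h
        · exact short_ne_zero h huv.symm
        · exact long_ne_zero h huv.symm
      · subst hu
        have hr0 : x r ≠ 0 := by rw [hxr]; exact mul_ne_zero hv hc0
        have hs0 : x s ≠ 0 := by rw [hxs]; exact mul_ne_zero hv hd0
        rcases hx2 with h | h
        · exact absurd (short_two h hrs) (by tauto)
        · have hv1 : v = 1 ∨ v = -1 := by
            have h' := long_coord h r
            rw [hxr] at h'
            rcases hc with h''|h'' <;> subst h'' <;> rcases h' with h'|h'|h' <;>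
              first | (exact absurd (by linarith) hv) | (left; linarith) | (right; linarith)
          have hx : x = v • β := by rw [← huv]; module
          rcases hv1 with h'|h' <;> subst h' <;> rw [hx] <;> simp
      · subst hv
        have hp0 : x p ≠ 0 := by rw [hxp]; exact mul_ne_zero hu ha0
        have hq0 : x q ≠ 0 := by rw [hxq]; exact mul_ne_zero hu hb0
        rcases hx2 with h | h
        · exact absurd (short_two h hpq) (by tauto)
        · have hu1 : u = 1 ∨ u = -1 := by
            have h' := long_coord h p
            rw [hxp] at h'
            rcases ha with h''|h'' <;> subst h'' <;> rcases h' with h'|h'|h' <;>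
              first | (exact absurd (by linarith) hu) | (left; linarith) | (right; linarith)
          have hx : x = u • α := by rw [← huv]; module
          rcases hu1 with h'|h' <;> subst h' <;> rw [hx] <;> simp
      · exfalso
        have hp0 : x p ≠ 0 := by rw [hxp]; exact mul_ne_zero hu ha0
        have hq0 : x q ≠ 0 := by rw [hxq]; exact mul_ne_zero hu hb0
        have hr0 : x r ≠ 0 := by rw [hxr]; exact mul_ne_zero hv hc0
        rcases hx2 with h | h
        · exact absurd (short_two h hpq) (by tauto)
        · exact absurd (long_three h hpq hpr hqr) (by tauto)
    · intro hx
      rcases hx with h|h|h|h <;> subst h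
      · exact ⟨hαm, Or.inr hαl⟩
      · exact ⟨Submodule.neg_mem _ hαm, Or.inr hnαl⟩
      · exact ⟨hβm, Or.inr hβl⟩
      · exact ⟨Submodule.neg_mem _ hβm, Or.inr hnβl⟩
  -- coordinates
  have hαp : α p = a := by simp [hα, stdBasis_apply, hpq]
  have hβp : β p = 0 := by simp [hβ, stdBasis_apply, hpr, hps]
  have hαq : α q = b := by simp [hα, stdBasis_apply, hpq.symm]
  have hβq : β q = 0 := by simp [hβ, stdBasis_apply, hqr, hqs]
  have hβr : β r = c := by simp [hβ, stdBasis_apply, hrs]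
  -- distinctness
  have hne1 : α ≠ -α := ne_of_coord p (by simp [hαp]; exact fun h => ha0 (by linarith))
  have hne2 : α ≠ β := ne_of_coord p (by simp [hαp, hβp, ha0])
  have hne3 : α ≠ -β := ne_of_coord p (by simp [hαp, hβp, ha0])
  have hne4 : (-α) ≠ β := ne_of_coord p (by simp [hαp, hβp, ha0])
  have hne5 : (-α) ≠ -β := ne_of_coord p (by simp [hαp, hβp, ha0])
  have hne6 : β ≠ -β := ne_of_coord r (by simp [hβr]; exact fun h => hc0 (by linarith))
  constructor
  · rw [hEq]
    rw [Set.ncard_insert_of_notMem (by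
        simp only [Set.mem_insert_iff, Set.mem_singleton_iff]; push_neg
        exact ⟨hne1, hne2, hne3⟩),
      Set.ncard_insert_of_notMem (by
        simp only [Set.mem_insert_iff, Set.mem_singleton_iff]; push_neg
        exact ⟨hne4, hne5⟩),
      Set.ncard_insert_of_notMem (by
        simp only [Set.mem_singleton_iff]; exact hne6),
      Set.ncard_singleton]
  · rw [hEq]
    rintro x (h|h|h|h) <;> subst h
    exacts [hαl, hnαl, hβl, hnβl]

/- ### The case of three distinct indices -/

lemma key3 (n : ℕ) (p q r : Fin n) (hpq : p ≠ q) (hpr : p ≠ r) (hqr : q ≠ r)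
    (a b c d : ℝ) (ha : a = 1 ∨ a = -1) (hb : b = 1 ∨ b = -1)
    (hc : c = 1 ∨ c = -1) (hd : d = 1 ∨ d = -1)
    (α β : EuclideanSpace ℝ (Fin n))
    (hα : α = a • stdBasis n p + b • stdBasis n q)
    (hβ : β = c • stdBasis n q + d • stdBasis n r) :
    (((Submodule.span ℝ {α, β} : Submodule ℝ (EuclideanSpace ℝ (Fin n))) : Set _)
        ∩ PhiB n).ncard = 6 ∧
      ∀ x ∈ ((Submodule.span ℝ {α, β} : Submodule ℝ (EuclideanSpace ℝ (Fin n))) : Set _)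
        ∩ PhiB n, IsLongRoot n x := by
  have ha0 : a ≠ 0 := by rcases ha with h|h <;> rw [h] <;> norm_num
  have hb0 : b ≠ 0 := by rcases hb with h|h <;> rw [h] <;> norm_num
  have hc0 : c ≠ 0 := by rcases hc with h|h <;> rw [h] <;> norm_num
  have hd0 : d ≠ 0 := by rcases hd with h|h <;> rw [h] <;> norm_num
  have hcc : c * c = 1 := by rcases hc with h|h <;> rw [h] <;> norm_num
  have hγ : α - (b*c) • β = a • stdBasis n p + (-(b*c*d)) • stdBasis n r := by
    rw [hα, hβ]
    match_scalars <;> first | ring1 | linear_combination (-b) * hcc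
  have hγ0 : -(b*c*d) ≠ 0 := by
    rcases hb with h|h <;> rcases hc with h'|h' <;> rcases hd with h''|h'' <;>
      rw [h, h', h''] <;> norm_num
  have hαl : IsLongRoot n α := ⟨p, q, hpq, a, b, ha, hb, hα⟩
  have hβl : IsLongRoot n β := ⟨q, r, hqr, c, d, hc, hd, hβ⟩
  have hγs : -(b*c*d) = 1 ∨ -(b*c*d) = -1 := by
    rcases hb with h|h <;> rcases hc with h'|h' <;> rcases hd with h''|h'' <;>
      rw [h, h', h''] <;> norm_num
  have hγl : IsLongRoot n (α - (b*c) • β) := ⟨p, r, hpr, a, -(b*c*d), ha, hγs, hγ⟩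
  have hnαl : IsLongRoot n (-α) := ⟨p, q, hpq, -a, -b,
    by rcases ha with h|h <;> rw [h] <;> norm_num,
    by rcases hb with h|h <;> rw [h] <;> norm_num, by rw [hα]; module⟩
  have hnβl : IsLongRoot n (-β) := ⟨q, r, hqr, -c, -d,
    by rcases hc with h|h <;> rw [h] <;> norm_num,
    by rcases hd with h|h <;> rw [h] <;> norm_num, by rw [hβ]; module⟩
  have hnγl : IsLongRoot n (-(α - (b*c) • β)) := ⟨p, r, hpr, -a, b*c*d,
    by rcases ha with h|h <;> rw [h] <;> norm_num,
    by rcases hb with h|h <;> rcases hc with h'|h' <;> rcases hd with h''|h'' <;>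
      rw [h, h', h''] <;> norm_num, by rw [hγ]; module⟩
  have hαm : α ∈ Submodule.span ℝ {α, β} :=
    Submodule.subset_span (Set.mem_insert _ _)
  have hβm : β ∈ Submodule.span ℝ {α, β} :=
    Submodule.subset_span (Set.mem_insert_of_mem _ rfl)
  have hγm : α - (b*c) • β ∈ Submodule.span ℝ {α, β} :=
    Submodule.sub_mem _ hαm (Submodule.smul_mem _ _ hβm)
  have hEq : ((Submodule.span ℝ {α, β} : Submodule ℝ (EuclideanSpace ℝ (Fin n))) : Set _)
      ∩ PhiB n = {α, -α, β, -β, α - (b*c) • β, -(α - (b*c) • β)} := by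
    ext x
    constructor
    · rintro ⟨hx1, hx2⟩
      rw [SetLike.mem_coe, Submodule.mem_span_pair] at hx1
      obtain ⟨u, v, huv⟩ := hx1
      have hxp : x p = u * a := by
        rw [← huv]; simp [hα, hβ, stdBasis_apply, hpq, hpr]
      have hxq : x q = u * b + v * c := by
        rw [← huv]; simp [hα, hβ, stdBasis_apply, hpq.symm, hqr]
      have hxr : x r = v * d := by
        rw [← huv]; simp [hα, hβ, stdBasis_apply, hpr.symm, hqr.symm]
      by_cases hu : u = 0 <;> by_cases hv : v = 0
      · exfalso
        subst hu hv
        simp only [zero_smul, add_zero, zero_add] at huv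
        rcases hx2 with h | h
        · exact short_ne_zero h huv.symm
        · exact long_ne_zero h huv.symm
      · subst hu
        have hq0 : x q ≠ 0 := by rw [hxq]; simpa using mul_ne_zero hv hc0
        have hr0 : x r ≠ 0 := by rw [hxr]; exact mul_ne_zero hv hd0
        rcases hx2 with h | h
        · exact absurd (short_two h hqr) (by tauto)
        · have hv1 : v = 1 ∨ v = -1 := by
            have h' := long_coord h r
            rw [hxr] at h'
            rcases hd with h''|h'' <;> subst h'' <;> rcases h' with h'|h'|h' <;>
              first | (exact absurd (by linarith) hv) | (left; linarith) | (right; linarith)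
          have hx : x = v • β := by rw [← huv]; module
          rcases hv1 with h'|h' <;> subst h' <;> rw [hx] <;> simp
      · subst hv
        have hp0 : x p ≠ 0 := by rw [hxp]; exact mul_ne_zero hu ha0
        have hq0 : x q ≠ 0 := by rw [hxq]; simpa using mul_ne_zero hu hb0
        rcases hx2 with h | h
        · exact absurd (short_two h hpq) (by tauto)
        · have hu1 : u = 1 ∨ u = -1 := by
            have h' := long_coord h p
            rw [hxp] at h'
            rcases ha with h''|h'' <;> subst h'' <;> rcases h' with h'|h'|h' <;>
              first | (exact absurd (by linarith) hu) | (left; linarith) | (right; linarith)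
          have hx : x = u • α := by rw [← huv]; module
          rcases hu1 with h'|h' <;> subst h' <;> rw [hx] <;> simp
      · have hp0 : x p ≠ 0 := by rw [hxp]; exact mul_ne_zero hu ha0
        have hr0 : x r ≠ 0 := by rw [hxr]; exact mul_ne_zero hv hd0
        rcases hx2 with h | h
        · exact absurd (short_two h hpr) (by tauto)
        · have hu1 : u = 1 ∨ u = -1 := by
            have h' := long_coord h p
            rw [hxp] at h'
            rcases ha with h''|h'' <;> subst h'' <;> rcases h' with h'|h'|h' <;>
              first | (exact absurd (by linarith) hu) | (left; linarith) | (right; linarith)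
          have hv1 : v = 1 ∨ v = -1 := by
            have h' := long_coord h r
            rw [hxr] at h'
            rcases hd with h''|h'' <;> subst h'' <;> rcases h' with h'|h'|h' <;>
              first | (exact absurd (by linarith) hv) | (left; linarith) | (right; linarith)
          have hq1 : u * b + v * c = 0 := by
            have h' := long_coord h q
            rw [hxq] at h'
            rcases hu1 with h1|h1 <;> rcases hv1 with h2|h2 <;> subst h1 h2 <;>
              rcases hb with h3|h3 <;> rcases hc with h4|h4 <;> subst h3 h4 <;>
              rcases h' with h'|h'|h' <;> linarith
          have hveq : v = -(u * (b * c)) := by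
            have : u * b * c + v * (c * c) = 0 := by linear_combination c * hq1
            rw [hcc] at this; linarith
          have hx : x = u • (α - (b*c) • β) := by
            rw [← huv, hveq]; module
          rcases hu1 with h'|h' <;> subst h' <;> rw [hx] <;> simp
    · intro hx
      rcases hx with h|h|h|h|h|h <;> subst h
      · exact ⟨hαm, Or.inr hαl⟩
      · exact ⟨Submodule.neg_mem _ hαm, Or.inr hnαl⟩
      · exact ⟨hβm, Or.inr hβl⟩
      · exact ⟨Submodule.neg_mem _ hβm, Or.inr hnβl⟩
      · exact ⟨hγm, Or.inr hγl⟩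
      · exact ⟨Submodule.neg_mem _ hγm, Or.inr hnγl⟩
  -- coordinates
  have hαp : α p = a := by simp [hα, stdBasis_apply, hpq]
  have hβp : β p = 0 := by simp [hβ, stdBasis_apply, hpq, hpr]
  have hαq : α q = b := by simp [hα, stdBasis_apply, hpq.symm]
  have hβq : β q = c := by simp [hβ, stdBasis_apply, hqr]
  have hγp : (α - (b*c) • β) p = a := by
    simp only [PiLp.sub_apply, PiLp.smul_apply, smul_eq_mul]
    rw [hαp, hβp]; ring
  have hγq : (α - (b*c) • β) q = 0 := by
    simp only [PiLp.sub_apply, PiLp.smul_apply, smul_eq_mul]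
    rw [hαq, hβq]; linear_combination (-b) * hcc
  -- distinctness
  have hne1 : α ≠ -α := ne_of_coord p (by
    simp only [PiLp.neg_apply, hαp, hβp, hγp, hαq, hβq, hγq]
    intro h
    first | exact ha0 (by linarith) | exact hb0 (by linarith) | exact hc0 (by linarith))
  have hne2 : α ≠ β := ne_of_coord p (by
    simp only [PiLp.neg_apply, hαp, hβp, hγp, hαq, hβq, hγq]
    intro h
    first | exact ha0 (by linarith) | exact hb0 (by linarith) | exact hc0 (by linarith))
  have hne3 : α ≠ -β := ne_of_coord p (by
    simp only [PiLp.neg_apply, hαp, hβp, hγp, hαq, hβq, hγq]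
    intro h
    first | exact ha0 (by linarith) | exact hb0 (by linarith) | exact hc0 (by linarith))
  have hne4 : α ≠ α - (b*c) • β := ne_of_coord q (by
    simp only [PiLp.neg_apply, hαp, hβp, hγp, hαq, hβq, hγq]
    intro h
    first | exact ha0 (by linarith) | exact hb0 (by linarith) | exact hc0 (by linarith))
  have hne5 : α ≠ -(α - (b*c) • β) := ne_of_coord q (by
    simp only [PiLp.neg_apply, hαp, hβp, hγp, hαq, hβq, hγq]
    intro h
    first | exact ha0 (by linarith) | exact hb0 (by linarith) | exact hc0 (by linarith))
  have hne6 : (-α) ≠ β := ne_of_coord p (by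
    simp only [PiLp.neg_apply, hαp, hβp, hγp, hαq, hβq, hγq]
    intro h
    first | exact ha0 (by linarith) | exact hb0 (by linarith) | exact hc0 (by linarith))
  have hne7 : (-α) ≠ -β := ne_of_coord p (by
    simp only [PiLp.neg_apply, hαp, hβp, hγp, hαq, hβq, hγq]
    intro h
    first | exact ha0 (by linarith) | exact hb0 (by linarith) | exact hc0 (by linarith))
  have hne8 : (-α) ≠ α - (b*c) • β := ne_of_coord q (by
    simp only [PiLp.neg_apply, hαp, hβp, hγp, hαq, hβq, hγq]
    intro h
    first | exact ha0 (by linarith) | exact hb0 (by linarith) | exact hc0 (by linarith))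
  have hne9 : (-α) ≠ -(α - (b*c) • β) := ne_of_coord q (by
    simp only [PiLp.neg_apply, hαp, hβp, hγp, hαq, hβq, hγq]
    intro h
    first | exact ha0 (by linarith) | exact hb0 (by linarith) | exact hc0 (by linarith))
  have hne10 : β ≠ -β := ne_of_coord q (by
    simp only [PiLp.neg_apply, hαp, hβp, hγp, hαq, hβq, hγq]
    intro h
    first | exact ha0 (by linarith) | exact hb0 (by linarith) | exact hc0 (by linarith))
  have hne11 : β ≠ α - (b*c) • β := ne_of_coord p (by
    simp only [PiLp.neg_apply, hαp, hβp, hγp, hαq, hβq, hγq]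
    intro h
    first | exact ha0 (by linarith) | exact hb0 (by linarith) | exact hc0 (by linarith))
  have hne12 : β ≠ -(α - (b*c) • β) := ne_of_coord p (by
    simp only [PiLp.neg_apply, hαp, hβp, hγp, hαq, hβq, hγq]
    intro h
    first | exact ha0 (by linarith) | exact hb0 (by linarith) | exact hc0 (by linarith))
  have hne13 : (-β) ≠ α - (b*c) • β := ne_of_coord p (by
    simp only [PiLp.neg_apply, hαp, hβp, hγp, hαq, hβq, hγq]
    intro h
    first | exact ha0 (by linarith) | exact hb0 (by linarith) | exact hc0 (by linarith))
  have hne14 : (-β) ≠ -(α - (b*c) • β) := ne_of_coord p (by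
    simp only [PiLp.neg_apply, hαp, hβp, hγp, hαq, hβq, hγq]
    intro h
    first | exact ha0 (by linarith) | exact hb0 (by linarith) | exact hc0 (by linarith))
  have hne15 : α - (b*c) • β ≠ -(α - (b*c) • β) := ne_of_coord p (by
    simp only [PiLp.neg_apply, hαp, hβp, hγp, hαq, hβq, hγq]
    intro h
    first | exact ha0 (by linarith) | exact hb0 (by linarith) | exact hc0 (by linarith))
  constructor
  · rw [hEq]
    rw [Set.ncard_insert_of_notMem (by
        simp only [Set.mem_insert_iff, Set.mem_singleton_iff]; push_neg
        exact ⟨hne1, hne2, hne3, hne4, hne5⟩),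
      Set.ncard_insert_of_notMem (by
        simp only [Set.mem_insert_iff, Set.mem_singleton_iff]; push_neg
        exact ⟨hne6, hne7, hne8, hne9⟩),
      Set.ncard_insert_of_notMem (by
        simp only [Set.mem_insert_iff, Set.mem_singleton_iff]; push_neg
        exact ⟨hne10, hne11, hne12⟩),
      Set.ncard_insert_of_notMem (by
        simp only [Set.mem_insert_iff, Set.mem_singleton_iff]; push_neg
        exact ⟨hne13, hne14⟩),
      Set.ncard_insert_of_notMem (by
        simp only [Set.mem_singleton_iff]; exact hne15),
      Set.ncard_singleton]
  · rw [hEq]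
    rintro x (h|h|h|h|h|h) <;> subst h
    exacts [hαl, hnαl, hβl, hnβl, hγl, hnγl]

/- ### Dimension count -/

lemma stdBasis_injective (n : ℕ) : Function.Injective (stdBasis n) := by
  intro x y h
  by_contra hne
  have := congrArg (fun f => f x) h
  simp [stdBasis_apply, hne] at this

lemma dim_card (n : ℕ) (i j k l : Fin n) :
    Module.finrank ℝ (Submodule.span ℝ
      ({stdBasis n i, stdBasis n j, stdBasis n k, stdBasis n l} :
        Set (EuclideanSpace ℝ (Fin n)))) =
    ({i, j, k, l} : Finset (Fin n)).card := by
  classical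
  have hset : ({stdBasis n i, stdBasis n j, stdBasis n k, stdBasis n l} :
      Set (EuclideanSpace ℝ (Fin n))) = stdBasis n '' ({i, j, k, l} : Set (Fin n)) := by
    simp [Set.image_insert_eq]
  have hfun : stdBasis n = ⇑((EuclideanSpace.basisFun (Fin n) ℝ).toBasis) :=
    funext fun m => by
      rw [OrthonormalBasis.coe_toBasis]
      exact (EuclideanSpace.basisFun_apply _ _ m).symm
  have hli : LinearIndependent ℝ
      (Subtype.val : (stdBasis n '' ({i, j, k, l} : Set (Fin n))) → _) := by
    refine LinearIndepOn.mono (v := id) (s := Set.range (stdBasis n)) ?_ (Set.image_subset_range _ _)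
    rw [hfun]
    exact (linearIndepOn_id_range_iff (EuclideanSpace.basisFun (Fin n) ℝ).toBasis.injective).mpr
      (EuclideanSpace.basisFun (Fin n) ℝ).toBasis.linearIndependent
  rw [hset, finrank_span_set_eq_card hli, Set.toFinset_image,
    Finset.card_image_of_injective _ (stdBasis_injective n)]
  congr 1
  simp

lemma card3le (n : ℕ) (x y z : Fin n) : ({x, y, z} : Finset (Fin n)).card ≤ 3 := by
  classical
  refine le_trans (Finset.card_insert_le _ _) ?_
  have h := Finset.card_insert_le y ({z} : Finset (Fin n))
  simp at h ⊢
  omega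

lemma card2le (n : ℕ) (x y : Fin n) : ({x, y} : Finset (Fin n)).card ≤ 2 := by
  classical
  have h := Finset.card_insert_le x ({y} : Finset (Fin n))
  simp at h ⊢
  omega

lemma cardle3' (n : ℕ) (x y z w : Fin n) (h : x = z ∨ x = w ∨ y = z ∨ y = w) :
    ({x, y, z, w} : Finset (Fin n)).card ≤ 3 := by
  classical
  rcases h with h|h|h|h <;> subst h
  · exact le_trans (Finset.card_le_card (by intro t ht; simp at ht ⊢; tauto))
      (card3le n x y w)
  · exact le_trans (Finset.card_le_card (by intro t ht; simp at ht ⊢; tauto))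
      (card3le n x y z)
  · exact le_trans (Finset.card_le_card (by intro t ht; simp at ht ⊢; tauto))
      (card3le n x y w)
  · exact le_trans (Finset.card_le_card (by intro t ht; simp at ht ⊢; tauto))
      (card3le n x y z)

lemma cardle2' (n : ℕ) (x y z w : Fin n) (h : (x = z ∧ y = w) ∨ (x = w ∧ y = z)) :
    ({x, y, z, w} : Finset (Fin n)).card ≤ 2 := by
  classical
  rcases h with ⟨h1, h2⟩ | ⟨h1, h2⟩ <;> subst h1 h2 <;>
    exact le_trans (Finset.card_le_card (by intro t ht; simp at ht ⊢; tauto))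
      (card2le n x y)

lemma card4eq (n : ℕ) (x y z w : Fin n) (hxy : x ≠ y) (hxz : x ≠ z) (hxw : x ≠ w)
    (hyz : y ≠ z) (hyw : y ≠ w) (hzw : z ≠ w) :
    ({x, y, z, w} : Finset (Fin n)).card = 4 := by
  classical
  rw [Finset.card_insert_of_notMem (by simp [hxy, hxz, hxw]),
    Finset.card_insert_of_notMem (by simp [hyz, hyw]),
    Finset.card_insert_of_notMem (by simp [hzw]),
    Finset.card_singleton]

/- ### Main theorem -/

/-- Two linearly independent long roots of `B_n` span a plane that contains exactly 4
roots (all long) if the corresponding basis vectors span a 4-dimensional space, and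
exactly 6 roots (all long) if they span a 3-dimensional space. -/
theorem stmt2 (n : ℕ) (hn : 2 ≤ n) (i j k l : Fin n) (hij : i ≠ j) (hkl : k ≠ l)
    (ε₁ ε₂ ε₃ ε₄ : ℝ)
    (hε₁ : ε₁ = 1 ∨ ε₁ = -1) (hε₂ : ε₂ = 1 ∨ ε₂ = -1)
    (hε₃ : ε₃ = 1 ∨ ε₃ = -1) (hε₄ : ε₄ = 1 ∨ ε₄ = -1)
    (α β : EuclideanSpace ℝ (Fin n))
    (hα : α = ε₁ • stdBasis n i + ε₂ • stdBasis n j)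
    (hβ : β = ε₃ • stdBasis n k + ε₄ • stdBasis n l)
    (hind : LinearIndependent ℝ ![α, β])
    (P : Submodule ℝ (EuclideanSpace ℝ (Fin n)))
    (hP : P = Submodule.span ℝ {α, β})
    (d : ℕ)
    (hd : d = Module.finrank ℝ
      (Submodule.span ℝ {stdBasis n i, stdBasis n j, stdBasis n k, stdBasis n l})) :
    (d = 4 → ((P : Set (EuclideanSpace ℝ (Fin n))) ∩ PhiB n).ncard = 4 ∧
      ∀ x ∈ (P : Set (EuclideanSpace ℝ (Fin n))) ∩ PhiB n, IsLongRoot n x) ∧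
    (d = 3 → ((P : Set (EuclideanSpace ℝ (Fin n))) ∩ PhiB n).ncard = 6 ∧
      ∀ x ∈ (P : Set (EuclideanSpace ℝ (Fin n))) ∩ PhiB n, IsLongRoot n x) := by
  classical
  subst hP
  have hdc : d = ({i, j, k, l} : Finset (Fin n)).card := by rw [hd, dim_card]
  constructor
  · intro h4
    rw [hdc] at h4
    have hik : i ≠ k := fun h => by
      have := cardle3' n i j k l (Or.inl h); omega
    have hil : i ≠ l := fun h => by
      have := cardle3' n i j k l (Or.inr (Or.inl h)); omega
    have hjk : j ≠ k := fun h => by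
      have := cardle3' n i j k l (Or.inr (Or.inr (Or.inl h))); omega
    have hjl : j ≠ l := fun h => by
      have := cardle3' n i j k l (Or.inr (Or.inr (Or.inr h))); omega
    exact key4 n i j k l hij hik hil hjk hjl hkl ε₁ ε₂ ε₃ ε₄ hε₁ hε₂ hε₃ hε₄ α β hα hβ
  · intro h3
    rw [hdc] at h3
    by_cases hik : i = k
    · subst hik
      have hjl : j ≠ l := fun h => by
        have := cardle2' n i j i l (Or.inl ⟨rfl, h⟩); omega
      rw [add_comm] at hα
      exact key3 n j i l hij.symm hjl hkl ε₂ ε₁ ε₃ ε₄ hε₂ hε₁ hε₃ hε₄ α β hα hβ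
    · by_cases hil : i = l
      · subst hil
        have hjk : j ≠ k := fun h => by
          have := cardle2' n i j k i (Or.inr ⟨rfl, h⟩); omega
        rw [add_comm] at hα hβ
        exact key3 n j i k hij.symm hjk (Ne.symm hkl) ε₂ ε₁ ε₄ ε₃ hε₂ hε₁ hε₄ hε₃ α β hα hβ
      · by_cases hjk : j = k
        · subst hjk
          exact key3 n i j l hij (Ne.symm (fun h => hil h.symm)) hkl ε₁ ε₂ ε₃ ε₄
            hε₁ hε₂ hε₃ hε₄ α β hα hβ
        · by_cases hjl : j = l
          · subst hjl
            rw [add_comm] at hβ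
            exact key3 n i j k hij (fun h => hik h) (Ne.symm hkl) ε₁ ε₂ ε₄ ε₃
              hε₁ hε₂ hε₄ hε₃ α β hα hβ
          · exfalso
            rw [card4eq n i j k l hij hik hil hjk hjl hkl] at h3
            omega
end

section
/- Let n ≥ 2 and let P be a 2-dimensional linear subspace of ℝ^n containing at least 8 roots of Φ_{B_n}. Then P is standard (i.e., spanned by two of the standard basis vectors e_i, e_j), and P contains exactly 8 roots of Φ_{B_n}, of which exactly 4 are long and exactly 4 are short. -/
namespace Aux

variable {n : ℕ}

lemma ne_of_coord {u v : EuclideanSpace ℝ (Fin n)} (k : Fin n) (h : u k ≠ v k) : u ≠ v :=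
  fun e => h (by rw [e])

lemma std_apply (i k : Fin n) : stdBasis n i k = if k = i then 1 else 0 := by
  simp [stdBasis, EuclideanSpace.single_apply]

/-- coordinate description of roots -/
lemma phi_coords {x : EuclideanSpace ℝ (Fin n)} (hx : x ∈ PhiB n) :
    (∃ i : Fin n, ∃ σ : ℝ, (σ = 1 ∨ σ = -1) ∧ ∀ k, x k = if k = i then σ else 0) ∨
    (∃ i j : Fin n, ∃ σ τ : ℝ, i ≠ j ∧ (σ = 1 ∨ σ = -1) ∧ (τ = 1 ∨ τ = -1) ∧
      ∀ k, x k = if k = i then σ else if k = j then τ else 0) := by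
  rcases hx with ⟨i, h | h⟩ | ⟨i, j, hij, ε₁, ε₂, h₁, h₂, h⟩
  · exact Or.inl ⟨i, 1, Or.inl rfl, fun k => by rw [h, std_apply]⟩
  · refine Or.inl ⟨i, -1, Or.inr rfl, fun k => ?_⟩
    rw [h]
    show -(stdBasis n i k) = _
    rw [std_apply]
    split <;> simp
  · refine Or.inr ⟨i, j, ε₁, ε₂, hij, h₁, h₂, fun k => ?_⟩
    rw [h]
    show (ε₁ • stdBasis n i + ε₂ • stdBasis n j) k = _
    rw [PiLp.add_apply, PiLp.smul_apply, PiLp.smul_apply, std_apply, std_apply]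
    rcases eq_or_ne k i with rfl | hki
    · rw [if_pos rfl, if_pos rfl, if_neg hij]
      simp
    · rw [if_neg hki, if_neg hki]
      split <;> simp

lemma phi_coord_mem {x : EuclideanSpace ℝ (Fin n)} (hx : x ∈ PhiB n) (k : Fin n) :
    x k = 0 ∨ x k = 1 ∨ x k = -1 := by
  rcases phi_coords hx with ⟨i, σ, hσ, h⟩ | ⟨i, j, σ, τ, hij, hσ, hτ, h⟩
  · rw [h]; split
    · rcases hσ with rfl | rfl <;> simp
    · simp
  · rw [h]; split
    · rcases hσ with rfl | rfl <;> simp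
    · split
      · rcases hτ with rfl | rfl <;> simp
      · simp

lemma phi_three_zero {x : EuclideanSpace ℝ (Fin n)} (hx : x ∈ PhiB n)
    {p q s : Fin n} (hpq : p ≠ q) (hps : p ≠ s) (hqs : q ≠ s) :
    x p = 0 ∨ x q = 0 ∨ x s = 0 := by
  rcases phi_coords hx with ⟨i, σ, hσ, h⟩ | ⟨i, j, σ, τ, hij, hσ, hτ, h⟩
  · rcases eq_or_ne p i with rfl | hp
    · exact Or.inr (Or.inl (by rw [h, if_neg hpq.symm]))
    · exact Or.inl (by rw [h, if_neg hp])
  · rcases eq_or_ne p i with rfl | hp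
    · rcases eq_or_ne q j with rfl | hq
      · refine Or.inr (Or.inr ?_)
        rw [h, if_neg hps.symm, if_neg hqs.symm]
      · exact Or.inr (Or.inl (by rw [h, if_neg hpq.symm, if_neg hq]))
    · rcases eq_or_ne p j with rfl | hp'
      · rcases eq_or_ne q i with rfl | hq
        · refine Or.inr (Or.inr ?_)
          rw [h, if_neg hqs.symm, if_neg hps.symm]
        · exact Or.inr (Or.inl (by rw [h, if_neg hq, if_neg hpq.symm]))
      · exact Or.inl (by rw [h, if_neg hp, if_neg hp'])

lemma phi_ne_zero {x : EuclideanSpace ℝ (Fin n)} (hx : x ∈ PhiB n) : x ≠ 0 := by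
  rcases phi_coords hx with ⟨i, σ, hσ, h⟩ | ⟨i, j, σ, τ, hij, hσ, hτ, h⟩ <;>
  · refine ne_of_coord i ?_
    rw [h, if_pos rfl]
    show _ ≠ (0 : EuclideanSpace ℝ (Fin n)) i
    rcases hσ with rfl | rfl <;> simp

lemma phi_smul {x y : EuclideanSpace ℝ (Fin n)} (hx : x ∈ PhiB n) (hy : y ∈ PhiB n)
    {a : ℝ} (h : y = a • x) : y = x ∨ y = -x := by
  obtain ⟨i, hi⟩ : ∃ i, x i = 1 ∨ x i = -1 := by
    rcases phi_coords hx with ⟨i, σ, hσ, h⟩ | ⟨i, j, σ, τ, hij, hσ, hτ, h⟩ <;>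
    · refine ⟨i, ?_⟩
      rw [h, if_pos rfl]
      exact hσ
  have hyi : y i = a * x i := by rw [h]; rfl
  have hy0 : y i = 0 ∨ y i = 1 ∨ y i = -1 := phi_coord_mem hy i
  have ha : a = 1 ∨ a = -1 := by
    rcases hy0 with h0 | h1 | h2
    · exfalso
      rw [h0] at hyi
      have ha0 : a = 0 := by
        rcases hi with hx1 | hx1 <;> rw [hx1] at hyi <;> [linarith; linarith]
      rw [ha0, zero_smul] at h
      exact phi_ne_zero hy h
    · rw [h1] at hyi
      rcases hi with hx1 | hx1 <;> rw [hx1] at hyi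
      · exact Or.inl (by linarith)
      · exact Or.inr (by linarith)
    · rw [h2] at hyi
      rcases hi with hx1 | hx1 <;> rw [hx1] at hyi
      · exact Or.inr (by linarith)
      · exact Or.inl (by linarith)
  rcases ha with rfl | rfl
  · rw [one_smul] at h; exact Or.inl h
  · rw [neg_one_smul] at h; exact Or.inr h

/-- short root α at i, long root β on {j,k} disjoint from i: only 4 roots in the plane -/
lemma subset_short_long_disjoint {P : Submodule ℝ (EuclideanSpace ℝ (Fin n))}
    {α β : EuclideanSpace ℝ (Fin n)} (hα : α ∈ PhiB n) (hβ : β ∈ PhiB n)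
    {i j k : Fin n} (hij : i ≠ j) (hik : i ≠ k) (hjk : j ≠ k)
    {σ τ₁ τ₂ : ℝ} (hσ : σ = 1 ∨ σ = -1)
    (hA : ∀ m, α m = if m = i then σ else 0)
    (hB : ∀ m, β m = if m = j then τ₁ else if m = k then τ₂ else 0)
    (hτ₁ : τ₁ = 1 ∨ τ₁ = -1) (hτ₂ : τ₂ = 1 ∨ τ₂ = -1)
    (hspan : P = Submodule.span ℝ {α, β}) :
    (↑P ∩ PhiB n : Set (EuclideanSpace ℝ (Fin n))) ⊆ {α, -α, β, -β} := by
  rintro x ⟨hxP, hxΦ⟩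
  rw [hspan, SetLike.mem_coe, Submodule.mem_span_pair] at hxP
  obtain ⟨a, b, hab⟩ := hxP
  have hxm : ∀ m, x m = a * α m + b * β m := fun m => by rw [← hab]; rfl
  have hxi : x i = a * σ := by rw [hxm, hA, hB, if_pos rfl, if_neg hij, if_neg hik]; ring
  have hxj : x j = b * τ₁ := by rw [hxm, hA, hB, if_neg hij.symm, if_pos rfl]; ring
  have hxk : x k = b * τ₂ := by
    rw [hxm, hA, hB, if_neg hik.symm, if_neg hjk.symm, if_pos rfl]; ring
  rcases phi_three_zero hxΦ hij hik hjk with h0 | h0 | h0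
  · have ha : a = 0 := by
      rw [hxi] at h0; rcases hσ with rfl | rfl <;> linarith
    have : x = b • β := by rw [← hab, ha]; simp
    rcases phi_smul hβ hxΦ this with rfl | rfl <;> simp
  · have hb : b = 0 := by
      rw [hxj] at h0; rcases hτ₁ with rfl | rfl <;> linarith
    have : x = a • α := by rw [← hab, hb]; simp
    rcases phi_smul hα hxΦ this with rfl | rfl <;> simp
  · have hb : b = 0 := by
      rw [hxk] at h0; rcases hτ₂ with rfl | rfl <;> linarith
    have : x = a • α := by rw [← hab, hb]; simp
    rcases phi_smul hα hxΦ this with rfl | rfl <;> simp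

/-- two long roots with disjoint supports: only 4 roots in the plane -/
lemma subset_long_long_disjoint {P : Submodule ℝ (EuclideanSpace ℝ (Fin n))}
    {α β : EuclideanSpace ℝ (Fin n)} (hα : α ∈ PhiB n) (hβ : β ∈ PhiB n)
    {i j k l : Fin n} (hik : i ≠ k) (hil : i ≠ l) (hjk : j ≠ k) (hjl : j ≠ l) (hkl : k ≠ l)
    {σ₁ σ₂ τ₁ τ₂ : ℝ} (hσ₁ : σ₁ = 1 ∨ σ₁ = -1)
    (hA : ∀ m, α m = if m = i then σ₁ else if m = j then σ₂ else 0)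
    (hB : ∀ m, β m = if m = k then τ₁ else if m = l then τ₂ else 0)
    (hτ₁ : τ₁ = 1 ∨ τ₁ = -1) (hτ₂ : τ₂ = 1 ∨ τ₂ = -1)
    (hspan : P = Submodule.span ℝ {α, β}) :
    (↑P ∩ PhiB n : Set (EuclideanSpace ℝ (Fin n))) ⊆ {α, -α, β, -β} := by
  rintro x ⟨hxP, hxΦ⟩
  rw [hspan, SetLike.mem_coe, Submodule.mem_span_pair] at hxP
  obtain ⟨a, b, hab⟩ := hxP
  have hxm : ∀ m, x m = a * α m + b * β m := fun m => by rw [← hab]; rfl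
  have hxi : x i = a * σ₁ := by
    rw [hxm, hA, hB, if_pos rfl, if_neg hik, if_neg hil]; ring
  have hxk : x k = b * τ₁ := by
    rw [hxm, hA, hB, if_neg hik.symm, if_neg hjk.symm, if_pos rfl]; ring
  have hxl : x l = b * τ₂ := by
    rw [hxm, hA, hB, if_neg hil.symm, if_neg hjl.symm, if_neg hkl.symm, if_pos rfl]; ring
  rcases phi_three_zero hxΦ hik hil hkl with h0 | h0 | h0
  · have ha : a = 0 := by
      rw [hxi] at h0; rcases hσ₁ with rfl | rfl <;> linarith
    have : x = b • β := by rw [← hab, ha]; simp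
    rcases phi_smul hβ hxΦ this with rfl | rfl <;> simp
  · have hb : b = 0 := by
      rw [hxk] at h0; rcases hτ₁ with rfl | rfl <;> linarith
    have : x = a • α := by rw [← hab, hb]; simp
    rcases phi_smul hα hxΦ this with rfl | rfl <;> simp
  · have hb : b = 0 := by
      rw [hxl] at h0; rcases hτ₂ with rfl | rfl <;> linarith
    have : x = a • α := by rw [← hab, hb]; simp
    rcases phi_smul hα hxΦ this with rfl | rfl <;> simp

/-- two long roots sharing exactly one coordinate s : at most 6 roots in the plane -/
lemma subset_long_long_shared {P : Submodule ℝ (EuclideanSpace ℝ (Fin n))}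
    {α β : EuclideanSpace ℝ (Fin n)} (hα : α ∈ PhiB n) (hβ : β ∈ PhiB n)
    {p q s : Fin n} (hpq : p ≠ q) (hps : p ≠ s) (hqs : q ≠ s)
    {σ₁ σ₂ τ₁ τ₂ : ℝ} (hσ₁ : σ₁ = 1 ∨ σ₁ = -1) (hσ₂ : σ₂ = 1 ∨ σ₂ = -1)
    (hτ₁ : τ₁ = 1 ∨ τ₁ = -1) (hτ₂ : τ₂ = 1 ∨ τ₂ = -1)
    (hA : ∀ m, α m = if m = p then σ₁ else if m = s then σ₂ else 0)
    (hB : ∀ m, β m = if m = q then τ₁ else if m = s then τ₂ else 0)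
    (hspan : P = Submodule.span ℝ {α, β}) :
    (↑P ∩ PhiB n : Set (EuclideanSpace ℝ (Fin n))) ⊆
      {α, -α, β, -β, stdBasis n p + (-(σ₁*σ₂*τ₂*τ₁)) • stdBasis n q,
        -(stdBasis n p + (-(σ₁*σ₂*τ₂*τ₁)) • stdBasis n q)} := by
  set c : ℝ := -(σ₁*σ₂*τ₂*τ₁) with hc
  set γ : EuclideanSpace ℝ (Fin n) := stdBasis n p + c • stdBasis n q with hγ
  have hG : ∀ m, γ m = (if m = p then 1 else 0) + c * (if m = q then 1 else 0) := by
    intro m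
    show stdBasis n p m + c * stdBasis n q m = _
    rw [std_apply, std_apply]
  rintro x ⟨hxP, hxΦ⟩
  rw [hspan, SetLike.mem_coe, Submodule.mem_span_pair] at hxP
  obtain ⟨a, b, hab⟩ := hxP
  have hxm : ∀ m, x m = a * α m + b * β m := fun m => by rw [← hab]; rfl
  have hxp : x p = a * σ₁ := by
    rw [hxm, hA, hB, if_pos rfl, if_neg hpq, if_neg hps]; ring
  have hxq : x q = b * τ₁ := by
    rw [hxm, hA, hB, if_neg hpq.symm, if_neg hqs, if_pos rfl]; ring
  have hxs : x s = a * σ₂ + b * τ₂ := by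
    rw [hxm, hA, hB, if_neg hps.symm, if_pos rfl, if_neg hqs.symm, if_pos rfl]
  rcases phi_three_zero hxΦ hpq hps hqs with h0 | h0 | h0
  · have ha : a = 0 := by
      rw [hxp] at h0; rcases hσ₁ with rfl | rfl <;> linarith
    have : x = b • β := by rw [← hab, ha]; simp
    rcases phi_smul hβ hxΦ this with rfl | rfl <;> simp
  · have hb : b = 0 := by
      rw [hxq] at h0; rcases hτ₁ with rfl | rfl <;> linarith
    have : x = a • α := by rw [← hab, hb]; simp
    rcases phi_smul hα hxΦ this with rfl | rfl <;> simp
  · -- a σ₂ + b τ₂ = 0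
    rw [hxs] at h0
    have hb : b = -(a * σ₂ * τ₂) := by
      rcases hτ₂ with rfl | rfl <;> linarith
    have ha3 : a * σ₁ = 0 ∨ a * σ₁ = 1 ∨ a * σ₁ = -1 := hxp ▸ phi_coord_mem hxΦ p
    have key : ∀ m, x m = (a * σ₁) * γ m := by
      intro m
      rw [hxm, hA, hB, hG, hb, hc]
      rcases eq_or_ne m p with rfl | hmp
      · rw [if_pos rfl, if_pos rfl, if_neg hpq, if_neg hps, if_neg hpq]
        rcases hσ₁ with rfl | rfl <;> ring
      · rw [if_neg hmp, if_neg hmp]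
        rcases eq_or_ne m q with rfl | hmq
        · rw [if_pos rfl, if_neg hqs, if_pos rfl]
          rcases hσ₁ with rfl | rfl <;> rcases hτ₂ with rfl | rfl <;>
            rcases hσ₂ with rfl | rfl <;> ring
        · rw [if_neg hmq, if_neg hmq]
          rcases eq_or_ne m s with rfl | hms
          · rw [if_pos rfl, if_pos rfl]
            rcases hτ₂ with rfl | rfl <;> ring
          · rw [if_neg hms, if_neg hms]
            ring
    rcases ha3 with h1 | h1 | h1
    · exfalso
      have ha : a = 0 := by rcases hσ₁ with rfl | rfl <;> linarith
      have hb0 : b = 0 := by rw [hb, ha]; ring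
      have : x = 0 := by rw [← hab, ha, hb0]; simp
      exact phi_ne_zero hxΦ this
    · have : x = γ := PiLp.ext fun m => by rw [key, h1, one_mul]
      rw [this]; simp
    · have : x = -γ := PiLp.ext fun m => by
        rw [key, h1]
        show _ = -(γ m)
        ring
      rw [this]; simp

lemma short_coords {x : EuclideanSpace ℝ (Fin n)} (h : IsShortRoot n x) :
    ∃ i : Fin n, ∃ σ : ℝ, (σ = 1 ∨ σ = -1) ∧ ∀ k, x k = if k = i then σ else 0 := by
  obtain ⟨i, rfl | rfl⟩ := h
  · exact ⟨i, 1, Or.inl rfl, fun k => by rw [std_apply]⟩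
  · refine ⟨i, -1, Or.inr rfl, fun k => ?_⟩
    show -(stdBasis n i k) = _
    rw [std_apply]
    split <;> simp

lemma long_coords {x : EuclideanSpace ℝ (Fin n)} (h : IsLongRoot n x) :
    ∃ i j : Fin n, ∃ σ τ : ℝ, i ≠ j ∧ (σ = 1 ∨ σ = -1) ∧ (τ = 1 ∨ τ = -1) ∧
      ∀ k, x k = if k = i then σ else if k = j then τ else 0 := by
  obtain ⟨i, j, hij, ε₁, ε₂, h₁, h₂, rfl⟩ := h
  refine ⟨i, j, ε₁, ε₂, hij, h₁, h₂, fun k => ?_⟩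
  show ε₁ * stdBasis n i k + ε₂ * stdBasis n j k = _
  rw [std_apply, std_apply]
  rcases eq_or_ne k i with rfl | hki
  · rw [if_pos rfl, if_pos rfl, if_neg hij]; ring
  · rw [if_neg hki, if_neg hki]
    split <;> ring

lemma long_two_nonzero {x : EuclideanSpace ℝ (Fin n)} (h : IsLongRoot n x) :
    ∃ p q : Fin n, p ≠ q ∧ x p ≠ 0 ∧ x q ≠ 0 := by
  obtain ⟨i, j, σ, τ, hij, h₁, h₂, hc⟩ := long_coords h
  refine ⟨i, j, hij, ?_, ?_⟩
  · rw [hc, if_pos rfl]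
    rcases h₁ with rfl | rfl <;> norm_num
  · rw [hc, if_neg hij.symm, if_pos rfl]
    rcases h₂ with rfl | rfl <;> norm_num

lemma short_one_nonzero {x : EuclideanSpace ℝ (Fin n)} (h : IsShortRoot n x)
    {p q : Fin n} (hp : x p ≠ 0) (hq : x q ≠ 0) : p = q := by
  obtain ⟨i, σ, hσ, hc⟩ := short_coords h
  have hpi : p = i := by
    by_contra hne
    exact hp (by rw [hc, if_neg hne])
  have hqi : q = i := by
    by_contra hne
    exact hq (by rw [hc, if_neg hne])
  rw [hpi, hqi]


lemma span_eq_of_pair {P : Submodule ℝ (EuclideanSpace ℝ (Fin n))} (hdim : Module.finrank ℝ P = 2)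
    {u v : EuclideanSpace ℝ (Fin n)} (hu : u ∈ P) (hv : v ∈ P) (hu0 : u ≠ 0)
    (hind : ∀ a : ℝ, a • u ≠ v) : P = Submodule.span ℝ {u, v} := by
  have hli : LinearIndependent ℝ ![u, v] := (LinearIndependent.pair_iff' hu0).2 hind
  have hle : Submodule.span ℝ {u, v} ≤ P := by
    rw [Submodule.span_le]
    rintro x (rfl | rfl)
    · exact hu
    · exact hv
  have hr : Module.finrank ℝ (Submodule.span ℝ {u, v}) = 2 := by
    have := finrank_span_eq_card hli
    rwa [Matrix.range_cons, Matrix.range_cons_empty, Set.singleton_union, Fintype.card_fin] at this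
  exact (Submodule.eq_of_le_of_finrank_eq hle (by rw [hr, hdim])).symm


section Std

/-- the vector a e_i + b e_j -/
noncomputable def v (i j : Fin n) (a b : ℝ) : EuclideanSpace ℝ (Fin n) :=
  a • stdBasis n i + b • stdBasis n j

lemma v_apply (i j : Fin n) (a b : ℝ) (m : Fin n) :
    v i j a b m = a * (if m = i then 1 else 0) + b * (if m = j then 1 else 0) := by
  show a * stdBasis n i m + b * stdBasis n j m = _
  rw [std_apply, std_apply]

variable {i j : Fin n} (hij : i ≠ j)

include hij

lemma v_i (a b : ℝ) : v i j a b i = a := by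
  rw [v_apply, if_pos rfl, if_neg hij]; ring

lemma v_j (a b : ℝ) : v i j a b j = b := by
  rw [v_apply, if_neg hij.symm, if_pos rfl]; ring

omit hij

lemma v_other (a b : ℝ) {m : Fin n} (hmi : m ≠ i) (hmj : m ≠ j) : v i j a b m = 0 := by
  rw [v_apply, if_neg hmi, if_neg hmj]; ring

include hij

lemma v_inj {a b c d : ℝ} (h : v i j a b = v i j c d) : a = c ∧ b = d := by
  constructor
  · rw [← v_i hij a b, h, v_i hij]
  · rw [← v_j hij a b, h, v_j hij]

omit hij

lemma v_mem_span (a b : ℝ) :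
    v i j a b ∈ Submodule.span ℝ {stdBasis n i, stdBasis n j} :=
  Submodule.mem_span_pair.2 ⟨a, b, rfl⟩

include hij

lemma mem_std_span {x : EuclideanSpace ℝ (Fin n)}
    (hx : x ∈ Submodule.span ℝ {stdBasis n i, stdBasis n j}) : x = v i j (x i) (x j) := by
  obtain ⟨a, b, hab⟩ := Submodule.mem_span_pair.1 hx
  have hv : v i j a b = x := hab
  rw [← hv, v_i hij, v_j hij]

lemma v_phi : ∀ p ∈ ({(1,0), (-1,0), (0,1), (0,-1),
    (1,1), (1,-1), (-1,1), (-1,-1)} : Set (ℝ × ℝ)), v i j p.1 p.2 ∈ PhiB n := by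
  rintro ⟨a, b⟩ hp
  simp only [Set.mem_insert_iff, Set.mem_singleton_iff, Prod.mk.injEq] at hp
  rcases hp with ⟨rfl, rfl⟩ | ⟨rfl, rfl⟩ | ⟨rfl, rfl⟩ | ⟨rfl, rfl⟩ |
    ⟨rfl, rfl⟩ | ⟨rfl, rfl⟩ | ⟨rfl, rfl⟩ | ⟨rfl, rfl⟩
  · exact Or.inl ⟨i, Or.inl (by simp [v])⟩
  · exact Or.inl ⟨i, Or.inr (by simp [v])⟩
  · exact Or.inl ⟨j, Or.inl (by simp [v])⟩
  · exact Or.inl ⟨j, Or.inr (by simp [v])⟩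
  · exact Or.inr ⟨i, j, hij, 1, 1, Or.inl rfl, Or.inl rfl, rfl⟩
  · exact Or.inr ⟨i, j, hij, 1, -1, Or.inl rfl, Or.inr rfl, rfl⟩
  · exact Or.inr ⟨i, j, hij, -1, 1, Or.inr rfl, Or.inl rfl, rfl⟩
  · exact Or.inr ⟨i, j, hij, -1, -1, Or.inr rfl, Or.inr rfl, rfl⟩

lemma std_inter {P : Submodule ℝ (EuclideanSpace ℝ (Fin n))}
    (hP : P = Submodule.span ℝ {stdBasis n i, stdBasis n j}) :
    (↑P ∩ PhiB n : Set (EuclideanSpace ℝ (Fin n))) =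
      (fun p : ℝ × ℝ => v i j p.1 p.2) ''
        ({(1,0), (-1,0), (0,1), (0,-1), (1,1), (1,-1), (-1,1), (-1,-1)} : Set (ℝ × ℝ)) := by
  apply Set.eq_of_subset_of_subset
  · rintro x ⟨hxP, hxΦ⟩
    rw [hP] at hxP
    have hxv : x = v i j (x i) (x j) := mem_std_span hij hxP
    have h0 : ∀ m : Fin n, m ≠ i → m ≠ j → x m = 0 := by
      intro m h1 h2
      conv_lhs => rw [hxv]
      exact v_other _ _ h1 h2
    refine ⟨(x i, x j), ?_, hxv.symm⟩
    rcases phi_coords hxΦ with ⟨m, σ, hσ, hc⟩ | ⟨p, q, σ, τ, hpq, hσ, hτ, hc⟩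
    · rcases eq_or_ne m i with hmi | hmi
      · have hxi : x i = σ := by rw [hc, if_pos hmi.symm]
        have hxj : x j = 0 := by rw [hc, if_neg (fun h => hij.symm (h.trans hmi))]
        rw [hxi, hxj]
        rcases hσ with rfl | rfl <;>
          · simp only [Set.mem_insert_iff, Set.mem_singleton_iff, Prod.mk.injEq]
            norm_num
      · rcases eq_or_ne m j with hmj | hmj
        · have hxi : x i = 0 := by rw [hc, if_neg (fun h => hij (h.trans hmj))]
          have hxj : x j = σ := by rw [hc, if_pos hmj.symm]
          rw [hxi, hxj]
          rcases hσ with rfl | rfl <;>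
            · simp only [Set.mem_insert_iff, Set.mem_singleton_iff, Prod.mk.injEq]
              norm_num
        · exfalso
          have := h0 m (fun h => hmi h) (fun h => hmj h)
          rw [hc, if_pos rfl] at this
          rcases hσ with rfl | rfl <;> norm_num at this
    · have hp : p = i ∨ p = j := by
        by_contra h
        push_neg at h
        have := h0 p h.1 h.2
        rw [hc, if_pos rfl] at this
        rcases hσ with rfl | rfl <;> norm_num at this
      have hq : q = i ∨ q = j := by
        by_contra h
        push_neg at h
        have := h0 q h.1 h.2
        rw [hc, if_neg hpq.symm, if_pos rfl] at this
        rcases hτ with rfl | rfl <;> norm_num at this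
      rcases hp with hpi | hpj
      · rcases hq with hqi | hqj
        · exact absurd (hpi.trans hqi.symm) hpq
        · have hxi : x i = σ := by rw [hc, if_pos hpi.symm]
          have hxj : x j = τ := by
            rw [hc, if_neg (fun h => hij.symm (h.trans hpi)), if_pos hqj.symm]
          rw [hxi, hxj]
          rcases hσ with rfl | rfl <;> rcases hτ with rfl | rfl <;>
            · simp only [Set.mem_insert_iff, Set.mem_singleton_iff, Prod.mk.injEq]
              norm_num
      · rcases hq with hqi | hqj
        · have hxi : x i = τ := by
            rw [hc, if_neg (fun h => hij (h.trans hpj)), if_pos hqi.symm]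
          have hxj : x j = σ := by rw [hc, if_pos hpj.symm]
          rw [hxi, hxj]
          rcases hσ with rfl | rfl <;> rcases hτ with rfl | rfl <;>
            · simp only [Set.mem_insert_iff, Set.mem_singleton_iff, Prod.mk.injEq]
              norm_num
        · exact absurd (hpj.trans hqj.symm) hpq
  · rintro x ⟨p, hp, rfl⟩
    exact ⟨by rw [hP]; exact v_mem_span p.1 p.2, v_phi hij p hp⟩

lemma std_long {P : Submodule ℝ (EuclideanSpace ℝ (Fin n))}
    (hP : P = Submodule.span ℝ {stdBasis n i, stdBasis n j}) :
    {x ∈ (↑P ∩ PhiB n : Set (EuclideanSpace ℝ (Fin n))) | IsLongRoot n x} =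
      (fun p : ℝ × ℝ => v i j p.1 p.2) ''
        ({(1,1), (1,-1), (-1,1), (-1,-1)} : Set (ℝ × ℝ)) := by
  apply Set.eq_of_subset_of_subset
  · rintro x ⟨hxR, hxL⟩
    rw [std_inter hij hP] at hxR
    obtain ⟨⟨a, b⟩, hab, hxe⟩ := hxR
    have heq : v i j a b = x := hxe
    have hxi : x i = a := by rw [← heq, v_i hij]
    have hxj : x j = b := by rw [← heq, v_j hij]
    have h0 : ∀ m : Fin n, m ≠ i → m ≠ j → x m = 0 := by
      intro m h1 h2
      rw [← heq]
      exact v_other _ _ h1 h2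
    obtain ⟨p, q, hpq, hxp, hxq⟩ := long_two_nonzero hxL
    have hp : p = i ∨ p = j := by
      by_contra h
      push_neg at h
      exact hxp (h0 p h.1 h.2)
    have hq : q = i ∨ q = j := by
      by_contra h
      push_neg at h
      exact hxq (h0 q h.1 h.2)
    have hare : a ≠ 0 ∧ b ≠ 0 := by
      rcases hp with hpi | hpj
      · rcases hq with hqi | hqj
        · exact absurd (hpi.trans hqi.symm) hpq
        · rw [hpi] at hxp; rw [hqj] at hxq
          rw [hxi] at hxp; rw [hxj] at hxq
          exact ⟨hxp, hxq⟩
      · rcases hq with hqi | hqj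
        · rw [hpj] at hxp; rw [hqi] at hxq
          rw [hxj] at hxp; rw [hxi] at hxq
          exact ⟨hxq, hxp⟩
        · exact absurd (hpj.trans hqj.symm) hpq
    simp only [Set.mem_insert_iff, Set.mem_singleton_iff, Prod.mk.injEq] at hab
    refine ⟨(a, b), ?_, hxe⟩
    simp only [Set.mem_insert_iff, Set.mem_singleton_iff, Prod.mk.injEq]
    rcases hab with ⟨ha, hb⟩ | ⟨ha, hb⟩ | ⟨ha, hb⟩ | ⟨ha, hb⟩ |
      ⟨ha, hb⟩ | ⟨ha, hb⟩ | ⟨ha, hb⟩ | ⟨ha, hb⟩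
    · exact absurd hb hare.2
    · exact absurd hb hare.2
    · exact absurd ha hare.1
    · exact absurd ha hare.1
    · exact Or.inl ⟨ha, hb⟩
    · exact Or.inr (Or.inl ⟨ha, hb⟩)
    · exact Or.inr (Or.inr (Or.inl ⟨ha, hb⟩))
    · exact Or.inr (Or.inr (Or.inr ⟨ha, hb⟩))
  · rintro x ⟨⟨a, b⟩, hab, hxe⟩
    simp only [Set.mem_insert_iff, Set.mem_singleton_iff, Prod.mk.injEq] at hab
    constructor
    · rw [std_inter hij hP]
      refine ⟨(a, b), ?_, hxe⟩
      simp only [Set.mem_insert_iff, Set.mem_singleton_iff, Prod.mk.injEq]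
      tauto
    · rw [← hxe]
      rcases hab with ⟨rfl, rfl⟩ | ⟨rfl, rfl⟩ | ⟨rfl, rfl⟩ | ⟨rfl, rfl⟩
      · exact ⟨i, j, hij, 1, 1, Or.inl rfl, Or.inl rfl, rfl⟩
      · exact ⟨i, j, hij, 1, -1, Or.inl rfl, Or.inr rfl, rfl⟩
      · exact ⟨i, j, hij, -1, 1, Or.inr rfl, Or.inl rfl, rfl⟩
      · exact ⟨i, j, hij, -1, -1, Or.inr rfl, Or.inr rfl, rfl⟩

lemma std_short {P : Submodule ℝ (EuclideanSpace ℝ (Fin n))}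
    (hP : P = Submodule.span ℝ {stdBasis n i, stdBasis n j}) :
    {x ∈ (↑P ∩ PhiB n : Set (EuclideanSpace ℝ (Fin n))) | IsShortRoot n x} =
      (fun p : ℝ × ℝ => v i j p.1 p.2) ''
        ({(1,0), (-1,0), (0,1), (0,-1)} : Set (ℝ × ℝ)) := by
  apply Set.eq_of_subset_of_subset
  · rintro x ⟨hxR, hxS⟩
    rw [std_inter hij hP] at hxR
    obtain ⟨⟨a, b⟩, hab, hxe⟩ := hxR
    have heq : v i j a b = x := hxe
    have hxi : x i = a := by rw [← heq, v_i hij]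
    have hxj : x j = b := by rw [← heq, v_j hij]
    have hor : a = 0 ∨ b = 0 := by
      by_contra h
      push_neg at h
      exact hij (short_one_nonzero hxS (hxi ▸ h.1) (hxj ▸ h.2))
    simp only [Set.mem_insert_iff, Set.mem_singleton_iff, Prod.mk.injEq] at hab
    refine ⟨(a, b), ?_, hxe⟩
    simp only [Set.mem_insert_iff, Set.mem_singleton_iff, Prod.mk.injEq]
    rcases hab with ⟨ha, hb⟩ | ⟨ha, hb⟩ | ⟨ha, hb⟩ | ⟨ha, hb⟩ |
      ⟨ha, hb⟩ | ⟨ha, hb⟩ | ⟨ha, hb⟩ | ⟨ha, hb⟩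
    · exact Or.inl ⟨ha, hb⟩
    · exact Or.inr (Or.inl ⟨ha, hb⟩)
    · exact Or.inr (Or.inr (Or.inl ⟨ha, hb⟩))
    · exact Or.inr (Or.inr (Or.inr ⟨ha, hb⟩))
    all_goals
      exfalso
      rcases hor with h' | h'
      · rw [h'] at ha; exact absurd ha (by norm_num)
      · rw [h'] at hb; exact absurd hb (by norm_num)
  · rintro x ⟨⟨a, b⟩, hab, hxe⟩
    simp only [Set.mem_insert_iff, Set.mem_singleton_iff, Prod.mk.injEq] at hab
    constructor
    · rw [std_inter hij hP]
      refine ⟨(a, b), ?_, hxe⟩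
      simp only [Set.mem_insert_iff, Set.mem_singleton_iff, Prod.mk.injEq]
      tauto
    · rw [← hxe]
      rcases hab with ⟨rfl, rfl⟩ | ⟨rfl, rfl⟩ | ⟨rfl, rfl⟩ | ⟨rfl, rfl⟩
      · exact ⟨i, Or.inl (by simp [v])⟩
      · exact ⟨i, Or.inr (by simp [v])⟩
      · exact ⟨j, Or.inl (by simp [v])⟩
      · exact ⟨j, Or.inr (by simp [v])⟩

lemma std_counts {P : Submodule ℝ (EuclideanSpace ℝ (Fin n))}
    (hP : P = Submodule.span ℝ {stdBasis n i, stdBasis n j}) :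
    (↑P ∩ PhiB n : Set (EuclideanSpace ℝ (Fin n))).ncard = 8 ∧
    {x ∈ (↑P ∩ PhiB n : Set (EuclideanSpace ℝ (Fin n))) | IsLongRoot n x}.ncard = 4 ∧
    {x ∈ (↑P ∩ PhiB n : Set (EuclideanSpace ℝ (Fin n))) | IsShortRoot n x}.ncard = 4 := by
  have hinj : ∀ s : Set (ℝ × ℝ), Set.InjOn (fun p : ℝ × ℝ => v i j p.1 p.2) s := by
    intro s p _ q _ h
    obtain ⟨h1, h2⟩ := v_inj hij h
    exact Prod.ext h1 h2
  refine ⟨?_, ?_, ?_⟩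
  · rw [std_inter hij hP, Set.ncard_image_of_injOn (hinj _)]
    rw [Set.ncard_insert_of_notMem (by simp only [Set.mem_insert_iff, Set.mem_singleton_iff, Prod.mk.injEq]; norm_num),
        Set.ncard_insert_of_notMem (by simp only [Set.mem_insert_iff, Set.mem_singleton_iff, Prod.mk.injEq]; norm_num),
        Set.ncard_insert_of_notMem (by simp only [Set.mem_insert_iff, Set.mem_singleton_iff, Prod.mk.injEq]; norm_num),
        Set.ncard_insert_of_notMem (by simp only [Set.mem_insert_iff, Set.mem_singleton_iff, Prod.mk.injEq]; norm_num),
        Set.ncard_insert_of_notMem (by simp only [Set.mem_insert_iff, Set.mem_singleton_iff, Prod.mk.injEq]; norm_num),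
        Set.ncard_insert_of_notMem (by simp only [Set.mem_insert_iff, Set.mem_singleton_iff, Prod.mk.injEq]; norm_num),
        Set.ncard_insert_of_notMem (by simp only [Set.mem_insert_iff, Set.mem_singleton_iff, Prod.mk.injEq]; norm_num),
        Set.ncard_singleton]
  · rw [std_long hij hP, Set.ncard_image_of_injOn (hinj _)]
    rw [Set.ncard_insert_of_notMem (by simp only [Set.mem_insert_iff, Set.mem_singleton_iff, Prod.mk.injEq]; norm_num),
        Set.ncard_insert_of_notMem (by simp only [Set.mem_insert_iff, Set.mem_singleton_iff, Prod.mk.injEq]; norm_num),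
        Set.ncard_insert_of_notMem (by simp only [Set.mem_insert_iff, Set.mem_singleton_iff, Prod.mk.injEq]; norm_num),
        Set.ncard_singleton]
  · rw [std_short hij hP, Set.ncard_image_of_injOn (hinj _)]
    rw [Set.ncard_insert_of_notMem (by simp only [Set.mem_insert_iff, Set.mem_singleton_iff, Prod.mk.injEq]; norm_num),
        Set.ncard_insert_of_notMem (by simp only [Set.mem_insert_iff, Set.mem_singleton_iff, Prod.mk.injEq]; norm_num),
        Set.ncard_insert_of_notMem (by simp only [Set.mem_insert_iff, Set.mem_singleton_iff, Prod.mk.injEq]; norm_num),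
        Set.ncard_singleton]

end Std

lemma ncard_le_two' {γ : Type*} {s : Set γ} {a b : γ} (h : s ⊆ {a, b}) : s.ncard ≤ 2 := by
  have h0 := Set.ncard_le_ncard h (Set.toFinite _)
  have h1 : ({a, b} : Set γ).ncard ≤ ({b} : Set γ).ncard + 1 := Set.ncard_insert_le _ _
  have h2 : ({b} : Set γ).ncard = 1 := Set.ncard_singleton _
  omega

lemma ncard_le_four' {γ : Type*} {s : Set γ} {a b c d : γ} (h : s ⊆ {a, b, c, d}) :
    s.ncard ≤ 4 := by
  have h0 := Set.ncard_le_ncard h (Set.toFinite _)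
  have h1 : ({a, b, c, d} : Set γ).ncard ≤ ({b, c, d} : Set γ).ncard + 1 :=
    Set.ncard_insert_le _ _
  have h2 : ({b, c, d} : Set γ).ncard ≤ ({c, d} : Set γ).ncard + 1 := Set.ncard_insert_le _ _
  have h3 : ({c, d} : Set γ).ncard ≤ ({d} : Set γ).ncard + 1 := Set.ncard_insert_le _ _
  have h4 : ({d} : Set γ).ncard = 1 := Set.ncard_singleton _
  omega

lemma ncard_le_six' {γ : Type*} {s : Set γ} {a b c d e f : γ} (h : s ⊆ {a, b, c, d, e, f}) :
    s.ncard ≤ 6 := by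
  have h0 := Set.ncard_le_ncard h (Set.toFinite _)
  have h1 : ({a, b, c, d, e, f} : Set γ).ncard ≤ ({b, c, d, e, f} : Set γ).ncard + 1 :=
    Set.ncard_insert_le _ _
  have h2 : ({b, c, d, e, f} : Set γ).ncard ≤ ({c, d, e, f} : Set γ).ncard + 1 :=
    Set.ncard_insert_le _ _
  have h3 : ({c, d, e, f} : Set γ).ncard ≤ ({d, e, f} : Set γ).ncard + 1 :=
    Set.ncard_insert_le _ _
  have h4 : ({d, e, f} : Set γ).ncard ≤ ({e, f} : Set γ).ncard + 1 := Set.ncard_insert_le _ _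
  have h5 : ({e, f} : Set γ).ncard ≤ ({f} : Set γ).ncard + 1 := Set.ncard_insert_le _ _
  have h6 : ({f} : Set γ).ncard = 1 := Set.ncard_singleton _
  omega

lemma std_ne_zero (i : Fin n) : stdBasis n i ≠ 0 :=
  ne_of_coord i (by rw [std_apply, if_pos rfl]; exact one_ne_zero)

lemma standard_of_mem {P : Submodule ℝ (EuclideanSpace ℝ (Fin n))}
    (hdim : Module.finrank ℝ P = 2) {i j : Fin n} (hij : i ≠ j)
    (hi : stdBasis n i ∈ P) (hj : stdBasis n j ∈ P) :
    P = Submodule.span ℝ {stdBasis n i, stdBasis n j} := by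
  refine span_eq_of_pair hdim hi hj (std_ne_zero i) (fun a h => ?_)
  have : stdBasis n j j = a * stdBasis n i j := by rw [← h]; rfl
  rw [std_apply, std_apply, if_pos rfl, if_neg hij.symm] at this
  norm_num at this

lemma ite_swap {f : EuclideanSpace ℝ (Fin n)} {i j : Fin n} (hij : i ≠ j) {a b : ℝ}
    (h : ∀ m, f m = if m = i then a else if m = j then b else 0) :
    ∀ m, f m = if m = j then b else if m = i then a else 0 := by
  intro m
  rw [h m]
  rcases eq_or_ne m i with rfl | h1
  · rw [if_pos rfl, if_neg hij, if_pos rfl]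
  · rw [if_neg h1, if_neg h1]

lemma resolve_short {P : Submodule ℝ (EuclideanSpace ℝ (Fin n))}
    (hdim : Module.finrank ℝ P = 2)
    (hR8 : 8 ≤ (↑P ∩ PhiB n : Set (EuclideanSpace ℝ (Fin n))).ncard)
    {α β : EuclideanSpace ℝ (Fin n)} (hαP : α ∈ P) (hαΦ : α ∈ PhiB n)
    (hβP : β ∈ P) (hβΦ : β ∈ PhiB n)
    {i : Fin n} {σ : ℝ} (hσ : σ = 1 ∨ σ = -1) (hA : ∀ m, α m = if m = i then σ else 0)
    (hne1 : β ≠ α) (hne2 : β ≠ -α) (hspan : P = Submodule.span ℝ {α, β}) :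
    ∃ p q : Fin n, p ≠ q ∧ P = Submodule.span ℝ {stdBasis n p, stdBasis n q} := by
  have hi : stdBasis n i ∈ P := by
    have he : stdBasis n i = σ • α := by
      refine PiLp.ext fun m => ?_
      show stdBasis n i m = σ * α m
      rw [std_apply, hA]
      split_ifs <;> rcases hσ with rfl | rfl <;> ring
    rw [he]
    exact Submodule.smul_mem P σ hαP
  rcases phi_coords hβΦ with ⟨q, τ, hτ, hB⟩ | ⟨p, q, τ₁, τ₂, hpq, hτ₁, hτ₂, hB⟩
  · -- β is short, supported at q
    have hqi : q ≠ i := by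
      rintro rfl
      have hβα : β = α ∨ β = -α := by
        rcases hσ with rfl | rfl <;> rcases hτ with rfl | rfl
        · exact Or.inl (PiLp.ext fun m => by rw [hB, hA])
        · refine Or.inr (PiLp.ext fun m => ?_)
          show β m = -(α m)
          rw [hB, hA]; split_ifs <;> ring
        · refine Or.inr (PiLp.ext fun m => ?_)
          show β m = -(α m)
          rw [hB, hA]; split_ifs <;> ring
        · exact Or.inl (PiLp.ext fun m => by rw [hB, hA])
      rcases hβα with h | h
      · exact hne1 h
      · exact hne2 h
    have hq : stdBasis n q ∈ P := by
      have he : stdBasis n q = τ • β := by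
        refine PiLp.ext fun m => ?_
        show stdBasis n q m = τ * β m
        rw [std_apply, hB]
        split_ifs <;> rcases hτ with rfl | rfl <;> ring
      rw [he]
      exact Submodule.smul_mem P τ hβP
    exact ⟨i, q, hqi.symm, standard_of_mem hdim hqi.symm hi hq⟩
  · -- β is long, supported at {p, q}
    rcases eq_or_ne p i with rfl | hpi
    · -- shared coordinate p = i : stdBasis q ∈ P
      have hq : stdBasis n q ∈ P := by
        have he : stdBasis n q = τ₂ • β + (-(τ₂ * τ₁)) • stdBasis n p := by
          refine PiLp.ext fun m => ?_
          show stdBasis n q m = τ₂ * β m + (-(τ₂ * τ₁)) * stdBasis n p m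
          rw [std_apply, hB, std_apply]
          rcases eq_or_ne m p with rfl | hmp
          · rw [if_pos rfl, if_pos rfl, if_neg hpq]
            ring
          · rw [if_neg hmp, if_neg hmp]
            rcases eq_or_ne m q with rfl | hmq
            · rw [if_pos rfl, if_pos rfl]
              rcases hτ₂ with rfl | rfl <;> ring
            · rw [if_neg hmq, if_neg hmq]
              ring
        rw [he]
        exact Submodule.add_mem P (Submodule.smul_mem P _ hβP) (Submodule.smul_mem P _ hi)
      exact ⟨p, q, hpq, standard_of_mem hdim hpq hi hq⟩
    · rcases eq_or_ne q i with rfl | hqi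
      · -- shared coordinate q = i : stdBasis p ∈ P
        have hp : stdBasis n p ∈ P := by
          have he : stdBasis n p = τ₁ • β + (-(τ₁ * τ₂)) • stdBasis n q := by
            refine PiLp.ext fun m => ?_
            show stdBasis n p m = τ₁ * β m + (-(τ₁ * τ₂)) * stdBasis n q m
            rw [std_apply, hB, std_apply]
            rcases eq_or_ne m p with rfl | hmp
            · rw [if_pos rfl, if_pos rfl, if_neg hpq]
              rcases hτ₁ with rfl | rfl <;> ring
            · rw [if_neg hmp, if_neg hmp]
              rcases eq_or_ne m q with rfl | hmq
              · rw [if_pos rfl, if_pos rfl]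
                ring
              · rw [if_neg hmq, if_neg hmq]
                ring
          rw [he]
          exact Submodule.add_mem P (Submodule.smul_mem P _ hβP) (Submodule.smul_mem P _ hi)
        exact ⟨p, q, hpq, standard_of_mem hdim hpq hp hi⟩
      · -- disjoint supports : contradiction
        exfalso
        have hsub := subset_short_long_disjoint hαΦ hβΦ (Ne.symm hpi) (Ne.symm hqi) hpq
          hσ hA hB hτ₁ hτ₂ hspan
        have := ncard_le_four' hsub
        omega

lemma short_of_same_support {P : Submodule ℝ (EuclideanSpace ℝ (Fin n))}
    {α β : EuclideanSpace ℝ (Fin n)} (hαP : α ∈ P) (hβP : β ∈ P)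
    {i j : Fin n} (hij : i ≠ j) {σ₁ σ₂ τ₁ τ₂ : ℝ}
    (hσ₁ : σ₁ = 1 ∨ σ₁ = -1) (hσ₂ : σ₂ = 1 ∨ σ₂ = -1)
    (hτ₁ : τ₁ = 1 ∨ τ₁ = -1) (hτ₂ : τ₂ = 1 ∨ τ₂ = -1)
    (hA : ∀ m, α m = if m = i then σ₁ else if m = j then σ₂ else 0)
    (hB : ∀ m, β m = if m = i then τ₁ else if m = j then τ₂ else 0)
    (hne1 : β ≠ α) (hne2 : β ≠ -α) :
    stdBasis n i ∈ P ∨ stdBasis n j ∈ P := by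
  have ht1 : τ₁ = σ₁ ∨ τ₁ = -σ₁ := by
    rcases hσ₁ with rfl | rfl <;> rcases hτ₁ with rfl | rfl <;> norm_num
  have ht2 : τ₂ = σ₂ ∨ τ₂ = -σ₂ := by
    rcases hσ₂ with rfl | rfl <;> rcases hτ₂ with rfl | rfl <;> norm_num
  rcases ht1 with h1 | h1 <;> rcases ht2 with h2 | h2
  · exact absurd (PiLp.ext fun m => by rw [hB, hA, h1, h2]) hne1
  · -- τ₁ = σ₁, τ₂ = -σ₂ : α + β = 2 σ₁ e_i
    left
    have he : stdBasis n i = (σ₁ * (1/2)) • (α + β) := by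
      refine PiLp.ext fun m => ?_
      show stdBasis n i m = σ₁ * (1/2) * (α m + β m)
      rw [std_apply, hA, hB, h1, h2]
      split_ifs <;> rcases hσ₁ with rfl | rfl <;> ring
    rw [he]
    exact Submodule.smul_mem P _ (Submodule.add_mem P hαP hβP)
  · -- τ₁ = -σ₁, τ₂ = σ₂ : α + β = 2 σ₂ e_j
    right
    have he : stdBasis n j = (σ₂ * (1/2)) • (α + β) := by
      refine PiLp.ext fun m => ?_
      show stdBasis n j m = σ₂ * (1/2) * (α m + β m)
      rw [std_apply, hA, hB, h1, h2]
      rcases eq_or_ne m i with rfl | hmi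
      · rw [if_neg hij, if_pos rfl, if_pos rfl]
        ring
      · rw [if_neg hmi, if_neg hmi]
        rcases eq_or_ne m j with rfl | hmj
        · simp only [if_pos rfl]
          rcases hσ₂ with rfl | rfl <;> norm_num
        · simp only [if_neg hmj]
          ring
    rw [he]
    exact Submodule.smul_mem P _ (Submodule.add_mem P hαP hβP)
  · refine absurd (PiLp.ext fun m => ?_) hne2
    show β m = -(α m)
    rw [hB, hA, h1, h2]
    split_ifs <;> ring

/-- finish when a standard basis vector and a root not proportional to it lie in `P` -/
lemma resolve_long_with_short {P : Submodule ℝ (EuclideanSpace ℝ (Fin n))}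
    (hdim : Module.finrank ℝ P = 2)
    (hR8 : 8 ≤ (↑P ∩ PhiB n : Set (EuclideanSpace ℝ (Fin n))).ncard)
    {α : EuclideanSpace ℝ (Fin n)} (hαP : α ∈ P) (hαΦ : α ∈ PhiB n)
    {s t : Fin n} (hts : t ≠ s) {c : ℝ} (hc : c = 1 ∨ c = -1) (hαt : α t = c)
    (hs : stdBasis n s ∈ P) :
    ∃ p q : Fin n, p ≠ q ∧ P = Submodule.span ℝ {stdBasis n p, stdBasis n q} := by
  have hc0 : c ≠ 0 := by rcases hc with rfl | rfl <;> norm_num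
  have hst0 : stdBasis n s t = 0 := by rw [std_apply, if_neg hts]
  have hne1 : α ≠ stdBasis n s := fun h => hc0 (by rw [← hαt, h, hst0])
  have hne2 : α ≠ -stdBasis n s := fun h => by
    have : α t = -(stdBasis n s t) := by rw [h]; rfl
    rw [hαt, hst0] at this
    exact hc0 (by rw [this]; ring)
  have hspan : P = Submodule.span ℝ {stdBasis n s, α} := by
    refine span_eq_of_pair hdim hs hαP (std_ne_zero s) (fun a h => ?_)
    have : α t = a * stdBasis n s t := by rw [← h]; rfl
    rw [hαt, hst0] at this
    exact hc0 (by rw [this]; ring)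
  exact resolve_short hdim hR8 hs (Or.inl ⟨s, Or.inl rfl⟩) hαP hαΦ (Or.inl rfl)
    (fun m => std_apply s m) hne1 hne2 hspan

end Aux

open Aux in
/-- A plane in `ℝ^n` containing at least 8 roots of `Φ_{B_n}` is standard (spanned by two
standard basis vectors) and contains exactly 8 roots, 4 long and 4 short. -/
theorem stmt3 (n : ℕ) (hn : 2 ≤ n) (P : Submodule ℝ (EuclideanSpace ℝ (Fin n)))
    (hdim : Module.finrank ℝ P = 2)
    (hroots : 8 ≤ ((P : Set (EuclideanSpace ℝ (Fin n))) ∩ PhiB n).ncard) :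
    (∃ i j : Fin n, i ≠ j ∧ P = Submodule.span ℝ {stdBasis n i, stdBasis n j}) ∧
    ((P : Set (EuclideanSpace ℝ (Fin n))) ∩ PhiB n).ncard = 8 ∧
    {x ∈ (P : Set (EuclideanSpace ℝ (Fin n))) ∩ PhiB n | IsLongRoot n x}.ncard = 4 ∧
    {x ∈ (P : Set (EuclideanSpace ℝ (Fin n))) ∩ PhiB n | IsShortRoot n x}.ncard = 4 := by
  have hstd : ∃ p q : Fin n, p ≠ q ∧ P = Submodule.span ℝ {stdBasis n p, stdBasis n q} := by
    obtain ⟨α, hαP, hαΦ⟩ : ((P : Set (EuclideanSpace ℝ (Fin n))) ∩ PhiB n).Nonempty :=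
      Set.nonempty_of_ncard_ne_zero (by omega)
    obtain ⟨β, hβmem, hne1, hne2⟩ :
        ∃ β ∈ (P : Set (EuclideanSpace ℝ (Fin n))) ∩ PhiB n, β ≠ α ∧ β ≠ -α := by
      by_contra h
      push_neg at h
      have hsub : ((P : Set (EuclideanSpace ℝ (Fin n))) ∩ PhiB n) ⊆ {α, -α} := by
        intro x hx
        by_cases hxα : x = α
        · exact Or.inl hxα
        · exact Or.inr (h x hx hxα)
      have := ncard_le_two' hsub
      omega
    obtain ⟨hβP, hβΦ⟩ := hβmem
    have hspan : P = Submodule.span ℝ {α, β} :=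
      span_eq_of_pair hdim hαP hβP (phi_ne_zero hαΦ) (fun a hsm => by
        rcases phi_smul hαΦ hβΦ hsm.symm with h' | h'
        · exact hne1 h'
        · exact hne2 h')
    rcases phi_coords hαΦ with ⟨i, σ, hσ, hA⟩ | ⟨i, j, σ₁, σ₂, hij, hσ₁, hσ₂, hA⟩
    · exact resolve_short hdim hroots hαP hαΦ hβP hβΦ hσ hA hne1 hne2 hspan
    · rcases phi_coords hβΦ with ⟨k, τ, hτ, hB⟩ | ⟨k, l, τ₁, τ₂, hkl, hτ₁, hτ₂, hB⟩
      · -- β short : swap the roles of α and β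
        have hspan' : P = Submodule.span ℝ {β, α} := by rw [hspan, Set.pair_comm]
        refine resolve_short hdim hroots hβP hβΦ hαP hαΦ hτ hB (Ne.symm hne1) ?_ hspan'
        intro h
        exact hne2 (by rw [← neg_neg β, ← h])
      · -- both long
        have hαi : α i = σ₁ := by rw [hA, if_pos rfl]
        have hαj : α j = σ₂ := by rw [hA, if_neg hij.symm, if_pos rfl]
        by_cases hki : k = i
        · rw [hki] at hB hkl
          by_cases hlj : l = j
          · -- same support {i, j}
            rw [hlj] at hB
            rcases short_of_same_support hαP hβP hij hσ₁ hσ₂ hτ₁ hτ₂ hA hB hne1 hne2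
              with he | he
            · exact resolve_long_with_short hdim hroots hαP hαΦ hij.symm hσ₂ hαj he
            · exact resolve_long_with_short hdim hroots hαP hαΦ hij hσ₁ hαi he
          · -- shared coordinate i
            exfalso
            have hA' := ite_swap hij hA
            have hB' := ite_swap hkl hB
            have hsub := subset_long_long_shared hαΦ hβΦ
              (fun h => hlj (h.symm ▸ rfl) : j ≠ l) hij.symm (Ne.symm hkl)
              hσ₂ hσ₁ hτ₂ hτ₁ hA' hB' hspan
            have := ncard_le_six' hsub
            omega
        · by_cases hkj : k = j
          · rw [hkj] at hB hkl
            by_cases hli : l = i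
            · -- same support, swapped orientation
              rw [hli] at hB hkl
              have hB' := ite_swap hkl hB
              rcases short_of_same_support hαP hβP hij hσ₁ hσ₂ hτ₂ hτ₁ hA hB' hne1 hne2
                with he | he
              · exact resolve_long_with_short hdim hroots hαP hαΦ hij.symm hσ₂ hαj he
              · exact resolve_long_with_short hdim hroots hαP hαΦ hij hσ₁ hαi he
            · -- shared coordinate j
              exfalso
              have hB' := ite_swap hkl hB
              have hsub := subset_long_long_shared hαΦ hβΦ
                (fun h => hli (h.symm ▸ rfl) : i ≠ l) hij (Ne.symm hkl)
                hσ₁ hσ₂ hτ₂ hτ₁ hA hB' hspan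
              have := ncard_le_six' hsub
              omega
          · by_cases hli : l = i
            · -- shared coordinate i, β in (k, i) form already
              exfalso
              rw [hli] at hB hkl
              have hA' := ite_swap hij hA
              have hsub := subset_long_long_shared hαΦ hβΦ
                (fun h => hkj h.symm : j ≠ k) hij.symm hkl
                hσ₂ hσ₁ hτ₁ hτ₂ hA' hB hspan
              have := ncard_le_six' hsub
              omega
            · by_cases hlj : l = j
              · -- shared coordinate j, β in (k, j) form already
                exfalso
                rw [hlj] at hB hkl
                have hsub := subset_long_long_shared hαΦ hβΦ
                  (fun h => hki h.symm : i ≠ k) hij hkl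
                  hσ₁ hσ₂ hτ₁ hτ₂ hA hB hspan
                have := ncard_le_six' hsub
                omega
              · -- disjoint supports
                exfalso
                have hsub := subset_long_long_disjoint hαΦ hβΦ
                  (fun h => hki h.symm) (fun h => hli h.symm)
                  (fun h => hkj h.symm) (fun h => hlj h.symm) hkl
                  hσ₁ hA hB hτ₁ hτ₂ hspan
                have := ncard_le_four' hsub
                omega
  obtain ⟨p, q, hpq, hPs⟩ := hstd
  obtain ⟨h1, h2, h3⟩ := std_counts hpq hPs
  exact ⟨⟨p, q, hpq, hPs⟩, h1, h2, h3⟩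
end

section
/- Let n ≥ 3 and let Q be a 3-dimensional linear subspace of ℝ^n containing at least 12 long roots of Φ_{B_n}. Then either Q is standard, or there exist four distinct indices i, j, l, s in {1, …, n} and signs δ_1, δ_2, δ_3 ∈ {+1, −1} such that Q is the orthogonal complement of the vector v = e_i + δ_1 e_j + δ_2 e_l + δ_3 e_s inside the 4-dimensional standard subspace U spanned by {e_i, e_j, e_l, e_s}. -/
set_option maxHeartbeats 1000000


open Module Set Submodule

namespace Stmt4Aux

variable {n : ℕ}

/-- The vector attached to an (ordered) signed edge. -/
noncomputable def vec (n : ℕ) (t : Fin n × Fin n × ℝ) : EuclideanSpace ℝ (Fin n) :=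
  stdBasis n t.1 + t.2.2 • stdBasis n t.2.1

/-- Vertex-disjointness of two edges. -/
def Dis (t s : Fin n × Fin n × ℝ) : Prop :=
  t.1 ≠ s.1 ∧ t.1 ≠ s.2.1 ∧ t.2.1 ≠ s.1 ∧ t.2.1 ≠ s.2.1

lemma triple_ext {t s : Fin n × Fin n × ℝ} (h1 : t.1 = s.1) (h2 : t.2.1 = s.2.1)
    (h3 : t.2.2 = s.2.2) : t = s := by
  obtain ⟨a, b, c⟩ := t
  obtain ⟨d, e, f⟩ := s
  simp_all

lemma std_apply (i j : Fin n) : stdBasis n i j = if j = i then (1:ℝ) else 0 := by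
  simp [stdBasis, EuclideanSpace.single_apply]

lemma comb_apply (p q x : Fin n) (ε : ℝ) :
    (stdBasis n p + ε • stdBasis n q) x
      = (if x = p then (1:ℝ) else 0) + ε * (if x = q then (1:ℝ) else 0) := by
  rw [PiLp.add_apply, PiLp.smul_apply, std_apply, std_apply, smul_eq_mul]

lemma comb_zero {p q x : Fin n} (ε : ℝ) (h1 : x ≠ p) (h2 : x ≠ q) :
    (stdBasis n p + ε • stdBasis n q) x = 0 := by
  rw [comb_apply]; simp [h1, h2]

lemma comb_nonzero {p q x : Fin n} {ε : ℝ} (hpq : p ≠ q) (hε : ε = 1 ∨ ε = -1)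
    (hx : x = p ∨ x = q) : (stdBasis n p + ε • stdBasis n q) x ≠ 0 := by
  rcases hx with rfl | rfl
  · rw [comb_apply]; simp [hpq]
  · rw [comb_apply]
    have : ¬ (x = p) := fun h => hpq (h ▸ rfl)
    rcases hε with rfl | rfl <;> simp [this]

lemma vec_zero {t : Fin n × Fin n × ℝ} {x : Fin n} (h1 : x ≠ t.1) (h2 : x ≠ t.2.1) :
    vec n t x = 0 := comb_zero _ h1 h2

lemma vec_nonzero {t : Fin n × Fin n × ℝ} {x : Fin n} (hlt : t.1 < t.2.1)
    (hs : t.2.2 = 1 ∨ t.2.2 = -1) (hx : x = t.1 ∨ x = t.2.1) : vec n t x ≠ 0 :=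
  comb_nonzero (ne_of_lt hlt) hs hx

lemma inner_std_left (p : Fin n) (w : EuclideanSpace ℝ (Fin n)) :
    (inner ℝ (stdBasis n p) w : ℝ) = w p := by
  simp [stdBasis, EuclideanSpace.inner_single_left]

lemma dis_vertex {x : Fin n} {ta tb : Fin n × Fin n × ℝ} (hd : Dis ta tb)
    (hx : x = ta.1 ∨ x = ta.2.1) : x ≠ tb.1 ∧ x ≠ tb.2.1 := by
  rcases hx with rfl | rfl
  · exact ⟨hd.1, hd.2.1⟩
  · exact ⟨hd.2.2.1, hd.2.2.2⟩

lemma liTriangular4 (v : Fin 4 → EuclideanSpace ℝ (Fin n)) (m : Fin 4 → Fin n)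
    (hdiag : ∀ k, v k (m k) ≠ 0) (htri : ∀ k l : Fin 4, k < l → v l (m k) = 0) :
    LinearIndependent ℝ v := by
  rw [Fintype.linearIndependent_iff]
  intro g hg
  have key : ∀ x : Fin n,
      g 0 * v 0 x + g 1 * v 1 x + g 2 * v 2 x + g 3 * v 3 x = 0 := by
    intro x
    have h := congrArg (fun f : EuclideanSpace ℝ (Fin n) => f x) hg
    simp only [Fin.sum_univ_four] at h
    simpa [PiLp.add_apply, PiLp.smul_apply, PiLp.zero_apply, smul_eq_mul] using h
  have h0 : g 0 = 0 := by
    have h := key (m 0)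
    rw [htri 0 1 (by decide), htri 0 2 (by decide), htri 0 3 (by decide)] at h
    simp only [mul_zero, zero_mul, add_zero, zero_add] at h
    rcases mul_eq_zero.mp h with h' | h'
    · exact h'
    · exact absurd h' (hdiag 0)
  have h1 : g 1 = 0 := by
    have h := key (m 1)
    rw [htri 1 2 (by decide), htri 1 3 (by decide), h0] at h
    simp only [mul_zero, zero_mul, add_zero, zero_add] at h
    rcases mul_eq_zero.mp h with h' | h'
    · exact h'
    · exact absurd h' (hdiag 1)
  have h2 : g 2 = 0 := by
    have h := key (m 2)
    rw [htri 2 3 (by decide), h0, h1] at h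
    simp only [mul_zero, zero_mul, add_zero, zero_add] at h
    rcases mul_eq_zero.mp h with h' | h'
    · exact h'
    · exact absurd h' (hdiag 2)
  have h3 : g 3 = 0 := by
    have h := key (m 3)
    rw [h0, h1, h2] at h
    simp only [mul_zero, zero_mul, add_zero, zero_add] at h
    rcases mul_eq_zero.mp h with h' | h'
    · exact h'
    · exact absurd h' (hdiag 3)
  intro i; fin_cases i <;> assumption

lemma liTriangular3 (v : Fin 3 → EuclideanSpace ℝ (Fin n)) (m : Fin 3 → Fin n)
    (hdiag : ∀ k, v k (m k) ≠ 0) (htri : ∀ k l : Fin 3, k < l → v l (m k) = 0) :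
    LinearIndependent ℝ v := by
  rw [Fintype.linearIndependent_iff]
  intro g hg
  have key : ∀ x : Fin n, g 0 * v 0 x + g 1 * v 1 x + g 2 * v 2 x = 0 := by
    intro x
    have h := congrArg (fun f : EuclideanSpace ℝ (Fin n) => f x) hg
    simp only [Fin.sum_univ_three] at h
    simpa [PiLp.add_apply, PiLp.smul_apply, PiLp.zero_apply, smul_eq_mul] using h
  have h0 : g 0 = 0 := by
    have h := key (m 0)
    rw [htri 0 1 (by decide), htri 0 2 (by decide)] at h
    simp only [mul_zero, zero_mul, add_zero, zero_add] at h
    rcases mul_eq_zero.mp h with h' | h'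
    · exact h'
    · exact absurd h' (hdiag 0)
  have h1 : g 1 = 0 := by
    have h := key (m 1)
    rw [htri 1 2 (by decide), h0] at h
    simp only [mul_zero, zero_mul, add_zero, zero_add] at h
    rcases mul_eq_zero.mp h with h' | h'
    · exact h'
    · exact absurd h' (hdiag 1)
  have h2 : g 2 = 0 := by
    have h := key (m 2)
    rw [h0, h1] at h
    simp only [mul_zero, zero_mul, add_zero, zero_add] at h
    rcases mul_eq_zero.mp h with h' | h'
    · exact h'
    · exact absurd h' (hdiag 2)
  intro i; fin_cases i <;> assumption

lemma indep4_false (Q : Submodule ℝ (EuclideanSpace ℝ (Fin n))) (hdim : finrank ℝ Q = 3)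
    (v : Fin 4 → EuclideanSpace ℝ (Fin n)) (hv : ∀ k, v k ∈ Q) (m : Fin 4 → Fin n)
    (hdiag : ∀ k, v k (m k) ≠ 0) (htri : ∀ k l : Fin 4, k < l → v l (m k) = 0) : False := by
  have hli := liTriangular4 v m hdiag htri
  have hli2 : LinearIndependent ℝ (fun k => (⟨v k, hv k⟩ : Q)) :=
    LinearIndependent.of_comp Q.subtype hli
  have := hli2.fintype_card_le_finrank
  rw [hdim] at this
  simp at this

lemma span3_eq (Q : Submodule ℝ (EuclideanSpace ℝ (Fin n))) (hdim : finrank ℝ Q = 3)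
    (v : Fin 3 → EuclideanSpace ℝ (Fin n)) (hv : ∀ k, v k ∈ Q) (m : Fin 3 → Fin n)
    (hdiag : ∀ k, v k (m k) ≠ 0) (htri : ∀ k l : Fin 3, k < l → v l (m k) = 0) :
    Q = span ℝ {v 0, v 1, v 2} := by
  have hli := liTriangular3 v m hdiag htri
  have hrange : Set.range v = {v 0, v 1, v 2} := by
    ext x
    constructor
    · rintro ⟨k, rfl⟩; fin_cases k <;> simp
    · intro hx
      simp only [Set.mem_insert_iff, Set.mem_singleton_iff] at hx
      rcases hx with rfl | rfl | rfl
      exacts [⟨0, rfl⟩, ⟨1, rfl⟩, ⟨2, rfl⟩]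
  have h3 : finrank ℝ (span ℝ ({v 0, v 1, v 2} : Set (EuclideanSpace ℝ (Fin n)))) = 3 := by
    rw [← hrange]
    simpa using finrank_span_eq_card hli
  refine (Submodule.eq_of_le_of_finrank_le ?_ ?_).symm
  · rw [span_le]
    intro x hx
    simp only [Set.mem_insert_iff, Set.mem_singleton_iff] at hx
    rcases hx with rfl | rfl | rfl
    exacts [hv 0, hv 1, hv 2]
  · rw [hdim, h3]

lemma std3 (Q : Submodule ℝ (EuclideanSpace ℝ (Fin n))) (hdim : finrank ℝ Q = 3)
    (i j k : Fin n) (hij : i ≠ j) (hik : i ≠ k) (hjk : j ≠ k)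
    (hi : stdBasis n i ∈ Q) (hj : stdBasis n j ∈ Q) (hk : stdBasis n k ∈ Q) :
    ∃ S : Set (Fin n), Q = span ℝ (stdBasis n '' S) := by
  refine ⟨{i, j, k}, ?_⟩
  have himg : stdBasis n '' {i, j, k} = {stdBasis n i, stdBasis n j, stdBasis n k} := by
    simp [Set.image_insert_eq]
  rw [himg]
  have h := span3_eq Q hdim ![stdBasis n i, stdBasis n j, stdBasis n k]
    (by intro kk; fin_cases kk <;> assumption) ![i, j, k]
    (by intro kk; fin_cases kk <;> simp [std_apply])
    (by
      intro a b hab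
      fin_cases a <;> fin_cases b <;>
        first
          | exact absurd hab (by decide)
          | simp [std_apply, hij, hik, hjk, Ne.symm hij, Ne.symm hik, Ne.symm hjk])
  simpa using h

lemma prop_mem (Q : Submodule ℝ (EuclideanSpace ℝ (Fin n))) {p q : Fin n} {ε : ℝ}
    (hε : ε = 1 ∨ ε = -1) (hv : stdBasis n p + ε • stdBasis n q ∈ Q)
    (hp : stdBasis n p ∈ Q) : stdBasis n q ∈ Q := by
  have h := Q.sub_mem hv hp
  rw [add_sub_cancel_left] at h
  rcases hε with rfl | rfl
  · simpa using h
  · have h2 := Q.neg_mem h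
    simpa using h2

lemma double_mem (Q : Submodule ℝ (EuclideanSpace ℝ (Fin n))) {p q : Fin n} {ε η : ℝ}
    (hne : ε ≠ η) (hε : ε = 1 ∨ ε = -1) (hη : η = 1 ∨ η = -1)
    (h1 : stdBasis n p + ε • stdBasis n q ∈ Q) (h2 : stdBasis n p + η • stdBasis n q ∈ Q) :
    stdBasis n p ∈ Q ∧ stdBasis n q ∈ Q := by
  have key : ∀ u w : EuclideanSpace ℝ (Fin n),
      u = stdBasis n p + (1:ℝ) • stdBasis n q → w = stdBasis n p + (-1:ℝ) • stdBasis n q →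
      u ∈ Q → w ∈ Q → stdBasis n p ∈ Q ∧ stdBasis n q ∈ Q := by
    rintro u w rfl rfl hu hw
    constructor
    · have hp : stdBasis n p = (2⁻¹:ℝ) • ((stdBasis n p + (1:ℝ) • stdBasis n q) +
          (stdBasis n p + (-1:ℝ) • stdBasis n q)) := by module
      rw [hp]; exact Q.smul_mem _ (Q.add_mem hu hw)
    · have hq : stdBasis n q = (2⁻¹:ℝ) • ((stdBasis n p + (1:ℝ) • stdBasis n q) -
          (stdBasis n p + (-1:ℝ) • stdBasis n q)) := by module
      rw [hq]; exact Q.smul_mem _ (Q.sub_mem hu hw)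
  rcases hε with rfl | rfl <;> rcases hη with rfl | rfl
  · exact absurd rfl hne
  · exact key _ _ rfl rfl h1 h2
  · exact key _ _ rfl rfl h2 h1
  · exact absurd rfl hne

lemma orient {Q : Submodule ℝ (EuclideanSpace ℝ (Fin n))} {t : Fin n × Fin n × ℝ}
    (hts : t.2.2 = 1 ∨ t.2.2 = -1) (htm : vec n t ∈ Q) {v : Fin n}
    (hv : v = t.1 ∨ v = t.2.1) :
    ∃ (u : Fin n) (ε : ℝ), (ε = 1 ∨ ε = -1) ∧ stdBasis n v + ε • stdBasis n u ∈ Q ∧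
      ((t.1 = v ∧ t.2.1 = u) ∨ (t.1 = u ∧ t.2.1 = v)) := by
  rcases hv with rfl | rfl
  · exact ⟨t.2.1, t.2.2, hts, htm, Or.inl ⟨rfl, rfl⟩⟩
  · refine ⟨t.1, t.2.2, hts, ?_, Or.inr ⟨rfl, rfl⟩⟩
    unfold vec at htm
    rcases hts with h | h
    · rw [h] at htm ⊢
      have e : stdBasis n t.2.1 + (1:ℝ) • stdBasis n t.1
          = stdBasis n t.1 + (1:ℝ) • stdBasis n t.2.1 := by module
      rw [e]; exact htm
    · rw [h] at htm ⊢
      have e : stdBasis n t.2.1 + (-1:ℝ) • stdBasis n t.1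
          = (-1:ℝ) • (stdBasis n t.1 + (-1:ℝ) • stdBasis n t.2.1) := by module
      rw [e]; exact Q.smul_mem _ htm

lemma pair_cases {t : Fin n × Fin n × ℝ} {x y : Fin n} (hxy : x ≠ y)
    (hx : x = t.1 ∨ x = t.2.1) (hy : y = t.1 ∨ y = t.2.1) :
    (t.1 = x ∧ t.2.1 = y) ∨ (t.1 = y ∧ t.2.1 = x) := by
  rcases hx with rfl | rfl <;> rcases hy with rfl | rfl
  · exact absurd rfl hxy
  · exact Or.inl ⟨rfl, rfl⟩
  · exact Or.inr ⟨rfl, rfl⟩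
  · exact absurd rfl hxy

lemma private_vtx {t s : Fin n × Fin n × ℝ} (hlt : t.1 < t.2.1) (hls : s.1 < s.2.1)
    (hpair : ¬(t.1 = s.1 ∧ t.2.1 = s.2.1)) :
    ∃ m : Fin n, (m = t.1 ∨ m = t.2.1) ∧ m ≠ s.1 ∧ m ≠ s.2.1 := by
  by_cases h1 : t.1 = s.1
  · refine ⟨t.2.1, Or.inr rfl, ?_, ?_⟩
    · rw [← h1]; exact (ne_of_gt hlt)
    · intro h; exact hpair ⟨h1, h⟩
  · by_cases h2 : t.1 = s.2.1
    · have hs1 : s.1 < t.1 := by rw [h2]; exact hls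
      refine ⟨t.2.1, Or.inr rfl, ?_, ?_⟩
      · exact ne_of_gt (lt_trans hs1 hlt)
      · rw [← h2]; exact ne_of_gt hlt
    · exact ⟨t.1, Or.inl rfl, h1, h2⟩

/-- Three pairwise disjoint edges plus a fourth distinct edge cannot all lie in a
3-dimensional subspace. -/
lemma P1 (Q : Submodule ℝ (EuclideanSpace ℝ (Fin n))) (hdim : finrank ℝ Q = 3)
    (ta tb tc td : Fin n × Fin n × ℝ)
    (la : ta.1 < ta.2.1) (lb : tb.1 < tb.2.1) (lc : tc.1 < tc.2.1) (ld : td.1 < td.2.1)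
    (sa : ta.2.2 = 1 ∨ ta.2.2 = -1) (sb : tb.2.2 = 1 ∨ tb.2.2 = -1)
    (sc : tc.2.2 = 1 ∨ tc.2.2 = -1) (sd : td.2.2 = 1 ∨ td.2.2 = -1)
    (ma : vec n ta ∈ Q) (mb : vec n tb ∈ Q) (mc : vec n tc ∈ Q) (md : vec n td ∈ Q)
    (hab : Dis ta tb) (hac : Dis ta tc) (hbc : Dis tb tc)
    (hpa : ¬(ta.1 = td.1 ∧ ta.2.1 = td.2.1))
    (hpb : ¬(tb.1 = td.1 ∧ tb.2.1 = td.2.1))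
    (hpc : ¬(tc.1 = td.1 ∧ tc.2.1 = td.2.1)) : False := by
  obtain ⟨xa, hxa, hxa1, hxa2⟩ := private_vtx la ld hpa
  obtain ⟨xb, hxb, hxb1, hxb2⟩ := private_vtx lb ld hpb
  obtain ⟨xc, hxc, hxc1, hxc2⟩ := private_vtx lc ld hpc
  have hab' := dis_vertex hab hxa
  have hac' := dis_vertex hac hxa
  have hbc' := dis_vertex hbc hxb
  have hba' := dis_vertex ⟨hab.1.symm, hab.2.2.1.symm, hab.2.1.symm, hab.2.2.2.symm⟩ hxb
  have hca' := dis_vertex ⟨hac.1.symm, hac.2.2.1.symm, hac.2.1.symm, hac.2.2.2.symm⟩ hxc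
  have hcb' := dis_vertex ⟨hbc.1.symm, hbc.2.2.1.symm, hbc.2.1.symm, hbc.2.2.2.symm⟩ hxc
  apply indep4_false Q hdim ![vec n ta, vec n tb, vec n tc, vec n td]
    (by intro k; fin_cases k <;> assumption) ![xa, xb, xc, td.1]
  · intro k; fin_cases k
    · exact vec_nonzero la sa hxa
    · exact vec_nonzero lb sb hxb
    · exact vec_nonzero lc sc hxc
    · exact vec_nonzero ld sd (Or.inl rfl)
  · intro k l hkl
    fin_cases k <;> fin_cases l <;>
      first
        | exact absurd hkl (by decide)
        | exact vec_zero hab'.1 hab'.2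
        | exact vec_zero hac'.1 hac'.2
        | exact vec_zero hbc'.1 hbc'.2
        | exact vec_zero hxa1 hxa2
        | exact vec_zero hxb1 hxb2
        | exact vec_zero hxc1 hxc2

lemma starCase (Q : Submodule ℝ (EuclideanSpace ℝ (Fin n))) (hdim : finrank ℝ Q = 3)
    (a u1 u2 u3 : Fin n)
    (h01 : a ≠ u1) (h02 : a ≠ u2) (h03 : a ≠ u3)
    (h12 : u1 ≠ u2) (h13 : u1 ≠ u3) (h23 : u2 ≠ u3)
    (ε1 ε2 ε3 : ℝ) (he1 : ε1 = 1 ∨ ε1 = -1) (he2 : ε2 = 1 ∨ ε2 = -1) (he3 : ε3 = 1 ∨ ε3 = -1)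
    (hw1 : stdBasis n a + ε1 • stdBasis n u1 ∈ Q)
    (hw2 : stdBasis n a + ε2 • stdBasis n u2 ∈ Q)
    (hw3 : stdBasis n a + ε3 • stdBasis n u3 ∈ Q) :
    Q = span ℝ {stdBasis n a, stdBasis n u1, stdBasis n u2, stdBasis n u3} ⊓
      (span ℝ {stdBasis n a + (-ε1) • stdBasis n u1 + (-ε2) • stdBasis n u2 +
        (-ε3) • stdBasis n u3})ᗮ := by
  have hQspan : Q = span ℝ {stdBasis n a + ε1 • stdBasis n u1,
      stdBasis n a + ε2 • stdBasis n u2, stdBasis n a + ε3 • stdBasis n u3} := by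
    have h := span3_eq Q hdim
      ![stdBasis n a + ε1 • stdBasis n u1, stdBasis n a + ε2 • stdBasis n u2,
        stdBasis n a + ε3 • stdBasis n u3]
      (by intro kk; fin_cases kk <;> assumption) ![u1, u2, u3]
      (by
        intro kk; fin_cases kk
        · exact comb_nonzero h01 he1 (Or.inr rfl)
        · exact comb_nonzero h02 he2 (Or.inr rfl)
        · exact comb_nonzero h03 he3 (Or.inr rfl))
      (by
        intro k l hkl
        fin_cases k <;> fin_cases l <;>
          first
            | exact absurd hkl (by decide)
            | exact comb_zero _ (Ne.symm h01) h12
            | exact comb_zero _ (Ne.symm h01) h13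
            | exact comb_zero _ (Ne.symm h02) h23)
    simpa using h
  have hmemU : ∀ p : Fin n, p = a ∨ p = u1 ∨ p = u2 ∨ p = u3 →
      stdBasis n p ∈ span ℝ {stdBasis n a, stdBasis n u1, stdBasis n u2, stdBasis n u3} := by
    intro p hp
    apply subset_span
    rcases hp with rfl | rfl | rfl | rfl <;> simp
  have hwU : ∀ (p : Fin n) (ε : ℝ), p = u1 ∨ p = u2 ∨ p = u3 →
      stdBasis n a + ε • stdBasis n p ∈
        span ℝ {stdBasis n a, stdBasis n u1, stdBasis n u2, stdBasis n u3} := by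
    intro p ε hp
    exact add_mem (hmemU a (Or.inl rfl)) (smul_mem _ _ (hmemU p (Or.inr hp)))
  have hinner : ∀ (p : Fin n) (ε : ℝ),
      (p = u1 ∧ ε = ε1) ∨ (p = u2 ∧ ε = ε2) ∨ (p = u3 ∧ ε = ε3) →
      (inner ℝ (stdBasis n a + (-ε1) • stdBasis n u1 + (-ε2) • stdBasis n u2 +
        (-ε3) • stdBasis n u3) (stdBasis n a + ε • stdBasis n p) : ℝ) = 0 := by
    intro p ε hp
    rw [inner_add_left, inner_add_left, inner_add_left, real_inner_smul_left,
      real_inner_smul_left, real_inner_smul_left, inner_std_left, inner_std_left,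
      inner_std_left, inner_std_left]
    rcases hp with ⟨rfl, rfl⟩ | ⟨rfl, rfl⟩ | ⟨rfl, rfl⟩ <;>
        rw [comb_apply, comb_apply, comb_apply, comb_apply] <;>
        simp [h01, h02, h03, Ne.symm h01, Ne.symm h02, Ne.symm h03,
          h12, h13, h23, Ne.symm h12, Ne.symm h13, Ne.symm h23] <;>
        [rcases he1 with rfl | rfl; rcases he2 with rfl | rfl; rcases he3 with rfl | rfl] <;>
        norm_num
  have horth : ∀ (p : Fin n) (ε : ℝ),
      (p = u1 ∧ ε = ε1) ∨ (p = u2 ∧ ε = ε2) ∨ (p = u3 ∧ ε = ε3) →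
      stdBasis n a + ε • stdBasis n p ∈
        (span ℝ {stdBasis n a + (-ε1) • stdBasis n u1 + (-ε2) • stdBasis n u2 +
          (-ε3) • stdBasis n u3})ᗮ := by
    intro p ε hp
    rw [Submodule.mem_orthogonal]
    intro u hu
    rcases Submodule.mem_span_singleton.mp hu with ⟨r, rfl⟩
    rw [real_inner_smul_left, hinner p ε hp, mul_zero]
  have hQle : Q ≤ span ℝ {stdBasis n a, stdBasis n u1, stdBasis n u2, stdBasis n u3} ⊓
      (span ℝ {stdBasis n a + (-ε1) • stdBasis n u1 + (-ε2) • stdBasis n u2 +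
        (-ε3) • stdBasis n u3})ᗮ := by
    rw [hQspan, span_le]
    intro x hx
    simp only [Set.mem_insert_iff, Set.mem_singleton_iff] at hx
    rcases hx with rfl | rfl | rfl
    · exact ⟨hwU u1 ε1 (Or.inl rfl), horth u1 ε1 (Or.inl ⟨rfl, rfl⟩)⟩
    · exact ⟨hwU u2 ε2 (Or.inr (Or.inl rfl)), horth u2 ε2 (Or.inr (Or.inl ⟨rfl, rfl⟩))⟩
    · exact ⟨hwU u3 ε3 (Or.inr (Or.inr rfl)), horth u3 ε3 (Or.inr (Or.inr ⟨rfl, rfl⟩))⟩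
  have hU4 : finrank ℝ
      (span ℝ {stdBasis n a, stdBasis n u1, stdBasis n u2, stdBasis n u3} :
        Submodule ℝ (EuclideanSpace ℝ (Fin n))) = 4 := by
    have hli : LinearIndependent ℝ ![stdBasis n a, stdBasis n u1, stdBasis n u2, stdBasis n u3] := by
      apply liTriangular4 _ ![a, u1, u2, u3]
      · intro kk; fin_cases kk <;> simp [std_apply]
      · intro k l hkl
        fin_cases k <;> fin_cases l <;>
          first
            | exact absurd hkl (by decide)
            | simp [std_apply, h01, h02, h03, h12, h13, h23,
                Ne.symm h01, Ne.symm h02, Ne.symm h03, Ne.symm h12, Ne.symm h13, Ne.symm h23]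
    have hrange : Set.range ![stdBasis n a, stdBasis n u1, stdBasis n u2, stdBasis n u3]
        = {stdBasis n a, stdBasis n u1, stdBasis n u2, stdBasis n u3} := by
      simp only [Matrix.range_cons, Matrix.range_empty, Set.union_empty, Set.singleton_union]
    have h := finrank_span_eq_card hli
    rw [hrange] at h
    simpa using h
  have hvU : stdBasis n a + (-ε1) • stdBasis n u1 + (-ε2) • stdBasis n u2 +
      (-ε3) • stdBasis n u3 ∈
      span ℝ {stdBasis n a, stdBasis n u1, stdBasis n u2, stdBasis n u3} := by
    exact add_mem (add_mem (add_mem (hmemU a (Or.inl rfl))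
      (smul_mem _ _ (hmemU u1 (Or.inr (Or.inl rfl)))))
      (smul_mem _ _ (hmemU u2 (Or.inr (Or.inr (Or.inl rfl))))))
      (smul_mem _ _ (hmemU u3 (Or.inr (Or.inr (Or.inr rfl)))))
  have hvnot : stdBasis n a + (-ε1) • stdBasis n u1 + (-ε2) • stdBasis n u2 +
      (-ε3) • stdBasis n u3 ∉
      span ℝ {stdBasis n a, stdBasis n u1, stdBasis n u2, stdBasis n u3} ⊓
      (span ℝ {stdBasis n a + (-ε1) • stdBasis n u1 + (-ε2) • stdBasis n u2 +
        (-ε3) • stdBasis n u3})ᗮ := by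
    intro h
    have h2 : (inner ℝ (stdBasis n a + (-ε1) • stdBasis n u1 + (-ε2) • stdBasis n u2 +
        (-ε3) • stdBasis n u3) (stdBasis n a + (-ε1) • stdBasis n u1 +
        (-ε2) • stdBasis n u2 + (-ε3) • stdBasis n u3) : ℝ) = 0 :=
      (Submodule.mem_orthogonal _ _).mp h.2 _ (subset_span rfl)
    have hv0 := inner_self_eq_zero.mp h2
    have happ : (stdBasis n a + (-ε1) • stdBasis n u1 + (-ε2) • stdBasis n u2 +
        (-ε3) • stdBasis n u3) a = 1 := by
      rw [PiLp.add_apply, PiLp.add_apply, PiLp.add_apply, PiLp.smul_apply, PiLp.smul_apply,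
        PiLp.smul_apply, std_apply, std_apply, std_apply, std_apply]
      simp [h01, h02, h03]
    rw [hv0] at happ
    simp [PiLp.zero_apply] at happ
  have hlt : span ℝ {stdBasis n a, stdBasis n u1, stdBasis n u2, stdBasis n u3} ⊓
      (span ℝ {stdBasis n a + (-ε1) • stdBasis n u1 + (-ε2) • stdBasis n u2 +
        (-ε3) • stdBasis n u3})ᗮ <
      span ℝ {stdBasis n a, stdBasis n u1, stdBasis n u2, stdBasis n u3} :=
    lt_of_le_of_ne inf_le_left (by
      intro h
      exact hvnot (h.symm ▸ hvU))
  have hfr := Submodule.finrank_lt_finrank_of_lt hlt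
  rw [hU4] at hfr
  exact Submodule.eq_of_le_of_finrank_le hQle (by omega)


end Stmt4Aux


/-- A 3-space in `ℝ^n` containing at least 12 long roots of `Φ_{B_n}` is either standard,
or is the orthogonal complement of a vector `e_i + δ₁ e_j + δ₂ e_l + δ₃ e_s` inside the
standard 4-space spanned by `{e_i, e_j, e_l, e_s}`. -/
theorem stmt4 (n : ℕ) (hn : 3 ≤ n) (Q : Submodule ℝ (EuclideanSpace ℝ (Fin n)))
    (hdim : Module.finrank ℝ Q = 3)
    (hroots : 12 ≤ {x ∈ (Q : Set (EuclideanSpace ℝ (Fin n))) | x ∈ PhiB n ∧ IsLongRoot n x}.ncard) :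
    (∃ S : Set (Fin n), Q = Submodule.span ℝ (stdBasis n '' S)) ∨
    (∃ i j l s : Fin n, i ≠ j ∧ i ≠ l ∧ i ≠ s ∧ j ≠ l ∧ j ≠ s ∧ l ≠ s ∧
      ∃ δ₁ δ₂ δ₃ : ℝ, (δ₁ = 1 ∨ δ₁ = -1) ∧ (δ₂ = 1 ∨ δ₂ = -1) ∧ (δ₃ = 1 ∨ δ₃ = -1) ∧
        Q = Submodule.span ℝ {stdBasis n i, stdBasis n j, stdBasis n l, stdBasis n s} ⊓
          (Submodule.span ℝ
            {stdBasis n i + δ₁ • stdBasis n j + δ₂ • stdBasis n l + δ₃ • stdBasis n s})ᗮ) := by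
  classical
  set T : Set (Fin n × Fin n × ℝ) :=
    {t | t.1 < t.2.1 ∧ (t.2.2 = 1 ∨ t.2.2 = -1) ∧ Stmt4Aux.vec n t ∈ Q} with hTdef
  have hmemT : ∀ {t : Fin n × Fin n × ℝ}, t ∈ T →
      t.1 < t.2.1 ∧ (t.2.2 = 1 ∨ t.2.2 = -1) ∧ Stmt4Aux.vec n t ∈ Q := fun ht => ht
  have hmkT : ∀ {t : Fin n × Fin n × ℝ}, t.1 < t.2.1 → (t.2.2 = 1 ∨ t.2.2 = -1) →
      Stmt4Aux.vec n t ∈ Q → t ∈ T := fun h1 h2 h3 => ⟨h1, h2, h3⟩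
  have hTfin : T.Finite := by
    apply Set.Finite.subset ((Set.finite_univ (α := Fin n)).prod
      ((Set.finite_univ (α := Fin n)).prod ((Set.finite_singleton (-1:ℝ)).insert 1)))
    intro t ht
    simp only [Set.mem_prod, Set.mem_univ, true_and, Set.mem_insert_iff, Set.mem_singleton_iff]
    exact (hmemT ht).2.1
  have himg : {x ∈ (Q : Set (EuclideanSpace ℝ (Fin n))) | x ∈ PhiB n ∧ IsLongRoot n x} ⊆
      (fun t => Stmt4Aux.vec n t) '' T ∪ (fun t => -Stmt4Aux.vec n t) '' T := by
    rintro x ⟨hxQ, -, hlong⟩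
    obtain ⟨i, j, hij, ε1, ε2, he1, he2, hx⟩ := hlong
    rcases lt_or_gt_of_ne hij with hlt | hlt
    · have hsign : ε1 * ε2 = 1 ∨ ε1 * ε2 = -1 := by
        rcases he1 with rfl | rfl <;> rcases he2 with rfl | rfl <;> norm_num
      have hveceq : Stmt4Aux.vec n (i, j, ε1 * ε2) = ε1 • x := by
        rw [hx]; unfold Stmt4Aux.vec
        rcases he1 with rfl | rfl <;> module
      have htT : (i, j, ε1 * ε2) ∈ T := ⟨hlt, hsign, by rw [hveceq]; exact Q.smul_mem _ hxQ⟩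
      rcases he1 with h1 | h1
      · left
        refine ⟨(i, j, ε1 * ε2), htT, ?_⟩
        show Stmt4Aux.vec n (i, j, ε1 * ε2) = x
        rw [hveceq, h1, one_smul]
      · right
        refine ⟨(i, j, ε1 * ε2), htT, ?_⟩
        show -Stmt4Aux.vec n (i, j, ε1 * ε2) = x
        rw [hveceq, h1]
        module
    · have hsign : ε1 * ε2 = 1 ∨ ε1 * ε2 = -1 := by
        rcases he1 with rfl | rfl <;> rcases he2 with rfl | rfl <;> norm_num
      have hveceq : Stmt4Aux.vec n (j, i, ε1 * ε2) = ε2 • x := by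
        rw [hx]; unfold Stmt4Aux.vec
        rcases he1 with rfl | rfl <;> rcases he2 with rfl | rfl <;> module
      have htT : (j, i, ε1 * ε2) ∈ T := ⟨hlt, hsign, by rw [hveceq]; exact Q.smul_mem _ hxQ⟩
      rcases he2 with h2 | h2
      · left
        refine ⟨(j, i, ε1 * ε2), htT, ?_⟩
        show Stmt4Aux.vec n (j, i, ε1 * ε2) = x
        rw [hveceq, h2, one_smul]
      · right
        refine ⟨(j, i, ε1 * ε2), htT, ?_⟩
        show -Stmt4Aux.vec n (j, i, ε1 * ε2) = x
        rw [hveceq, h2]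
        module
  have hT6 : 6 ≤ T.ncard := by
    have h1 := Set.ncard_le_ncard himg ((hTfin.image _).union (hTfin.image _))
    have h2 := Set.ncard_union_le ((fun t => Stmt4Aux.vec n t) '' T)
      ((fun t => -Stmt4Aux.vec n t) '' T)
    have h3 := Set.ncard_image_le (f := fun t => Stmt4Aux.vec n t) hTfin
    have h4 := Set.ncard_image_le (f := fun t => -Stmt4Aux.vec n t) hTfin
    omega
  by_cases hdbl : ∃ p q : Fin n, (p, q, (1:ℝ)) ∈ T ∧ (p, q, (-1:ℝ)) ∈ T
  · -- CASE I : a doubled pair, so two coordinate vectors lie in Q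
    obtain ⟨p, q, hp1, hpm1⟩ := hdbl
    have hplt : p < q := (hmemT hp1).1
    obtain ⟨hBp, hBq⟩ := Stmt4Aux.double_mem Q (by norm_num : (1:ℝ) ≠ -1) (Or.inl rfl)
      (Or.inr rfl) (hmemT hp1).2.2 (hmemT hpm1).2.2
    by_cases hmix : ∃ t ∈ T, ((t.1 = p ∨ t.1 = q) ∧ t.2.1 ≠ p ∧ t.2.1 ≠ q) ∨
        ((t.2.1 = p ∨ t.2.1 = q) ∧ t.1 ≠ p ∧ t.1 ≠ q)
    · obtain ⟨t, htT, hcase⟩ := hmix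
      left
      rcases hcase with ⟨h1, h2p, h2q⟩ | ⟨h1, h2p, h2q⟩
      · have hBt1 : stdBasis n t.1 ∈ Q := by
          rcases h1 with h | h <;> rw [h]
          exacts [hBp, hBq]
        have hBk : stdBasis n t.2.1 ∈ Q :=
          Stmt4Aux.prop_mem Q (hmemT htT).2.1 (hmemT htT).2.2 hBt1
        exact Stmt4Aux.std3 Q hdim p q t.2.1 (ne_of_lt hplt) (Ne.symm h2p) (Ne.symm h2q)
          hBp hBq hBk
      · have hBt2 : stdBasis n t.2.1 ∈ Q := by
          rcases h1 with h | h <;> rw [h]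
          exacts [hBp, hBq]
        have hBk : stdBasis n t.1 ∈ Q := by
          have h := Q.sub_mem (hmemT htT).2.2 (Q.smul_mem t.2.2 hBt2)
          have e : Stmt4Aux.vec n t - t.2.2 • stdBasis n t.2.1 = stdBasis n t.1 := by
            unfold Stmt4Aux.vec; module
          rw [e] at h
          exact h
        exact Stmt4Aux.std3 Q hdim p q t.1 (ne_of_lt hplt) (Ne.symm h2p) (Ne.symm h2q)
          hBp hBq hBk
    · have hsplit : ∀ t ∈ T, (t = (p, q, (1:ℝ)) ∨ t = (p, q, (-1:ℝ))) ∨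
          (t.1 ≠ p ∧ t.1 ≠ q ∧ t.2.1 ≠ p ∧ t.2.1 ≠ q) := by
        intro t ht
        by_cases ha : t.1 = p ∨ t.1 = q
        · by_cases hb : t.2.1 = p ∨ t.2.1 = q
          · left
            have hlt := (hmemT ht).1
            have hpq : t.1 = p ∧ t.2.1 = q := by
              rcases ha with h | h <;> rcases hb with h' | h'
              · rw [h, h'] at hlt; exact absurd hlt (lt_irrefl _)
              · exact ⟨h, h'⟩
              · rw [h, h'] at hlt; exact absurd hlt (not_lt.mpr (le_of_lt hplt))
              · rw [h, h'] at hlt; exact absurd hlt (lt_irrefl _)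
            rcases (hmemT ht).2.1 with hs | hs
            · exact Or.inl (Stmt4Aux.triple_ext hpq.1 hpq.2 hs)
            · exact Or.inr (Stmt4Aux.triple_ext hpq.1 hpq.2 hs)
          · exact absurd ⟨t, ht, Or.inl ⟨ha, (not_or.mp hb).1, (not_or.mp hb).2⟩⟩ hmix
        · by_cases hb : t.2.1 = p ∨ t.2.1 = q
          · exact absurd ⟨t, ht, Or.inr ⟨hb, (not_or.mp ha).1, (not_or.mp ha).2⟩⟩ hmix
          · exact Or.inr ⟨(not_or.mp ha).1, (not_or.mp ha).2, (not_or.mp hb).1, (not_or.mp hb).2⟩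
      have hT'fin : ({t | t ∈ T ∧ t.1 ≠ p ∧ t.1 ≠ q ∧ t.2.1 ≠ p ∧ t.2.1 ≠ q} :
          Set (Fin n × Fin n × ℝ)).Finite := hTfin.subset fun t ht => ht.1
      have hT'card : 2 ≤ ({t | t ∈ T ∧ t.1 ≠ p ∧ t.1 ≠ q ∧ t.2.1 ≠ p ∧ t.2.1 ≠ q} :
          Set (Fin n × Fin n × ℝ)).ncard := by
        have hsub : T ⊆ {t | t ∈ T ∧ t.1 ≠ p ∧ t.1 ≠ q ∧ t.2.1 ≠ p ∧ t.2.1 ≠ q} ∪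
            {(p, q, (1:ℝ)), (p, q, (-1:ℝ))} := by
          intro t ht
          rcases hsplit t ht with h | h
          · right
            rcases h with h | h
            · exact Or.inl h
            · exact Or.inr h
          · left
            exact ⟨ht, h⟩
        have h1 := Set.ncard_le_ncard hsub (hT'fin.union (toFinite _))
        have h2 := Set.ncard_union_le
          ({t | t ∈ T ∧ t.1 ≠ p ∧ t.1 ≠ q ∧ t.2.1 ≠ p ∧ t.2.1 ≠ q} : Set (Fin n × Fin n × ℝ))
          {(p, q, (1:ℝ)), (p, q, (-1:ℝ))}
        have h3 : ({(p, q, (1:ℝ)), (p, q, (-1:ℝ))} : Set (Fin n × Fin n × ℝ)).ncard ≤ 2 := by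
          apply le_trans (Set.ncard_insert_le _ _)
          simp
        omega
      obtain ⟨t3, ht3, t4, ht4, h34⟩ := (Set.one_lt_ncard hT'fin).mp (by omega)
      have ht3T : t3 ∈ T := ht3.1
      have ht4T : t4 ∈ T := ht4.1
      by_cases hpair : t3.1 = t4.1 ∧ t3.2.1 = t4.2.1
      · have hsne : t3.2.2 ≠ t4.2.2 := fun h => h34 (Stmt4Aux.triple_ext hpair.1 hpair.2 h)
        have hv4 : stdBasis n t3.1 + t4.2.2 • stdBasis n t3.2.1 ∈ Q := by
          have h := (hmemT ht4T).2.2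
          unfold Stmt4Aux.vec at h
          rw [hpair.1, hpair.2]
          exact h
        obtain ⟨hBk, hBl⟩ := Stmt4Aux.double_mem Q hsne (hmemT ht3T).2.1 (hmemT ht4T).2.1
          (hmemT ht3T).2.2 hv4
        left
        exact Stmt4Aux.std3 Q hdim p t3.1 t3.2.1 (Ne.symm ht3.2.1) (Ne.symm ht3.2.2.2.1)
          (ne_of_lt (hmemT ht3T).1) hBp hBk hBl
      · exfalso
        obtain ⟨m3, hm3, hm3a, hm3b⟩ :=
          Stmt4Aux.private_vtx (hmemT ht3T).1 (hmemT ht4T).1 hpair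
        apply Stmt4Aux.indep4_false Q hdim
          ![stdBasis n p, stdBasis n q, Stmt4Aux.vec n t3, Stmt4Aux.vec n t4] ?_
          ![p, q, m3, t4.1] ?_ ?_
        · intro k; fin_cases k
          exacts [hBp, hBq, (hmemT ht3T).2.2, (hmemT ht4T).2.2]
        · intro k; fin_cases k
          · simp [Stmt4Aux.std_apply]
          · simp [Stmt4Aux.std_apply]
          · exact Stmt4Aux.vec_nonzero (hmemT ht3T).1 (hmemT ht3T).2.1 hm3
          · exact Stmt4Aux.vec_nonzero (hmemT ht4T).1 (hmemT ht4T).2.1 (Or.inl rfl)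
        · intro k l hkl
          fin_cases k <;> fin_cases l <;>
            first
              | exact absurd hkl (by decide)
              | exact show stdBasis n q p = 0 by
                  rw [Stmt4Aux.std_apply]; simp [ne_of_lt hplt]
              | exact Stmt4Aux.vec_zero (Ne.symm ht3.2.1) (Ne.symm ht3.2.2.2.1)
              | exact Stmt4Aux.vec_zero (Ne.symm ht3.2.2.1) (Ne.symm ht3.2.2.2.2)
              | exact Stmt4Aux.vec_zero (Ne.symm ht4.2.1) (Ne.symm ht4.2.2.2.1)
              | exact Stmt4Aux.vec_zero (Ne.symm ht4.2.2.1) (Ne.symm ht4.2.2.2.2)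
              | exact Stmt4Aux.vec_zero hm3a hm3b
  · -- no doubled pair
    by_cases hstar : ∃ (a u1 u2 u3 : Fin n) (ε1 ε2 ε3 : ℝ),
        (a ≠ u1 ∧ a ≠ u2 ∧ a ≠ u3 ∧ u1 ≠ u2 ∧ u1 ≠ u3 ∧ u2 ≠ u3) ∧
        (ε1 = 1 ∨ ε1 = -1) ∧ (ε2 = 1 ∨ ε2 = -1) ∧ (ε3 = 1 ∨ ε3 = -1) ∧
        stdBasis n a + ε1 • stdBasis n u1 ∈ Q ∧ stdBasis n a + ε2 • stdBasis n u2 ∈ Q ∧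
        stdBasis n a + ε3 • stdBasis n u3 ∈ Q
    · -- CASE II : a 3-star gives the orthogonal complement description
      right
      obtain ⟨a, u1, u2, u3, ε1, ε2, ε3, ⟨d1, d2, d3, d4, d5, d6⟩, he1, he2, he3,
        hw1, hw2, hw3⟩ := hstar
      refine ⟨a, u1, u2, u3, d1, d2, d3, d4, d5, d6, -ε1, -ε2, -ε3, ?_, ?_, ?_, ?_⟩
      · rcases he1 with rfl | rfl
        · right; norm_num
        · left; norm_num
      · rcases he2 with rfl | rfl
        · right; norm_num
        · left; norm_num
      · rcases he3 with rfl | rfl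
        · right; norm_num
        · left; norm_num
      · exact Stmt4Aux.starCase Q hdim a u1 u2 u3 d1 d2 d3 d4 d5 d6 ε1 ε2 ε3 he1 he2 he3
          hw1 hw2 hw3
    · -- CASE III : impossible
      exfalso
      have hnd : ∀ t ∈ T, ∀ t' ∈ T, t.1 = t'.1 → t.2.1 = t'.2.1 → t = t' := by
        intro t ht t' ht' h1 h2
        rcases (hmemT ht).2.1 with hs | hs <;> rcases (hmemT ht').2.1 with hs' | hs'
        · exact Stmt4Aux.triple_ext h1 h2 (hs.trans hs'.symm)
        · exfalso
          apply hdbl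
          refine ⟨t.1, t.2.1, ?_, ?_⟩
          · have e : (t.1, t.2.1, (1:ℝ)) = t := Stmt4Aux.triple_ext rfl rfl hs.symm
            rw [e]; exact ht
          · have e : (t.1, t.2.1, (-1:ℝ)) = t' := Stmt4Aux.triple_ext h1 h2 hs'.symm
            rw [e]; exact ht'
        · exfalso
          apply hdbl
          refine ⟨t.1, t.2.1, ?_, ?_⟩
          · have e : (t.1, t.2.1, (1:ℝ)) = t' := Stmt4Aux.triple_ext h1 h2 hs'.symm
            rw [e]; exact ht'
          · have e : (t.1, t.2.1, (-1:ℝ)) = t := Stmt4Aux.triple_ext rfl rfl hs.symm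
            rw [e]; exact ht
        · exact Stmt4Aux.triple_ext h1 h2 (hs.trans hs'.symm)
      have hdeg : ∀ v : Fin n, ∀ s1 ∈ T, ∀ s2 ∈ T, ∀ s3 ∈ T, s1 ≠ s2 → s1 ≠ s3 → s2 ≠ s3 →
          (v = s1.1 ∨ v = s1.2.1) → (v = s2.1 ∨ v = s2.2.1) → (v = s3.1 ∨ v = s3.2.1) →
          False := by
        intro v s1 hs1 s2 hs2 s3 hs3 h12 h13 h23 hv1 hv2 hv3
        obtain ⟨w1, e1, hee1, hww1, hc1⟩ :=
          Stmt4Aux.orient (hmemT hs1).2.1 (hmemT hs1).2.2 hv1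
        obtain ⟨w2, e2, hee2, hww2, hc2⟩ :=
          Stmt4Aux.orient (hmemT hs2).2.1 (hmemT hs2).2.2 hv2
        obtain ⟨w3, e3, hee3, hww3, hc3⟩ :=
          Stmt4Aux.orient (hmemT hs3).2.1 (hmemT hs3).2.2 hv3
        have hvw : ∀ {s : Fin n × Fin n × ℝ} {w : Fin n}, s ∈ T →
            (s.1 = v ∧ s.2.1 = w) ∨ (s.1 = w ∧ s.2.1 = v) → v ≠ w := by
          intro s w hs hc
          have hlt := (hmemT hs).1
          rcases hc with ⟨ha, hb⟩ | ⟨ha, hb⟩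
          · exact fun h => (ne_of_lt hlt) (by rw [ha, hb, h])
          · exact fun h => (ne_of_lt hlt) (by rw [ha, hb, ← h])
        have hww : ∀ {sa sb : Fin n × Fin n × ℝ} {wa wb : Fin n}, sa ∈ T → sb ∈ T → sa ≠ sb →
            (sa.1 = v ∧ sa.2.1 = wa) ∨ (sa.1 = wa ∧ sa.2.1 = v) →
            (sb.1 = v ∧ sb.2.1 = wb) ∨ (sb.1 = wb ∧ sb.2.1 = v) → wa ≠ wb := by
          intro sa sb wa wb ha hb hne hca hcb h
          subst h
          rcases hca with ⟨ha1, ha2⟩ | ⟨ha1, ha2⟩ <;> rcases hcb with ⟨hb1, hb2⟩ | ⟨hb1, hb2⟩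
          · exact hne (hnd sa ha sb hb (ha1.trans hb1.symm) (ha2.trans hb2.symm))
          · have l1 := (hmemT ha).1
            have l2 := (hmemT hb).1
            rw [ha1, ha2] at l1
            rw [hb1, hb2] at l2
            exact absurd l2 (not_lt.mpr (le_of_lt l1))
          · have l1 := (hmemT ha).1
            have l2 := (hmemT hb).1
            rw [ha1, ha2] at l1
            rw [hb1, hb2] at l2
            exact absurd l2 (not_lt.mpr (le_of_lt l1))
          · exact hne (hnd sa ha sb hb (ha1.trans hb1.symm) (ha2.trans hb2.symm))
        exact hstar ⟨v, w1, w2, w3, e1, e2, e3,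
          ⟨hvw hs1 hc1, hvw hs2 hc2, hvw hs3 hc3, hww hs1 hs2 h12 hc1 hc2,
            hww hs1 hs3 h13 hc1 hc3, hww hs2 hs3 h23 hc2 hc3⟩,
          hee1, hee2, hee3, hww1, hww2, hww3⟩
      obtain ⟨t1, ht1⟩ : T.Nonempty := Set.nonempty_of_ncard_ne_zero (by omega)
      -- edges meeting t1
      have hMsub : ({t | t ∈ T ∧ (t1.1 = t.1 ∨ t1.1 = t.2.1 ∨ t1.2.1 = t.1 ∨ t1.2.1 = t.2.1)} :
          Set (Fin n × Fin n × ℝ)) ⊆ T := fun t ht => ht.1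
      have hMfin := hTfin.subset hMsub
      have ht1M : t1 ∈ {t | t ∈ T ∧ (t1.1 = t.1 ∨ t1.1 = t.2.1 ∨ t1.2.1 = t.1 ∨
          t1.2.1 = t.2.1)} := ⟨ht1, Or.inl rfl⟩
      have hMcard : ({t | t ∈ T ∧ (t1.1 = t.1 ∨ t1.1 = t.2.1 ∨ t1.2.1 = t.1 ∨
          t1.2.1 = t.2.1)} : Set (Fin n × Fin n × ℝ)).ncard ≤ 3 := by
        have hMafin : ({t | t ∈ T ∧ t ≠ t1 ∧ (t1.1 = t.1 ∨ t1.1 = t.2.1)} :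
            Set (Fin n × Fin n × ℝ)).Finite := hTfin.subset fun t ht => ht.1
        have hMbfin : ({t | t ∈ T ∧ t ≠ t1 ∧ (t1.2.1 = t.1 ∨ t1.2.1 = t.2.1)} :
            Set (Fin n × Fin n × ℝ)).Finite := hTfin.subset fun t ht => ht.1
        have hMa1 : ({t | t ∈ T ∧ t ≠ t1 ∧ (t1.1 = t.1 ∨ t1.1 = t.2.1)} :
            Set (Fin n × Fin n × ℝ)).ncard ≤ 1 := by
          by_contra h
          obtain ⟨u, hu, w, hw, huw⟩ := (Set.one_lt_ncard hMafin).mp (by omega)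
          exact hdeg t1.1 t1 ht1 u hu.1 w hw.1 (Ne.symm hu.2.1) (Ne.symm hw.2.1) huw
            (Or.inl rfl) hu.2.2 hw.2.2
        have hMb1 : ({t | t ∈ T ∧ t ≠ t1 ∧ (t1.2.1 = t.1 ∨ t1.2.1 = t.2.1)} :
            Set (Fin n × Fin n × ℝ)).ncard ≤ 1 := by
          by_contra h
          obtain ⟨u, hu, w, hw, huw⟩ := (Set.one_lt_ncard hMbfin).mp (by omega)
          exact hdeg t1.2.1 t1 ht1 u hu.1 w hw.1 (Ne.symm hu.2.1) (Ne.symm hw.2.1) huw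
            (Or.inr rfl) hu.2.2 hw.2.2
        have hsub2 : ({t | t ∈ T ∧ (t1.1 = t.1 ∨ t1.1 = t.2.1 ∨ t1.2.1 = t.1 ∨
            t1.2.1 = t.2.1)} : Set (Fin n × Fin n × ℝ)) ⊆
            insert t1 ({t | t ∈ T ∧ t ≠ t1 ∧ (t1.1 = t.1 ∨ t1.1 = t.2.1)} ∪
              {t | t ∈ T ∧ t ≠ t1 ∧ (t1.2.1 = t.1 ∨ t1.2.1 = t.2.1)}) := by
          intro t ht
          by_cases he : t = t1
          · exact Or.inl he
          · right
            rcases ht.2 with h | h | h | h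
            · exact Or.inl ⟨ht.1, he, Or.inl h⟩
            · exact Or.inl ⟨ht.1, he, Or.inr h⟩
            · exact Or.inr ⟨ht.1, he, Or.inl h⟩
            · exact Or.inr ⟨ht.1, he, Or.inr h⟩
        have hc1 := Set.ncard_le_ncard hsub2 ((hMafin.union hMbfin).insert t1)
        have hc2 := Set.ncard_insert_le t1
          ({t | t ∈ T ∧ t ≠ t1 ∧ (t1.1 = t.1 ∨ t1.1 = t.2.1)} ∪
            {t | t ∈ T ∧ t ≠ t1 ∧ (t1.2.1 = t.1 ∨ t1.2.1 = t.2.1)})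
        have hc3 := Set.ncard_union_le
          ({t | t ∈ T ∧ t ≠ t1 ∧ (t1.1 = t.1 ∨ t1.1 = t.2.1)} : Set (Fin n × Fin n × ℝ))
          {t | t ∈ T ∧ t ≠ t1 ∧ (t1.2.1 = t.1 ∨ t1.2.1 = t.2.1)}
        omega
      -- D : edges disjoint from t1
      have hDfin : (T \ {t | t ∈ T ∧ (t1.1 = t.1 ∨ t1.1 = t.2.1 ∨ t1.2.1 = t.1 ∨
          t1.2.1 = t.2.1)}).Finite := hTfin.subset diff_subset
      have hDcard : 3 ≤ (T \ {t | t ∈ T ∧ (t1.1 = t.1 ∨ t1.1 = t.2.1 ∨ t1.2.1 = t.1 ∨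
          t1.2.1 = t.2.1)}).ncard := by
        have := Set.ncard_diff hMsub hMfin
        omega
      have hDT : ∀ t ∈ (T \ {t | t ∈ T ∧ (t1.1 = t.1 ∨ t1.1 = t.2.1 ∨ t1.2.1 = t.1 ∨
          t1.2.1 = t.2.1)}), t ∈ T := fun t ht => ht.1
      have hDdis : ∀ t ∈ (T \ {t | t ∈ T ∧ (t1.1 = t.1 ∨ t1.1 = t.2.1 ∨ t1.2.1 = t.1 ∨
          t1.2.1 = t.2.1)}), Stmt4Aux.Dis t1 t := by
        intro t ht
        have hne : ¬(t1.1 = t.1 ∨ t1.1 = t.2.1 ∨ t1.2.1 = t.1 ∨ t1.2.1 = t.2.1) :=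
          fun hc => ht.2 ⟨ht.1, hc⟩
        push_neg at hne
        exact ⟨hne.1, hne.2.1, hne.2.2.1, hne.2.2.2⟩
      obtain ⟨t3, ht3, t4, ht4, t5, ht5, h34, h35, h45⟩ := (Set.two_lt_ncard hDfin).mp (by omega)
      have ht3T : t3 ∈ T := hDT t3 ht3
      have ht4T : t4 ∈ T := hDT t4 ht4
      have ht5T : t5 ∈ T := hDT t5 ht5
      have hpairne : ∀ ta ∈ T, ∀ tb ∈ T, ta ≠ tb → ¬(ta.1 = tb.1 ∧ ta.2.1 = tb.2.1) :=
        fun ta hta tb htb hne hc => hne (hnd ta hta tb htb hc.1 hc.2)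
      -- finisher : two distinct disjoint edges in D give a contradiction
      have hfinish : ∀ tx ∈ (T \ {t | t ∈ T ∧ (t1.1 = t.1 ∨ t1.1 = t.2.1 ∨ t1.2.1 = t.1 ∨
          t1.2.1 = t.2.1)}), ∀ ty ∈ (T \ {t | t ∈ T ∧ (t1.1 = t.1 ∨ t1.1 = t.2.1 ∨
          t1.2.1 = t.1 ∨ t1.2.1 = t.2.1)}), Stmt4Aux.Dis tx ty → tx ≠ ty → False := by
        intro tx hx ty hy hdis hne
        have htxT : tx ∈ T := hDT tx hx
        have htyT : ty ∈ T := hDT ty hy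
        have hsub3 : ({t1, tx, ty} : Set (Fin n × Fin n × ℝ)) ⊆ T := by
          intro t ht
          simp only [Set.mem_insert_iff, Set.mem_singleton_iff] at ht
          rcases ht with rfl | rfl | rfl
          exacts [ht1, htxT, htyT]
        have h3le : ({t1, tx, ty} : Set (Fin n × Fin n × ℝ)).ncard ≤ 3 := by
          have i1 := Set.ncard_insert_le t1 ({tx, ty} : Set (Fin n × Fin n × ℝ))
          have i2 := Set.ncard_insert_le tx ({ty} : Set (Fin n × Fin n × ℝ))
          have i3 := Set.ncard_singleton ty
          omega
        have hrest : 1 ≤ (T \ ({t1, tx, ty} : Set (Fin n × Fin n × ℝ))).ncard := by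
          have := Set.ncard_diff hsub3 (toFinite _)
          omega
        obtain ⟨td, htd⟩ := Set.nonempty_of_ncard_ne_zero (s := T \ {t1, tx, ty}) (by omega)
        have htdT : td ∈ T := htd.1
        have htdne : td ≠ t1 ∧ td ≠ tx ∧ td ≠ ty := by
          have h := htd.2
          simp only [Set.mem_insert_iff, Set.mem_singleton_iff] at h
          push_neg at h
          exact h
        exact Stmt4Aux.P1 Q hdim t1 tx ty td (hmemT ht1).1 (hmemT htxT).1 (hmemT htyT).1
          (hmemT htdT).1 (hmemT ht1).2.1 (hmemT htxT).2.1 (hmemT htyT).2.1 (hmemT htdT).2.1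
          (hmemT ht1).2.2 (hmemT htxT).2.2 (hmemT htyT).2.2 (hmemT htdT).2.2
          (hDdis tx hx) (hDdis ty hy) hdis
          (hpairne t1 ht1 td htdT (Ne.symm htdne.1))
          (hpairne tx htxT td htdT (Ne.symm htdne.2.1))
          (hpairne ty htyT td htdT (Ne.symm htdne.2.2))
      by_cases h2dis : Stmt4Aux.Dis t3 t4 ∨ Stmt4Aux.Dis t3 t5 ∨ Stmt4Aux.Dis t4 t5
      · rcases h2dis with h | h | h
        exacts [hfinish t3 ht3 t4 ht4 h h34, hfinish t3 ht3 t5 ht5 h h35,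
          hfinish t4 ht4 t5 ht5 h h45]
      · push_neg at h2dis
        obtain ⟨hnd34, hnd35, hnd45⟩ := h2dis
        have hshare : ∀ tu tv : Fin n × Fin n × ℝ, ¬Stmt4Aux.Dis tu tv →
            ∃ x : Fin n, (x = tu.1 ∨ x = tu.2.1) ∧ (x = tv.1 ∨ x = tv.2.1) := by
          intro tu tv h
          by_cases h1 : tu.1 = tv.1
          · exact ⟨tu.1, Or.inl rfl, Or.inl h1⟩
          by_cases h2 : tu.1 = tv.2.1
          · exact ⟨tu.1, Or.inl rfl, Or.inr h2⟩
          by_cases h3 : tu.2.1 = tv.1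
          · exact ⟨tu.2.1, Or.inr rfl, Or.inl h3⟩
          by_cases h4 : tu.2.1 = tv.2.1
          · exact ⟨tu.2.1, Or.inr rfl, Or.inr h4⟩
          exact absurd ⟨h1, h2, h3, h4⟩ h
        obtain ⟨x, hx3, hx4⟩ := hshare t3 t4 hnd34
        obtain ⟨y, hy3, hy5⟩ := hshare t3 t5 hnd35
        obtain ⟨z, hz4, hz5⟩ := hshare t4 t5 hnd45
        have hxy : x ≠ y := fun h =>
          hdeg x t3 ht3T t4 ht4T t5 ht5T h34 h35 h45 hx3 hx4 (by rw [h]; exact hy5)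
        have hxz : x ≠ z := fun h =>
          hdeg x t3 ht3T t4 ht4T t5 ht5T h34 h35 h45 hx3 hx4 (by rw [h]; exact hz5)
        have hyz : y ≠ z := fun h =>
          hdeg y t3 ht3T t4 ht4T t5 ht5T h34 h35 h45 hy3 (by rw [h]; exact hz4) hy5
        have pc3 := Stmt4Aux.pair_cases hxy hx3 hy3
        have pc4 := Stmt4Aux.pair_cases hxz hx4 hz4
        by_cases hextra : ∃ t6 ∈ (T \ {t | t ∈ T ∧ (t1.1 = t.1 ∨ t1.1 = t.2.1 ∨
            t1.2.1 = t.1 ∨ t1.2.1 = t.2.1)}), t6 ≠ t3 ∧ t6 ≠ t4 ∧ t6 ≠ t5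
        · obtain ⟨t6, ht6, hn3, hn4, hn5⟩ := hextra
          have ht6T : t6 ∈ T := hDT t6 ht6
          have hx6 : ¬(x = t6.1 ∨ x = t6.2.1) := fun hc =>
            hdeg x t6 ht6T t3 ht3T t4 ht4T hn3 hn4 h34 hc hx3 hx4
          have hy6 : ¬(y = t6.1 ∨ y = t6.2.1) := fun hc =>
            hdeg y t6 ht6T t3 ht3T t5 ht5T hn3 hn5 h35 hc hy3 hy5
          have hx6' : t6.1 ≠ x ∧ t6.2.1 ≠ x :=
            ⟨fun h => hx6 (Or.inl h.symm), fun h => hx6 (Or.inr h.symm)⟩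
          have hy6' : t6.1 ≠ y ∧ t6.2.1 ≠ y :=
            ⟨fun h => hy6 (Or.inl h.symm), fun h => hy6 (Or.inr h.symm)⟩
          have hdis63 : Stmt4Aux.Dis t6 t3 := by
            rcases pc3 with ⟨e1, e2⟩ | ⟨e1, e2⟩
            · exact ⟨by rw [e1]; exact hx6'.1, by rw [e2]; exact hy6'.1,
                by rw [e1]; exact hx6'.2, by rw [e2]; exact hy6'.2⟩
            · exact ⟨by rw [e1]; exact hy6'.1, by rw [e2]; exact hx6'.1,
                by rw [e1]; exact hy6'.2, by rw [e2]; exact hx6'.2⟩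
          exact hfinish t6 ht6 t3 ht3 hdis63 hn3
        · -- D = {t3, t4, t5}
          have hDsub : (T \ {t | t ∈ T ∧ (t1.1 = t.1 ∨ t1.1 = t.2.1 ∨ t1.2.1 = t.1 ∨
              t1.2.1 = t.2.1)}) ⊆ ({t3, t4, t5} : Set (Fin n × Fin n × ℝ)) := by
            intro t ht
            by_contra hc
            simp only [Set.mem_insert_iff, Set.mem_singleton_iff] at hc
            push_neg at hc
            exact hextra ⟨t, ht, hc⟩
          have hD3 : (T \ {t | t ∈ T ∧ (t1.1 = t.1 ∨ t1.1 = t.2.1 ∨ t1.2.1 = t.1 ∨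
              t1.2.1 = t.2.1)}).ncard ≤ 3 := by
            have hle := Set.ncard_le_ncard hDsub (toFinite _)
            have i1 := Set.ncard_insert_le t3 ({t4, t5} : Set (Fin n × Fin n × ℝ))
            have i2 := Set.ncard_insert_le t4 ({t5} : Set (Fin n × Fin n × ℝ))
            have i3 := Set.ncard_singleton t5
            omega
          have hMcard2 : 2 ≤ ({t | t ∈ T ∧ (t1.1 = t.1 ∨ t1.1 = t.2.1 ∨ t1.2.1 = t.1 ∨
              t1.2.1 = t.2.1)} : Set (Fin n × Fin n × ℝ)).ncard := by
            have hunion : T ⊆ {t | t ∈ T ∧ (t1.1 = t.1 ∨ t1.1 = t.2.1 ∨ t1.2.1 = t.1 ∨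
                t1.2.1 = t.2.1)} ∪ (T \ {t | t ∈ T ∧ (t1.1 = t.1 ∨ t1.1 = t.2.1 ∨
                t1.2.1 = t.1 ∨ t1.2.1 = t.2.1)}) := by
              intro t ht
              by_cases h : t ∈ {t | t ∈ T ∧ (t1.1 = t.1 ∨ t1.1 = t.2.1 ∨ t1.2.1 = t.1 ∨
                  t1.2.1 = t.2.1)}
              · exact Or.inl h
              · exact Or.inr ⟨ht, h⟩
            have hu1 := Set.ncard_le_ncard hunion (hMfin.union hDfin)
            have hu2 := Set.ncard_union_le
              ({t | t ∈ T ∧ (t1.1 = t.1 ∨ t1.1 = t.2.1 ∨ t1.2.1 = t.1 ∨ t1.2.1 = t.2.1)} :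
                Set (Fin n × Fin n × ℝ))
              (T \ {t | t ∈ T ∧ (t1.1 = t.1 ∨ t1.1 = t.2.1 ∨ t1.2.1 = t.1 ∨ t1.2.1 = t.2.1)})
            omega
          obtain ⟨ta, hta, tb, htb, htab⟩ := (Set.one_lt_ncard hMfin).mp (by omega)
          have hex2 : ∃ t2 ∈ ({t | t ∈ T ∧ (t1.1 = t.1 ∨ t1.1 = t.2.1 ∨ t1.2.1 = t.1 ∨
              t1.2.1 = t.2.1)} : Set (Fin n × Fin n × ℝ)), t2 ≠ t1 := by
            rcases eq_or_ne ta t1 with rfl | hne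
            · exact ⟨tb, htb, Ne.symm htab⟩
            · exact ⟨ta, hta, hne⟩
          obtain ⟨t2, ht2M, ht2ne⟩ := hex2
          have ht2T : t2 ∈ T := ht2M.1
          have htD1 : ∀ t ∈ (T \ {t | t ∈ T ∧ (t1.1 = t.1 ∨ t1.1 = t.2.1 ∨ t1.2.1 = t.1 ∨
              t1.2.1 = t.2.1)}), t ≠ t1 := by
            intro t ht hh
            exact ht.2 (hh ▸ ht1M)
          have htD2 : ∀ t ∈ (T \ {t | t ∈ T ∧ (t1.1 = t.1 ∨ t1.1 = t.2.1 ∨ t1.2.1 = t.1 ∨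
              t1.2.1 = t.2.1)}), t ≠ t2 := by
            intro t ht hh
            exact ht.2 (hh ▸ ht2M)
          have hx2 : ¬(x = t2.1 ∨ x = t2.2.1) := fun hc =>
            hdeg x t2 ht2T t3 ht3T t4 ht4T (Ne.symm (htD2 t3 ht3)) (Ne.symm (htD2 t4 ht4))
              h34 hc hx3 hx4
          have hy2 : ¬(y = t2.1 ∨ y = t2.2.1) := fun hc =>
            hdeg y t2 ht2T t3 ht3T t5 ht5T (Ne.symm (htD2 t3 ht3)) (Ne.symm (htD2 t5 ht5))
              h35 hc hy3 hy5
          have hz2 : ¬(z = t2.1 ∨ z = t2.2.1) := fun hc =>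
            hdeg z t2 ht2T t4 ht4T t5 ht5T (Ne.symm (htD2 t4 ht4)) (Ne.symm (htD2 t5 ht5))
              h45 hc hz4 hz5
          have hp12 : ¬(t1.1 = t2.1 ∧ t1.2.1 = t2.2.1) :=
            hpairne t1 ht1 t2 ht2T (Ne.symm ht2ne)
          obtain ⟨m1, hm1, hm1a, hm1b⟩ :=
            Stmt4Aux.private_vtx (hmemT ht1).1 (hmemT ht2T).1 hp12
          have hy4 : y ≠ t4.1 ∧ y ≠ t4.2.1 := by
            rcases pc4 with ⟨e1, e2⟩ | ⟨e1, e2⟩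
            · exact ⟨by rw [e1]; exact Ne.symm hxy, by rw [e2]; exact hyz⟩
            · exact ⟨by rw [e1]; exact hyz, by rw [e2]; exact Ne.symm hxy⟩
          have hy1 : y ≠ t1.1 ∧ y ≠ t1.2.1 := by
            have hd := hDdis t3 ht3
            rcases hy3 with rfl | rfl
            · exact ⟨Ne.symm hd.1, Ne.symm hd.2.2.1⟩
            · exact ⟨Ne.symm hd.2.1, Ne.symm hd.2.2.2⟩
          have hz1 : z ≠ t1.1 ∧ z ≠ t1.2.1 := by
            have hd := hDdis t4 ht4
            rcases hz4 with rfl | rfl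
            · exact ⟨Ne.symm hd.1, Ne.symm hd.2.2.1⟩
            · exact ⟨Ne.symm hd.2.1, Ne.symm hd.2.2.2⟩
          have hy2' : y ≠ t2.1 ∧ y ≠ t2.2.1 :=
            ⟨fun h => hy2 (Or.inl h), fun h => hy2 (Or.inr h)⟩
          have hz2' : z ≠ t2.1 ∧ z ≠ t2.2.1 :=
            ⟨fun h => hz2 (Or.inl h), fun h => hz2 (Or.inr h)⟩
          apply Stmt4Aux.indep4_false Q hdim
            ![Stmt4Aux.vec n t3, Stmt4Aux.vec n t4, Stmt4Aux.vec n t1, Stmt4Aux.vec n t2] ?_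
            ![y, z, m1, t2.1] ?_ ?_
          · intro k; fin_cases k
            exacts [(hmemT ht3T).2.2, (hmemT ht4T).2.2, (hmemT ht1).2.2, (hmemT ht2T).2.2]
          · intro k; fin_cases k
            · exact Stmt4Aux.vec_nonzero (hmemT ht3T).1 (hmemT ht3T).2.1 hy3
            · exact Stmt4Aux.vec_nonzero (hmemT ht4T).1 (hmemT ht4T).2.1 hz4
            · exact Stmt4Aux.vec_nonzero (hmemT ht1).1 (hmemT ht1).2.1 hm1
            · exact Stmt4Aux.vec_nonzero (hmemT ht2T).1 (hmemT ht2T).2.1 (Or.inl rfl)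
          · intro k l hkl
            fin_cases k <;> fin_cases l <;>
              first
                | exact absurd hkl (by decide)
                | exact Stmt4Aux.vec_zero hy4.1 hy4.2
                | exact Stmt4Aux.vec_zero hy1.1 hy1.2
                | exact Stmt4Aux.vec_zero hy2'.1 hy2'.2
                | exact Stmt4Aux.vec_zero hz1.1 hz1.2
                | exact Stmt4Aux.vec_zero hz2'.1 hz2'.2
                | exact Stmt4Aux.vec_zero hm1a hm1b
end

section
/- Let n ≥ 4, let i, j, l, s be four distinct indices in {1, …, n}, and let δ_1, δ_2, δ_3 ∈ {+1, −1}. Then the orthogonal complement of the vector v = e_i + δ_1 e_j + δ_2 e_l + δ_3 e_s inside the 4-dimensional subspace U spanned by {e_i, e_j, e_l, e_s} contains exactly 12 roots of Φ_{B_n}, and all of them are long. -/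
/-! ### Auxiliary material -/

/-- A bookkeeping map transporting counting problems from `ℝ` to `ℤ`. -/
noncomputable def sgnZ (r : ℝ) : ℤ := if r = 1 then 1 else if r = -1 then -1 else 0

@[simp] lemma sgnZ_one : sgnZ 1 = 1 := by simp [sgnZ]
@[simp] lemma sgnZ_neg_one : sgnZ (-1) = -1 := by norm_num [sgnZ]
@[simp] lemma sgnZ_zero : sgnZ 0 = 0 := by norm_num [sgnZ]

lemma setOf_mem_cons {α : Type*} (a : α) (l : List α) :
    {x | x ∈ a :: l} = insert a {x | x ∈ l} := by ext y; simp
lemma setOf_mem_singleton {α : Type*} (a : α) : ({a} : Set α) = {x | x ∈ [a]} := by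
  ext y; simp
lemma ncard_setOf_list {α : Type*} [DecidableEq α] (l : List α) (h : l.Nodup) :
    {x | x ∈ l}.ncard = l.length := by
  rw [← List.coe_toFinset, Set.ncard_coe_finset, List.toFinset_card_of_nodup h]
lemma ncard_setOf_list_le {α : Type*} [DecidableEq α] (l : List α) :
    {x | x ∈ l}.ncard ≤ l.length := by
  rw [← List.coe_toFinset, Set.ncard_coe_finset]; exact l.toFinset_card_le

/-- The twelve candidate roots. -/
def Tset (n : ℕ) (i j l s : Fin n) (δ₁ δ₂ δ₃ : ℝ) : Set (EuclideanSpace ℝ (Fin n)) :=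
  {stdBasis n i - δ₁ • stdBasis n j, -(stdBasis n i - δ₁ • stdBasis n j),
    stdBasis n i - δ₂ • stdBasis n l, -(stdBasis n i - δ₂ • stdBasis n l),
    stdBasis n i - δ₃ • stdBasis n s, -(stdBasis n i - δ₃ • stdBasis n s),
    stdBasis n j - (δ₁ * δ₂) • stdBasis n l, -(stdBasis n j - (δ₁ * δ₂) • stdBasis n l),
    stdBasis n j - (δ₁ * δ₃) • stdBasis n s, -(stdBasis n j - (δ₁ * δ₃) • stdBasis n s),
    stdBasis n l - (δ₂ * δ₃) • stdBasis n s, -(stdBasis n l - (δ₂ * δ₃) • stdBasis n s)}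

lemma Tset_neg {n : ℕ} (i j l s : Fin n) (δ₁ δ₂ δ₃ : ℝ) :
    ∀ x ∈ Tset n i j l s δ₁ δ₂ δ₃, -x ∈ Tset n i j l s δ₁ δ₂ δ₃ := by
  intro x hx
  unfold Tset at hx ⊢
  simp only [Set.mem_insert_iff, Set.mem_singleton_iff] at hx ⊢
  rcases hx with rfl | rfl | rfl | rfl | rfl | rfl | rfl | rfl | rfl | rfl | rfl | rfl
  · exact Or.inr (Or.inl rfl)
  · rw [neg_neg]; exact Or.inl rfl
  · exact Or.inr (Or.inr (Or.inr (Or.inl rfl)))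
  · rw [neg_neg]; exact Or.inr (Or.inr (Or.inl rfl))
  · exact Or.inr (Or.inr (Or.inr (Or.inr (Or.inr (Or.inl rfl)))))
  · rw [neg_neg]; exact Or.inr (Or.inr (Or.inr (Or.inr (Or.inl rfl))))
  · exact Or.inr (Or.inr (Or.inr (Or.inr (Or.inr (Or.inr (Or.inr (Or.inl rfl)))))))
  · rw [neg_neg]; exact Or.inr (Or.inr (Or.inr (Or.inr (Or.inr (Or.inr (Or.inl rfl))))))
  · exact Or.inr (Or.inr (Or.inr (Or.inr (Or.inr (Or.inr (Or.inr (Or.inr (Or.inr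
      (Or.inl rfl)))))))))
  · rw [neg_neg]
    exact Or.inr (Or.inr (Or.inr (Or.inr (Or.inr (Or.inr (Or.inr (Or.inr (Or.inl rfl))))))))
  · exact Or.inr (Or.inr (Or.inr (Or.inr (Or.inr (Or.inr (Or.inr (Or.inr (Or.inr (Or.inr
      (Or.inr rfl))))))))))
  · rw [neg_neg]
    exact Or.inr (Or.inr (Or.inr (Or.inr (Or.inr (Or.inr (Or.inr (Or.inr (Or.inr (Or.inr
      (Or.inl rfl))))))))))

lemma Tset_smul {n : ℕ} (i j l s : Fin n) (δ₁ δ₂ δ₃ : ℝ) (c : ℝ) (hc : c = 1 ∨ c = -1) :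
    ∀ x ∈ Tset n i j l s δ₁ δ₂ δ₃, c • x ∈ Tset n i j l s δ₁ δ₂ δ₃ := by
  rcases hc with rfl | rfl
  · intro x hx; simpa using hx
  · intro x hx
    have := Tset_neg i j l s δ₁ δ₂ δ₃ x hx
    simpa [neg_smul, one_smul] using this

lemma Tset_long {n : ℕ} (i j l s : Fin n)
    (hij : i ≠ j) (hil : i ≠ l) (his : i ≠ s) (hjl : j ≠ l) (hjs : j ≠ s) (hls : l ≠ s)
    (δ₁ δ₂ δ₃ : ℝ)
    (hδ₁ : δ₁ = 1 ∨ δ₁ = -1) (hδ₂ : δ₂ = 1 ∨ δ₂ = -1) (hδ₃ : δ₃ = 1 ∨ δ₃ = -1) :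
    ∀ x ∈ Tset n i j l s δ₁ δ₂ δ₃, IsLongRoot n x := by
  intro x hx
  unfold Tset at hx
  simp only [Set.mem_insert_iff, Set.mem_singleton_iff] at hx
  rcases hx with rfl | rfl | rfl | rfl | rfl | rfl | rfl | rfl | rfl | rfl | rfl | rfl
  · exact ⟨i, j, hij, 1, -δ₁, Or.inl rfl, by rcases hδ₁ with rfl | rfl <;> norm_num,
      by module⟩
  · exact ⟨i, j, hij, -1, δ₁, Or.inr rfl, hδ₁, by module⟩
  · exact ⟨i, l, hil, 1, -δ₂, Or.inl rfl, by rcases hδ₂ with rfl | rfl <;> norm_num,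
      by module⟩
  · exact ⟨i, l, hil, -1, δ₂, Or.inr rfl, hδ₂, by module⟩
  · exact ⟨i, s, his, 1, -δ₃, Or.inl rfl, by rcases hδ₃ with rfl | rfl <;> norm_num,
      by module⟩
  · exact ⟨i, s, his, -1, δ₃, Or.inr rfl, hδ₃, by module⟩
  · exact ⟨j, l, hjl, 1, -(δ₁ * δ₂), Or.inl rfl,
      by rcases hδ₁ with rfl | rfl <;> rcases hδ₂ with rfl | rfl <;> norm_num, by module⟩
  · exact ⟨j, l, hjl, -1, δ₁ * δ₂, Or.inr rfl,
      by rcases hδ₁ with rfl | rfl <;> rcases hδ₂ with rfl | rfl <;> norm_num, by module⟩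
  · exact ⟨j, s, hjs, 1, -(δ₁ * δ₃), Or.inl rfl,
      by rcases hδ₁ with rfl | rfl <;> rcases hδ₃ with rfl | rfl <;> norm_num, by module⟩
  · exact ⟨j, s, hjs, -1, δ₁ * δ₃, Or.inr rfl,
      by rcases hδ₁ with rfl | rfl <;> rcases hδ₃ with rfl | rfl <;> norm_num, by module⟩
  · exact ⟨l, s, hls, 1, -(δ₂ * δ₃), Or.inl rfl,
      by rcases hδ₂ with rfl | rfl <;> rcases hδ₃ with rfl | rfl <;> norm_num, by module⟩
  · exact ⟨l, s, hls, -1, δ₂ * δ₃, Or.inr rfl,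
      by rcases hδ₂ with rfl | rfl <;> rcases hδ₃ with rfl | rfl <;> norm_num, by module⟩

set_option maxHeartbeats 1000000 in
lemma Tset_card {n : ℕ} (i j l s : Fin n)
    (hij : i ≠ j) (hil : i ≠ l) (his : i ≠ s) (hjl : j ≠ l) (hjs : j ≠ s) (hls : l ≠ s)
    (δ₁ δ₂ δ₃ : ℝ)
    (hδ₁ : δ₁ = 1 ∨ δ₁ = -1) (hδ₂ : δ₂ = 1 ∨ δ₂ = -1) (hδ₃ : δ₃ = 1 ∨ δ₃ = -1) :
    (Tset n i j l s δ₁ δ₂ δ₃).ncard = 12 := by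
  classical
  have hfin : (Tset n i j l s δ₁ δ₂ δ₃).Finite := by
    unfold Tset
    repeat apply Set.Finite.insert
    exact Set.finite_singleton _
  have hub : (Tset n i j l s δ₁ δ₂ δ₃).ncard ≤ 12 := by
    unfold Tset
    simp only [setOf_mem_singleton, ← setOf_mem_cons]
    exact le_trans (ncard_setOf_list_le _) (by norm_num)
  have hΦ : ((fun x : EuclideanSpace ℝ (Fin n) =>
      sgnZ (x i) + 3 * sgnZ (x j) + 9 * sgnZ (x l) + 27 * sgnZ (x s)) ''
      Tset n i j l s δ₁ δ₂ δ₃).ncard = 12 := by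
    unfold Tset
    rcases hδ₁ with rfl | rfl <;> rcases hδ₂ with rfl | rfl <;> rcases hδ₃ with rfl | rfl <;>
      · simp only [Set.image_insert_eq, Set.image_singleton]
        simp only [setOf_mem_singleton, ← setOf_mem_cons]
        rw [ncard_setOf_list]
        · rfl
        norm_num [List.nodup_cons, List.mem_cons, List.not_mem_nil, stdBasis,
          EuclideanSpace.single_apply, PiLp.sub_apply, PiLp.neg_apply,
          PiLp.smul_apply, hij, hil, his, hjl, hjs, hls, Ne.symm hij, Ne.symm hil,
          Ne.symm his, Ne.symm hjl, Ne.symm hjs, Ne.symm hls]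
  have hlb : 12 ≤ (Tset n i j l s δ₁ δ₂ δ₃).ncard := hΦ ▸ Set.ncard_image_le hfin
  exact le_antisymm hub hlb

lemma memW_iff {n : ℕ} (i j l s : Fin n)
    (hij : i ≠ j) (hil : i ≠ l) (his : i ≠ s) (hjl : j ≠ l) (hjs : j ≠ s) (hls : l ≠ s)
    (δ₁ δ₂ δ₃ : ℝ) (x : EuclideanSpace ℝ (Fin n)) :
    x ∈ Submodule.span ℝ {stdBasis n i, stdBasis n j, stdBasis n l, stdBasis n s} ⊓
      (Submodule.span ℝ
        {stdBasis n i + δ₁ • stdBasis n j + δ₂ • stdBasis n l + δ₃ • stdBasis n s})ᗮ ↔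
    ((∀ k, k ≠ i → k ≠ j → k ≠ l → k ≠ s → x k = 0) ∧
      x i + δ₁ * x j + δ₂ * x l + δ₃ * x s = 0) := by
  have hinner : ∀ y : EuclideanSpace ℝ (Fin n),
      (inner ℝ (stdBasis n i + δ₁ • stdBasis n j + δ₂ • stdBasis n l + δ₃ • stdBasis n s) y
        : ℝ) = y i + δ₁ * y j + δ₂ * y l + δ₃ * y s := by
    intro y
    simp [stdBasis, inner_add_left, real_inner_smul_left, EuclideanSpace.inner_single_left]
  rw [Submodule.mem_inf]
  constructor
  · rintro ⟨h1, h2⟩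
    constructor
    · intro k hki hkj hkl hks
      clear h2
      induction h1 using Submodule.span_induction with
      | mem y hy =>
        rcases hy with rfl | rfl | rfl | rfl <;>
          simp [stdBasis, EuclideanSpace.single_apply, hki, hkj, hkl, hks]
      | zero => simp
      | add y z _ _ hy hz => simp [PiLp.add_apply, hy, hz]
      | smul c y _ hy => simp [PiLp.smul_apply, hy]
    · have h3 := Submodule.mem_orthogonal_singleton_iff_inner_right.mp h2
      rwa [hinner] at h3
  · rintro ⟨h1, h2⟩
    have hx : x = x i • stdBasis n i + x j • stdBasis n j + x l • stdBasis n l +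
        x s • stdBasis n s := by
      ext k
      by_cases hki : k = i
      · subst hki
        simp [stdBasis, EuclideanSpace.single_apply, hij, hil, his, PiLp.add_apply,
          PiLp.smul_apply]
      by_cases hkj : k = j
      · subst hkj
        simp [stdBasis, EuclideanSpace.single_apply, Ne.symm hij, hjl, hjs, PiLp.add_apply,
          PiLp.smul_apply]
      by_cases hkl : k = l
      · subst hkl
        simp [stdBasis, EuclideanSpace.single_apply, Ne.symm hil, Ne.symm hjl, hls,
          PiLp.add_apply, PiLp.smul_apply]
      by_cases hks : k = s
      · subst hks
        simp [stdBasis, EuclideanSpace.single_apply, Ne.symm his, Ne.symm hjs, Ne.symm hls,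
          PiLp.add_apply, PiLp.smul_apply]
      · simp [stdBasis, EuclideanSpace.single_apply, hki, hkj, hkl, hks, PiLp.add_apply,
          PiLp.smul_apply, h1 k hki hkj hkl hks]
    constructor
    · rw [hx]
      refine Submodule.add_mem _ (Submodule.add_mem _ (Submodule.add_mem _ ?_ ?_) ?_) ?_ <;>
        exact Submodule.smul_mem _ _ (Submodule.subset_span (by simp))
    · exact Submodule.mem_orthogonal_singleton_iff_inner_right.mpr (by rw [hinner]; exact h2)

set_option maxHeartbeats 1600000 in
lemma key_subset {n : ℕ} (i j l s : Fin n)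
    (hij : i ≠ j) (hil : i ≠ l) (his : i ≠ s) (hjl : j ≠ l) (hjs : j ≠ s) (hls : l ≠ s)
    (δ₁ δ₂ δ₃ : ℝ)
    (hδ₁ : δ₁ = 1 ∨ δ₁ = -1) (hδ₂ : δ₂ = 1 ∨ δ₂ = -1) (hδ₃ : δ₃ = 1 ∨ δ₃ = -1)
    (x : EuclideanSpace ℝ (Fin n))
    (hxW : x ∈ Submodule.span ℝ {stdBasis n i, stdBasis n j, stdBasis n l, stdBasis n s} ⊓
      (Submodule.span ℝ
        {stdBasis n i + δ₁ • stdBasis n j + δ₂ • stdBasis n l + δ₃ • stdBasis n s})ᗮ)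
    (hxPhi : x ∈ PhiB n) : x ∈ Tset n i j l s δ₁ δ₂ δ₃ := by
  have hd1 : δ₁ * δ₁ = 1 := by rcases hδ₁ with rfl | rfl <;> norm_num
  have hd2 : δ₂ * δ₂ = 1 := by rcases hδ₂ with rfl | rfl <;> norm_num
  have hd3 : δ₃ * δ₃ = 1 := by rcases hδ₃ with rfl | rfl <;> norm_num
  have m1 : stdBasis n i - δ₁ • stdBasis n j ∈ Tset n i j l s δ₁ δ₂ δ₃ := by
    unfold Tset; exact Set.mem_insert _ _
  have m2 : stdBasis n i - δ₂ • stdBasis n l ∈ Tset n i j l s δ₁ δ₂ δ₃ := by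
    unfold Tset
    simp
  have m3 : stdBasis n i - δ₃ • stdBasis n s ∈ Tset n i j l s δ₁ δ₂ δ₃ := by
    unfold Tset
    simp
  have m4 : stdBasis n j - (δ₁ * δ₂) • stdBasis n l ∈ Tset n i j l s δ₁ δ₂ δ₃ := by
    unfold Tset
    simp
  have m5 : stdBasis n j - (δ₁ * δ₃) • stdBasis n s ∈ Tset n i j l s δ₁ δ₂ δ₃ := by
    unfold Tset
    simp
  have m6 : stdBasis n l - (δ₂ * δ₃) • stdBasis n s ∈ Tset n i j l s δ₁ δ₂ δ₃ := by
    unfold Tset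
    simp
  obtain ⟨hx0, hxi⟩ := (memW_iff i j l s hij hil his hjl hjs hls δ₁ δ₂ δ₃ x).mp hxW
  rcases hxPhi with ⟨a, ha | ha⟩ | ⟨a, b, hab, ε₁, ε₂, hε₁, hε₂, hx⟩
  · exfalso
    subst ha
    have ha4 : i = a ∨ j = a ∨ l = a ∨ s = a := by
      by_contra h
      push_neg at h
      have h0 := hx0 a (Ne.symm h.1) (Ne.symm h.2.1) (Ne.symm h.2.2.1) (Ne.symm h.2.2.2)
      simp [stdBasis, EuclideanSpace.single_apply] at h0
    rcases ha4 with rfl | rfl | rfl | rfl <;>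
      simp [stdBasis, EuclideanSpace.single_apply, hij, hil, his, hjl, hjs, hls,
        Ne.symm hij, Ne.symm hil, Ne.symm his, Ne.symm hjl, Ne.symm hjs,
        Ne.symm hls] at hxi <;>
      rcases hδ₁ with rfl | rfl <;> rcases hδ₂ with rfl | rfl <;>
      rcases hδ₃ with rfl | rfl <;> norm_num at hxi
  · exfalso
    subst ha
    have ha4 : i = a ∨ j = a ∨ l = a ∨ s = a := by
      by_contra h
      push_neg at h
      have h0 := hx0 a (Ne.symm h.1) (Ne.symm h.2.1) (Ne.symm h.2.2.1) (Ne.symm h.2.2.2)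
      simp [stdBasis, EuclideanSpace.single_apply, PiLp.neg_apply] at h0
    rcases ha4 with rfl | rfl | rfl | rfl <;>
      simp [stdBasis, EuclideanSpace.single_apply, PiLp.neg_apply, hij, hil, his, hjl,
        hjs, hls, Ne.symm hij, Ne.symm hil, Ne.symm his, Ne.symm hjl, Ne.symm hjs,
        Ne.symm hls] at hxi <;>
      rcases hδ₁ with rfl | rfl <;> rcases hδ₂ with rfl | rfl <;>
      rcases hδ₃ with rfl | rfl <;> norm_num at hxi
  · subst hx
    have ha4 : i = a ∨ j = a ∨ l = a ∨ s = a := by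
      by_contra h
      push_neg at h
      have h0 := hx0 a (Ne.symm h.1) (Ne.symm h.2.1) (Ne.symm h.2.2.1) (Ne.symm h.2.2.2)
      simp [stdBasis, EuclideanSpace.single_apply, PiLp.add_apply, PiLp.smul_apply,
        hab, smul_eq_mul] at h0
      rcases hε₁ with rfl | rfl <;> norm_num at h0
    have hb4 : i = b ∨ j = b ∨ l = b ∨ s = b := by
      by_contra h
      push_neg at h
      have h0 := hx0 b (Ne.symm h.1) (Ne.symm h.2.1) (Ne.symm h.2.2.1) (Ne.symm h.2.2.2)
      simp [stdBasis, EuclideanSpace.single_apply, PiLp.add_apply, PiLp.smul_apply,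
        Ne.symm hab, smul_eq_mul] at h0
      rcases hε₂ with rfl | rfl <;> norm_num at h0
    rcases ha4 with rfl | rfl | rfl | rfl
    · rcases hb4 with rfl | rfl | rfl | rfl
      · exact absurd rfl hab
      · simp [stdBasis, EuclideanSpace.single_apply, PiLp.add_apply, PiLp.smul_apply,
          smul_eq_mul, hij, hil, his, hjl, hjs, hls, Ne.symm hij, Ne.symm hil, Ne.symm his,
          Ne.symm hjl, Ne.symm hjs, Ne.symm hls] at hxi
        have he2 : ε₂ = -(1 * δ₁) * ε₁ := by linear_combination δ₁ * hxi - ε₂ * hd1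
        subst he2
        rw [show ε₁ • stdBasis n i + (-(1 * δ₁) * ε₁) • stdBasis n j
            = ε₁ • (stdBasis n i - δ₁ • stdBasis n j) from by module]
        exact Tset_smul i j l s δ₁ δ₂ δ₃ ε₁ hε₁ _ m1
      · simp [stdBasis, EuclideanSpace.single_apply, PiLp.add_apply, PiLp.smul_apply,
          smul_eq_mul, hij, hil, his, hjl, hjs, hls, Ne.symm hij, Ne.symm hil, Ne.symm his,
          Ne.symm hjl, Ne.symm hjs, Ne.symm hls] at hxi
        have he2 : ε₂ = -(1 * δ₂) * ε₁ := by linear_combination δ₂ * hxi - ε₂ * hd2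
        subst he2
        rw [show ε₁ • stdBasis n i + (-(1 * δ₂) * ε₁) • stdBasis n l
            = ε₁ • (stdBasis n i - δ₂ • stdBasis n l) from by module]
        exact Tset_smul i j l s δ₁ δ₂ δ₃ ε₁ hε₁ _ m2
      · simp [stdBasis, EuclideanSpace.single_apply, PiLp.add_apply, PiLp.smul_apply,
          smul_eq_mul, hij, hil, his, hjl, hjs, hls, Ne.symm hij, Ne.symm hil, Ne.symm his,
          Ne.symm hjl, Ne.symm hjs, Ne.symm hls] at hxi
        have he2 : ε₂ = -(1 * δ₃) * ε₁ := by linear_combination δ₃ * hxi - ε₂ * hd3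
        subst he2
        rw [show ε₁ • stdBasis n i + (-(1 * δ₃) * ε₁) • stdBasis n s
            = ε₁ • (stdBasis n i - δ₃ • stdBasis n s) from by module]
        exact Tset_smul i j l s δ₁ δ₂ δ₃ ε₁ hε₁ _ m3
    · rcases hb4 with rfl | rfl | rfl | rfl
      · simp [stdBasis, EuclideanSpace.single_apply, PiLp.add_apply, PiLp.smul_apply,
          smul_eq_mul, hij, hil, his, hjl, hjs, hls, Ne.symm hij, Ne.symm hil, Ne.symm his,
          Ne.symm hjl, Ne.symm hjs, Ne.symm hls] at hxi
        have he2 : ε₂ = -(δ₁ * 1) * ε₁ := by linear_combination hxi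
        subst he2
        have hxeq : ε₁ • stdBasis n j + (-(δ₁ * 1) * ε₁) • stdBasis n i
            = (-(δ₁ * ε₁)) • (stdBasis n i - δ₁ • stdBasis n j) := by
          match_scalars <;>
            first
            | ring1
            | (rcases hδ₁ with rfl | rfl <;> rcases hδ₂ with rfl | rfl <;>
               rcases hδ₃ with rfl | rfl <;> norm_num)
        rw [hxeq]
        exact Tset_smul i j l s δ₁ δ₂ δ₃ _
          (by rcases hδ₁ with rfl | rfl <;> rcases hε₁ with rfl | rfl <;> norm_num) _ m1
      · exact absurd rfl hab
      · simp [stdBasis, EuclideanSpace.single_apply, PiLp.add_apply, PiLp.smul_apply,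
          smul_eq_mul, hij, hil, his, hjl, hjs, hls, Ne.symm hij, Ne.symm hil, Ne.symm his,
          Ne.symm hjl, Ne.symm hjs, Ne.symm hls] at hxi
        have he2 : ε₂ = -(δ₁ * δ₂) * ε₁ := by linear_combination δ₂ * hxi - ε₂ * hd2
        subst he2
        rw [show ε₁ • stdBasis n j + (-(δ₁ * δ₂) * ε₁) • stdBasis n l
            = ε₁ • (stdBasis n j - (δ₁ * δ₂) • stdBasis n l) from by module]
        exact Tset_smul i j l s δ₁ δ₂ δ₃ ε₁ hε₁ _ m4
      · simp [stdBasis, EuclideanSpace.single_apply, PiLp.add_apply, PiLp.smul_apply,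
          smul_eq_mul, hij, hil, his, hjl, hjs, hls, Ne.symm hij, Ne.symm hil, Ne.symm his,
          Ne.symm hjl, Ne.symm hjs, Ne.symm hls] at hxi
        have he2 : ε₂ = -(δ₁ * δ₃) * ε₁ := by linear_combination δ₃ * hxi - ε₂ * hd3
        subst he2
        rw [show ε₁ • stdBasis n j + (-(δ₁ * δ₃) * ε₁) • stdBasis n s
            = ε₁ • (stdBasis n j - (δ₁ * δ₃) • stdBasis n s) from by module]
        exact Tset_smul i j l s δ₁ δ₂ δ₃ ε₁ hε₁ _ m5
    · rcases hb4 with rfl | rfl | rfl | rfl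
      · simp [stdBasis, EuclideanSpace.single_apply, PiLp.add_apply, PiLp.smul_apply,
          smul_eq_mul, hij, hil, his, hjl, hjs, hls, Ne.symm hij, Ne.symm hil, Ne.symm his,
          Ne.symm hjl, Ne.symm hjs, Ne.symm hls] at hxi
        have he2 : ε₂ = -(δ₂ * 1) * ε₁ := by linear_combination hxi
        subst he2
        have hxeq : ε₁ • stdBasis n l + (-(δ₂ * 1) * ε₁) • stdBasis n i
            = (-(δ₂ * ε₁)) • (stdBasis n i - δ₂ • stdBasis n l) := by
          match_scalars <;>
            first
            | ring1
            | (rcases hδ₁ with rfl | rfl <;> rcases hδ₂ with rfl | rfl <;>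
               rcases hδ₃ with rfl | rfl <;> norm_num)
        rw [hxeq]
        exact Tset_smul i j l s δ₁ δ₂ δ₃ _
          (by rcases hδ₂ with rfl | rfl <;> rcases hε₁ with rfl | rfl <;> norm_num) _ m2
      · simp [stdBasis, EuclideanSpace.single_apply, PiLp.add_apply, PiLp.smul_apply,
          smul_eq_mul, hij, hil, his, hjl, hjs, hls, Ne.symm hij, Ne.symm hil, Ne.symm his,
          Ne.symm hjl, Ne.symm hjs, Ne.symm hls] at hxi
        have he2 : ε₂ = -(δ₂ * δ₁) * ε₁ := by linear_combination δ₁ * hxi - ε₂ * hd1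
        subst he2
        have hxeq : ε₁ • stdBasis n l + (-(δ₂ * δ₁) * ε₁) • stdBasis n j
            = (-(δ₂ * δ₁ * ε₁)) • (stdBasis n j - (δ₁ * δ₂) • stdBasis n l) := by
          match_scalars <;>
            first
            | ring1
            | (rcases hδ₁ with rfl | rfl <;> rcases hδ₂ with rfl | rfl <;>
               rcases hδ₃ with rfl | rfl <;> norm_num)
        rw [hxeq]
        exact Tset_smul i j l s δ₁ δ₂ δ₃ _
          (by rcases hδ₁ with rfl | rfl <;> rcases hδ₂ with rfl | rfl <;>
            rcases hε₁ with rfl | rfl <;> norm_num) _ m4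
      · exact absurd rfl hab
      · simp [stdBasis, EuclideanSpace.single_apply, PiLp.add_apply, PiLp.smul_apply,
          smul_eq_mul, hij, hil, his, hjl, hjs, hls, Ne.symm hij, Ne.symm hil, Ne.symm his,
          Ne.symm hjl, Ne.symm hjs, Ne.symm hls] at hxi
        have he2 : ε₂ = -(δ₂ * δ₃) * ε₁ := by linear_combination δ₃ * hxi - ε₂ * hd3
        subst he2
        rw [show ε₁ • stdBasis n l + (-(δ₂ * δ₃) * ε₁) • stdBasis n s
            = ε₁ • (stdBasis n l - (δ₂ * δ₃) • stdBasis n s) from by module]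
        exact Tset_smul i j l s δ₁ δ₂ δ₃ ε₁ hε₁ _ m6
    · rcases hb4 with rfl | rfl | rfl | rfl
      · simp [stdBasis, EuclideanSpace.single_apply, PiLp.add_apply, PiLp.smul_apply,
          smul_eq_mul, hij, hil, his, hjl, hjs, hls, Ne.symm hij, Ne.symm hil, Ne.symm his,
          Ne.symm hjl, Ne.symm hjs, Ne.symm hls] at hxi
        have he2 : ε₂ = -(δ₃ * 1) * ε₁ := by linear_combination hxi
        subst he2
        have hxeq : ε₁ • stdBasis n s + (-(δ₃ * 1) * ε₁) • stdBasis n i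
            = (-(δ₃ * ε₁)) • (stdBasis n i - δ₃ • stdBasis n s) := by
          match_scalars <;>
            first
            | ring1
            | (rcases hδ₁ with rfl | rfl <;> rcases hδ₂ with rfl | rfl <;>
               rcases hδ₃ with rfl | rfl <;> norm_num)
        rw [hxeq]
        exact Tset_smul i j l s δ₁ δ₂ δ₃ _
          (by rcases hδ₃ with rfl | rfl <;> rcases hε₁ with rfl | rfl <;> norm_num) _ m3
      · simp [stdBasis, EuclideanSpace.single_apply, PiLp.add_apply, PiLp.smul_apply,
          smul_eq_mul, hij, hil, his, hjl, hjs, hls, Ne.symm hij, Ne.symm hil, Ne.symm his,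
          Ne.symm hjl, Ne.symm hjs, Ne.symm hls] at hxi
        have he2 : ε₂ = -(δ₃ * δ₁) * ε₁ := by linear_combination δ₁ * hxi - ε₂ * hd1
        subst he2
        have hxeq : ε₁ • stdBasis n s + (-(δ₃ * δ₁) * ε₁) • stdBasis n j
            = (-(δ₃ * δ₁ * ε₁)) • (stdBasis n j - (δ₁ * δ₃) • stdBasis n s) := by
          match_scalars <;>
            first
            | ring1
            | (rcases hδ₁ with rfl | rfl <;> rcases hδ₂ with rfl | rfl <;>
               rcases hδ₃ with rfl | rfl <;> norm_num)
        rw [hxeq]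
        exact Tset_smul i j l s δ₁ δ₂ δ₃ _
          (by rcases hδ₁ with rfl | rfl <;> rcases hδ₃ with rfl | rfl <;>
            rcases hε₁ with rfl | rfl <;> norm_num) _ m5
      · simp [stdBasis, EuclideanSpace.single_apply, PiLp.add_apply, PiLp.smul_apply,
          smul_eq_mul, hij, hil, his, hjl, hjs, hls, Ne.symm hij, Ne.symm hil, Ne.symm his,
          Ne.symm hjl, Ne.symm hjs, Ne.symm hls] at hxi
        have he2 : ε₂ = -(δ₃ * δ₂) * ε₁ := by linear_combination δ₂ * hxi - ε₂ * hd2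
        subst he2
        have hxeq : ε₁ • stdBasis n s + (-(δ₃ * δ₂) * ε₁) • stdBasis n l
            = (-(δ₃ * δ₂ * ε₁)) • (stdBasis n l - (δ₂ * δ₃) • stdBasis n s) := by
          match_scalars <;>
            first
            | ring1
            | (rcases hδ₁ with rfl | rfl <;> rcases hδ₂ with rfl | rfl <;>
               rcases hδ₃ with rfl | rfl <;> norm_num)
        rw [hxeq]
        exact Tset_smul i j l s δ₁ δ₂ δ₃ _
          (by rcases hδ₂ with rfl | rfl <;> rcases hδ₃ with rfl | rfl <;>
            rcases hε₁ with rfl | rfl <;> norm_num) _ m6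
      · exact absurd rfl hab

set_option maxHeartbeats 1600000 in
lemma Tset_in_W {n : ℕ} (i j l s : Fin n)
    (hij : i ≠ j) (hil : i ≠ l) (his : i ≠ s) (hjl : j ≠ l) (hjs : j ≠ s) (hls : l ≠ s)
    (δ₁ δ₂ δ₃ : ℝ)
    (hδ₁ : δ₁ = 1 ∨ δ₁ = -1) (hδ₂ : δ₂ = 1 ∨ δ₂ = -1) (hδ₃ : δ₃ = 1 ∨ δ₃ = -1) :
    ∀ x ∈ Tset n i j l s δ₁ δ₂ δ₃,
      x ∈ Submodule.span ℝ {stdBasis n i, stdBasis n j, stdBasis n l, stdBasis n s} ⊓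
        (Submodule.span ℝ
          {stdBasis n i + δ₁ • stdBasis n j + δ₂ • stdBasis n l + δ₃ • stdBasis n s})ᗮ := by
  intro x hx
  rw [memW_iff i j l s hij hil his hjl hjs hls δ₁ δ₂ δ₃ x]
  unfold Tset at hx
  simp only [Set.mem_insert_iff, Set.mem_singleton_iff] at hx
  constructor
  · intro k h1 h2 h3 h4
    rcases hx with rfl | rfl | rfl | rfl | rfl | rfl | rfl | rfl | rfl | rfl | rfl | rfl <;>
      simp [stdBasis, EuclideanSpace.single_apply, PiLp.sub_apply, PiLp.neg_apply,
        PiLp.smul_apply, h1, h2, h3, h4]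
  · rcases hx with rfl | rfl | rfl | rfl | rfl | rfl | rfl | rfl | rfl | rfl | rfl | rfl <;>
      simp [stdBasis, EuclideanSpace.single_apply, PiLp.sub_apply, PiLp.neg_apply,
        PiLp.smul_apply, hij, hil, his, hjl, hjs, hls, Ne.symm hij, Ne.symm hil,
        Ne.symm his, Ne.symm hjl, Ne.symm hjs, Ne.symm hls] <;>
      rcases hδ₁ with rfl | rfl <;> rcases hδ₂ with rfl | rfl <;>
      rcases hδ₃ with rfl | rfl <;> norm_num

/-- The orthogonal complement of `v = e_i + δ₁ e_j + δ₂ e_l + δ₃ e_s` inside the standard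
4-space spanned by `{e_i, e_j, e_l, e_s}` contains exactly 12 roots of `Φ_{B_n}`,
all of which are long. -/
theorem stmt5 (n : ℕ) (hn : 4 ≤ n) (i j l s : Fin n)
    (hij : i ≠ j) (hil : i ≠ l) (his : i ≠ s) (hjl : j ≠ l) (hjs : j ≠ s) (hls : l ≠ s)
    (δ₁ δ₂ δ₃ : ℝ)
    (hδ₁ : δ₁ = 1 ∨ δ₁ = -1) (hδ₂ : δ₂ = 1 ∨ δ₂ = -1) (hδ₃ : δ₃ = 1 ∨ δ₃ = -1)
    (v : EuclideanSpace ℝ (Fin n))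
    (hv : v = stdBasis n i + δ₁ • stdBasis n j + δ₂ • stdBasis n l + δ₃ • stdBasis n s)
    (W : Submodule ℝ (EuclideanSpace ℝ (Fin n)))
    (hW : W = Submodule.span ℝ {stdBasis n i, stdBasis n j, stdBasis n l, stdBasis n s} ⊓
      (Submodule.span ℝ {v})ᗮ) :
    ((W : Set (EuclideanSpace ℝ (Fin n))) ∩ PhiB n).ncard = 12 ∧
    ∀ x ∈ (W : Set (EuclideanSpace ℝ (Fin n))) ∩ PhiB n, IsLongRoot n x := by
  subst hv
  subst hW
  have key : ((Submodule.span ℝ {stdBasis n i, stdBasis n j, stdBasis n l, stdBasis n s} ⊓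
      (Submodule.span ℝ
        {stdBasis n i + δ₁ • stdBasis n j + δ₂ • stdBasis n l + δ₃ • stdBasis n s})ᗮ :
      Submodule ℝ (EuclideanSpace ℝ (Fin n))) : Set (EuclideanSpace ℝ (Fin n))) ∩ PhiB n =
      Tset n i j l s δ₁ δ₂ δ₃ := by
    ext x
    simp only [Set.mem_inter_iff, SetLike.mem_coe]
    constructor
    · rintro ⟨h1, h2⟩
      exact key_subset i j l s hij hil his hjl hjs hls δ₁ δ₂ δ₃ hδ₁ hδ₂ hδ₃ x h1 h2
    · intro hx
      exact ⟨Tset_in_W i j l s hij hil his hjl hjs hls δ₁ δ₂ δ₃ hδ₁ hδ₂ hδ₃ x hx,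
        Or.inr (Tset_long i j l s hij hil his hjl hjs hls δ₁ δ₂ δ₃ hδ₁ hδ₂ hδ₃ x hx)⟩
  constructor
  · rw [key]
    exact Tset_card i j l s hij hil his hjl hjs hls δ₁ δ₂ δ₃ hδ₁ hδ₂ hδ₃
  · rw [key]
    exact Tset_long i j l s hij hil his hjl hjs hls δ₁ δ₂ δ₃ hδ₁ hδ₂ hδ₃
end

section
/- Let 0 ≤ d_1 ≤ d_2 ≤ ⋯ ≤ d_n and 0 ≤ d_1' ≤ d_2' ≤ ⋯ ≤ d_n' be integers, and suppose φ: ℝ^n → ℝ^n is a linear isomorphism mapping the set Ξ = Z_{d_1} × ⋯ × Z_{d_n} onto the set Ξ' = Z_{d_1'} × ⋯ × Z_{d_n'}. Then d_i = d_i' for all 1 ≤ i ≤ n. -/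
open Pointwise

/-- `Z_d = {-d, -d+2, …, d-2, d} = {k ∈ ℤ : |k| ≤ d, k ≡ d (mod 2)}`, as a subset of `ℝ`. -/
def Zset (d : ℕ) : Set ℝ :=
  {x | ∃ k : ℤ, x = (k : ℝ) ∧ k.natAbs ≤ d ∧ k % 2 = (d : ℤ) % 2}

/-- The product `Z_{d 0} × ⋯ × Z_{d (n-1)}` as a subset of `ℝ^n`. -/
def Zprod {n : ℕ} (d : Fin n → ℕ) : Set (Fin n → ℝ) :=
  {x | ∀ i, x i ∈ Zset (d i)}

noncomputable def Fz (d : ℕ) : Finset ℝ :=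
  (Finset.range (d+1)).image (fun j : ℕ => ((2*(j:ℤ) - d : ℤ) : ℝ))

lemma Zset_eq (d : ℕ) : Zset d = ↑(Fz d) := by
  ext x
  simp only [Zset, Fz, Set.mem_setOf_eq, Finset.mem_coe, Finset.mem_image, Finset.mem_range]
  constructor
  · rintro ⟨k, rfl, h1, h2⟩
    refine ⟨((k + d)/2).toNat, by omega, ?_⟩
    have : ((2 * (((k + d)/2).toNat : ℤ) - d : ℤ)) = k := by omega
    rw [this]
  · rintro ⟨j, hj, rfl⟩
    exact ⟨2*(j:ℤ) - d, rfl, by omega, by omega⟩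

lemma card_Fz (d : ℕ) : (Fz d).card = d + 1 := by
  rw [Fz, Finset.card_image_of_injOn, Finset.card_range]
  intro i _ j _ h
  simp only at h
  have : (2*(i:ℤ) - d) = (2*(j:ℤ) - d) := by exact_mod_cast h
  omega

lemma Zprod_eq {n : ℕ} (a : Fin n → ℕ) :
    Zprod a = ↑(Fintype.piFinset fun i => Fz (a i)) := by
  ext x
  simp only [Zprod, Set.mem_setOf_eq, Finset.mem_coe, Fintype.mem_piFinset, Zset_eq,
    Finset.mem_coe]

lemma ncard_Zprod {n : ℕ} (a : Fin n → ℕ) : (Zprod a).ncard = ∏ i, (a i + 1) := by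
  rw [Zprod_eq, Set.ncard_coe_finset, Fintype.card_piFinset]
  simp [card_Fz]

lemma mem_Zset_add {a b : ℕ} {u v : ℝ} (hu : u ∈ Zset a) (hv : v ∈ Zset b) :
    u + v ∈ Zset (a + b) := by
  obtain ⟨k, rfl, hk1, hk2⟩ := hu
  obtain ⟨l, rfl, hl1, hl2⟩ := hv
  exact ⟨k + l, by push_cast; ring, by omega, by omega⟩

lemma Zset_add_surj {a b : ℕ} {x : ℝ} (hx : x ∈ Zset (a + b)) :
    ∃ u ∈ Zset a, ∃ v ∈ Zset b, u + v = x := by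
  obtain ⟨m, rfl, hm1, hm2⟩ := hx
  refine ⟨(max (-(a:ℤ)) (m - b) : ℤ), ⟨_, rfl, by omega, by omega⟩,
    ((m - max (-(a:ℤ)) (m - b) : ℤ) : ℝ), ⟨_, rfl, by omega, by omega⟩, ?_⟩
  push_cast
  ring

lemma Zprod_add {n : ℕ} (a b : Fin n → ℕ) :
    Zprod a + Zprod b = Zprod (fun i => a i + b i) := by
  ext x
  rw [Set.mem_add]
  constructor
  · rintro ⟨u, hu, v, hv, rfl⟩
    exact fun i => mem_Zset_add (hu i) (hv i)
  · intro hx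
    have h := fun i => Zset_add_surj (hx i)
    choose u hu v hv huv using h
    exact ⟨u, hu, v, hv, funext huv⟩

lemma image_add' {n : ℕ} (φ : (Fin n → ℝ) ≃ₗ[ℝ] (Fin n → ℝ)) (A B : Set (Fin n → ℝ)) :
    φ '' (A + B) = φ '' A + φ '' B := by
  ext y
  simp only [Set.mem_image, Set.mem_add]
  constructor
  · rintro ⟨x, ⟨u, hu, v, hv, rfl⟩, rfl⟩
    exact ⟨φ u, ⟨u, hu, rfl⟩, φ v, ⟨v, hv, rfl⟩, (map_add φ u v).symm⟩
  · rintro ⟨-, ⟨u, hu, rfl⟩, -, ⟨v, hv, rfl⟩, rfl⟩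
    exact ⟨u + v, ⟨u, hu, v, hv, rfl⟩, map_add φ u v⟩

lemma key {n : ℕ} (d d' : Fin n → ℕ) (φ : (Fin n → ℝ) ≃ₗ[ℝ] (Fin n → ℝ))
    (hφ : φ '' Zprod d = Zprod d') :
    ∀ k : ℕ, φ '' Zprod (fun i => (k+1) * d i) = Zprod (fun i => (k+1) * d' i) := by
  intro k
  induction k with
  | zero => simpa using hφ
  | succ m ih =>
    have h1 : (fun i => (m+2) * d i) = (fun i => ((m+1) * d i) + d i) := by
      funext i; ring
    have h2 : (fun i => (m+2) * d' i) = (fun i => ((m+1) * d' i) + d' i) := by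
      funext i; ring
    rw [h1, h2, ← Zprod_add, ← Zprod_add, image_add' φ, ih, hφ]

lemma mem_of_dvd_prod (a : ℕ) (ha : a ≠ 0) (B : Multiset ℕ)
    (h : ∀ k : ℕ, 1 ≤ k → (k * a + 1) ∣ (B.map fun b => k * b + 1).prod) : a ∈ B := by
  obtain ⟨p, hp, hpp⟩ := Nat.exists_infinite_primes (a + B.sum + 1)
  haveI : Fact p.Prime := ⟨hpp⟩
  have hap : ¬ (p ∣ a) := fun hd => by have := Nat.le_of_dvd (Nat.pos_of_ne_zero ha) hd; omega
  have ha0 : (a : ZMod p) ≠ 0 := by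
    rwa [Ne, ZMod.natCast_eq_zero_iff]
  set x : ZMod p := - (a : ZMod p)⁻¹ with hxdef
  have hx0 : x ≠ 0 := by simp [hxdef, inv_eq_zero, ha0]
  set k := x.val with hkdef
  have hk1 : 1 ≤ k := by
    rcases Nat.eq_zero_or_pos k with h0 | h1
    · exact absurd ((ZMod.val_eq_zero x).1 h0) hx0
    · exact h1
  have hkx : (k : ZMod p) = x := by rw [hkdef, ZMod.natCast_val, ZMod.cast_id]
  have hdvd : p ∣ k * a + 1 := by
    have h0 : ((k * a + 1 : ℕ) : ZMod p) = 0 := by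
      push_cast
      rw [hkx, hxdef, neg_mul, inv_mul_cancel₀ ha0]
      ring
    rwa [ZMod.natCast_eq_zero_iff] at h0
  have hP : p ∣ (B.map fun b => k * b + 1).prod := hdvd.trans (h k hk1)
  obtain ⟨y, hy, hpy⟩ := (hpp.prime).exists_mem_multiset_dvd hP
  obtain ⟨b, hbB, rfl⟩ := Multiset.mem_map.1 hy
  have hbsum : b ≤ B.sum := Multiset.le_sum_of_mem hbB
  have h1 : (p:ℤ) ∣ (k*a+1 : ℤ) := by exact_mod_cast Int.natCast_dvd_natCast.2 hdvd
  have h2 : (p:ℤ) ∣ (k*b+1 : ℤ) := by exact_mod_cast Int.natCast_dvd_natCast.2 hpy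
  have h3 : (p:ℤ) ∣ (k : ℤ) * ((a:ℤ) - b) := by
    have := dvd_sub h1 h2
    have e : (k*a+1 : ℤ) - (k*b+1 : ℤ) = (k:ℤ) * ((a:ℤ) - b) := by ring
    rwa [e] at this
  have hpk : ¬ ((p:ℤ) ∣ (k:ℤ)) := by
    intro hk
    have : (p:ℤ) ∣ 1 := by
      have : (p:ℤ) ∣ (k*a+1 : ℤ) - (k:ℤ)*a := dvd_sub h1 (hk.mul_right a)
      simpa using this
    have := Int.le_of_dvd one_pos this
    have := hpp.two_le
    omega
  have hpab : (p:ℤ) ∣ ((a:ℤ) - b) :=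
    ((Int.prime_iff_natAbs_prime.2 (by simpa using hpp)).dvd_mul.1 h3).resolve_left hpk
  have hab : (a:ℤ) - b = 0 := by
    rcases hpab with ⟨c, hc⟩
    have hb : b < p := by omega
    have haa : a < p := by omega
    have : -1 < c ∧ c < 1 := by constructor <;> nlinarith
    have : c = 0 := by omega
    simp [this] at hc
    exact hc
  have : a = b := by omega
  rwa [this]

lemma ms_eq : ∀ (n : ℕ) (A B : Multiset ℕ), A.card = n → B.card = n →
    (∀ k : ℕ, 1 ≤ k → (A.map fun b => k * b + 1).prod = (B.map fun b => k * b + 1).prod) →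
    A = B := by
  intro n
  induction n with
  | zero =>
    intro A B hA hB _
    rw [Multiset.card_eq_zero] at hA hB
    rw [hA, hB]
  | succ m ih =>
    intro A B hA hB hprod
    by_cases hex : ∃ a ∈ A, a ≠ 0
    · obtain ⟨a, haA, ha0⟩ := hex
      have haB : a ∈ B := by
        apply mem_of_dvd_prod a ha0
        intro k hk
        rw [← hprod k hk, ← Multiset.prod_map_erase (f := fun b => k * b + 1) haA]
        exact Dvd.intro _ rfl
      have hcancel : ∀ k : ℕ, 1 ≤ k →
          ((A.erase a).map fun b => k * b + 1).prod = ((B.erase a).map fun b => k * b + 1).prod := by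
        intro k hk
        have h1 := Multiset.prod_map_erase (f := fun b => k * b + 1) haA
        have h2 := Multiset.prod_map_erase (f := fun b => k * b + 1) haB
        have := hprod k hk
        rw [← h1, ← h2] at this
        exact Nat.eq_of_mul_eq_mul_left (by positivity) this
      have hAe : (A.erase a).card = m := by
        rw [Multiset.card_erase_of_mem haA, hA]; rfl
      have hBe : (B.erase a).card = m := by
        rw [Multiset.card_erase_of_mem haB, hB]; rfl
      have := ih (A.erase a) (B.erase a) hAe hBe hcancel
      rw [← Multiset.cons_erase haA, ← Multiset.cons_erase haB, this]
    · push_neg at hex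
      have hA0 : A = Multiset.replicate (m+1) 0 := by
        rw [← hA]; exact Multiset.eq_replicate_card.2 hex
      have hPA : (A.map fun b => 1 * b + 1).prod = 1 := by
        rw [hA0]; simp [Multiset.map_replicate]
      have hB0 : ∀ b ∈ B, b = 0 := by
        intro b hbB
        have hd : (1 * b + 1) ∣ (B.map fun b => 1 * b + 1).prod :=
          Multiset.dvd_prod (Multiset.mem_map_of_mem _ hbB)
        rw [← hprod 1 le_rfl, hPA] at hd
        have := Nat.le_of_dvd one_pos hd
        omega
      have hB' : B = Multiset.replicate (m+1) 0 := by
        rw [← hB]; exact Multiset.eq_replicate_card.2 hB0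
      rw [hA0, hB']

lemma sorted_ofFn {n : ℕ} (f : Fin n → ℕ) (hf : Monotone f) : (List.ofFn f).Pairwise (· ≤ ·) := by
  rw [List.pairwise_iff_get]
  intro i j hij
  rw [List.get_ofFn, List.get_ofFn]
  exact hf (by simpa [Fin.lt_def] using hij.le)

lemma mono_eq {n : ℕ} (f g : Fin n → ℕ) (hf : Monotone f) (hg : Monotone g)
    (h : Multiset.map f Finset.univ.val = Multiset.map g Finset.univ.val) : f = g := by
  have huniv : (Finset.univ.val : Multiset (Fin n)) = ↑(List.finRange n) := rfl
  rw [huniv] at h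
  have hf' : Multiset.map f ↑(List.finRange n) = ↑(List.ofFn f) := by
    rw [Multiset.map_coe, List.ofFn_eq_map]
  have hg' : Multiset.map g ↑(List.finRange n) = ↑(List.ofFn g) := by
    rw [Multiset.map_coe, List.ofFn_eq_map]
  rw [hf', hg', Multiset.coe_eq_coe] at h
  have heq : List.ofFn f = List.ofFn g :=
    List.Perm.eq_of_pairwise' (sorted_ofFn f hf) (sorted_ofFn g hg) h
  funext i
  have h1 : (List.ofFn f).get (Fin.cast (List.length_ofFn (f := f)).symm i) = f i := by
    rw [List.get_ofFn]; congr 1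
  have h2 : (List.ofFn g).get (Fin.cast (List.length_ofFn (f := g)).symm i) = g i := by
    rw [List.get_ofFn]; congr 1
  rw [← h1, ← h2]
  rw [List.get_of_eq heq]
  congr 1

/-- If a linear isomorphism of `ℝ^n` maps `Z_{d₁} × ⋯ × Z_{dₙ}` onto
`Z_{d₁'\''} × ⋯ × Z_{dₙ'\''}`, the `dᵢ` being nondecreasing, then `dᵢ = dᵢ'\''` for all `i`. -/
theorem stmt7 (n : ℕ) (d d' : Fin n → ℕ) (hd : Monotone d) (hd' : Monotone d')
    (φ : (Fin n → ℝ) ≃ₗ[ℝ] (Fin n → ℝ))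
    (hφ : φ '' Zprod d = Zprod d') :
    ∀ i, d i = d' i := by
  have hprod : ∀ k : ℕ, 1 ≤ k →
      ((Multiset.map d Finset.univ.val).map fun b => k * b + 1).prod
        = ((Multiset.map d' Finset.univ.val).map fun b => k * b + 1).prod := by
    intro k hk
    obtain ⟨m, rfl⟩ : ∃ m, k = m + 1 := ⟨k - 1, by omega⟩
    have himg := key d d' φ hφ m
    have hn : (Zprod (fun i => (m+1) * d i)).ncard = (Zprod (fun i => (m+1) * d' i)).ncard := by
      rw [← himg, Set.ncard_image_of_injective _ φ.injective]
    rw [ncard_Zprod, ncard_Zprod] at hn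
    rw [Multiset.map_map, Multiset.map_map]
    have e1 : ((Finset.univ.val).map fun i => (m+1) * d i + 1).prod
        = ∏ i, ((m+1) * d i + 1) := (Finset.prod_eq_multiset_prod _ _).symm
    have e2 : ((Finset.univ.val).map fun i => (m+1) * d' i + 1).prod
        = ∏ i, ((m+1) * d' i + 1) := (Finset.prod_eq_multiset_prod _ _).symm
    calc ((Finset.univ.val).map fun i => (m+1) * d i + 1).prod
        = ∏ i, ((m+1) * d i + 1) := e1
      _ = ∏ i, ((m+1) * d' i + 1) := hn
      _ = ((Finset.univ.val).map fun i => (m+1) * d' i + 1).prod := e2.symm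
  have hms : Multiset.map d Finset.univ.val = Multiset.map d' Finset.univ.val :=
    ms_eq n _ _ (by simp) (by simp) hprod
  have := mono_eq d d' hd hd' hms
  exact fun i => congrFun this i
end
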